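/- arXiv:1009.3260 — 10 statements merged into one kernel-verified Lean document; each statement's English description precedes it below -/
import Mathlib

section
/- Let B be a topological space, let X and Y be fibrewise compact, fibrewise Hausdorff spaces over B, and let Z be any fibrewise space over B. If φ : X → Y is a continuous surjection commuting with the projections, then a (not necessarily continuous) function ψ : Y → Z commuting with the projections is continuous if and only if the composite ψ∘φ : X → Z is continuous. -/
/-- `X` (with projection `p : X → B`) is fibrewise compact over `B`:
the projection is a closed map and every fibre is compact. -/
def FibrewiseCompact {X B : Type} [TopologicalSpace X] [TopologicalSpace B]
    (p : X → B) : Prop :=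
  IsClosedMap p ∧ ∀ b : B, IsCompact (p ⁻¹' {b})

/-- `X` (with projection `p : X → B`) is fibrewise Hausdorff over `B`:
any two distinct points in the same fibre have disjoint open neighbourhoods. -/
def FibrewiseT2 {X B : Type} [TopologicalSpace X] [TopologicalSpace B]
    (p : X → B) : Prop :=
  ∀ x y : X, x ≠ y → p x = p y →
    ∃ u v : Set X, IsOpen u ∧ IsOpen v ∧ x ∈ u ∧ y ∈ v ∧ Disjoint u v

/-- A continuous fibrewise map from a fibrewise compact space to a fibrewise
Hausdorff space is a closed map. -/
theorem fibrewise_closedMap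
    {B X Y : Type} [TopologicalSpace B] [TopologicalSpace X] [TopologicalSpace Y]
    (pX : X → B) (pY : Y → B)
    (hpY : Continuous pY)
    (hXc : FibrewiseCompact pX) (hYh : FibrewiseT2 pY)
    (φ : X → Y) (hφc : Continuous φ) (hφcomm : ∀ x, pY (φ x) = pX x) :
    IsClosedMap φ := by
  intro C hC
  rw [← isOpen_compl_iff]
  rw [isOpen_iff_forall_mem_open]
  intro y hy
  set b := pY y with hb
  -- for each x in the fibre over b inside C, separate φ x from y
  have hsep : ∀ x ∈ C ∩ pX ⁻¹' {b}, ∃ u v : Set Y,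
      IsOpen u ∧ IsOpen v ∧ φ x ∈ u ∧ y ∈ v ∧ Disjoint u v := by
    intro x hx
    apply hYh (φ x) y
    · rintro rfl
      exact hy ⟨x, hx.1, rfl⟩
    · rw [hφcomm x]
      exact hx.2
  choose! u v hu hv hxu hyv hdisj using hsep
  -- cover the compact set C ∩ fibre by preimages of the u's
  have hcpt : IsCompact (C ∩ pX ⁻¹' {b}) :=
    (hXc.2 b).inter_left hC
  have hcover : C ∩ pX ⁻¹' {b} ⊆ ⋃ x ∈ C ∩ pX ⁻¹' {b}, φ ⁻¹' u x := by
    intro x hx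
    exact Set.mem_biUnion hx (hxu x hx)
  obtain ⟨t, hts, htfin, hcov⟩ := hcpt.elim_finite_subcover_image
    (fun x hx => (hu x hx).preimage hφc) hcover
  -- V : intersection of the v's
  set V : Set Y := ⋂ x ∈ t, v x with hV
  have hVopen : IsOpen V :=
    htfin.isOpen_biInter fun x hx => hv x (hts hx)
  have hyV : y ∈ V := by
    simp only [hV, Set.mem_iInter]
    exact fun x hx => hyv x (hts hx)
  -- U : union of preimages
  set U : Set X := ⋃ x ∈ t, φ ⁻¹' u x with hU
  have hUopen : IsOpen U :=
    isOpen_biUnion fun x hx => (hu x (hts hx)).preimage hφc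
  -- C \ U is closed, its image under pX is closed, and b is not in it
  have hclosed : IsClosed (C \ U) := hC.sdiff hUopen
  have himg : IsClosed (pX '' (C \ U)) := hXc.1 _ hclosed
  have hbnot : b ∉ pX '' (C \ U) := by
    rintro ⟨x, ⟨hxC, hxU⟩, hxb⟩
    exact hxU (hcov ⟨hxC, hxb⟩)
  refine ⟨pY ⁻¹' (pX '' (C \ U))ᶜ ∩ V, ?_, ?_, ?_⟩
  · rintro z ⟨hz1, hz2⟩ ⟨x, hxC, rfl⟩
    have hxU : x ∈ U := by
      by_contra hxU
      exact hz1 ⟨x, ⟨hxC, hxU⟩, (hφcomm x).symm⟩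
    obtain ⟨x', hx't, hx'⟩ : ∃ x' ∈ t, φ x ∈ u x' := by
      simpa [hU] using hxU
    have hzv : φ x ∈ v x' := by
      have := Set.mem_iInter₂.mp hz2 x' hx't
      exact this
    exact (hdisj x' (hts hx't)).le_bot ⟨hx', hzv⟩ |>.elim
  · exact ((himg.isOpen_compl).preimage hpY).inter hVopen
  · exact ⟨hbnot, hyV⟩

/-- Let `φ : X → Y` be a continuous fibrewise surjection between fibrewise compact,
fibrewise Hausdorff spaces over `B`, and `ψ : Y → Z` a (not necessarily continuous)
function commuting with the projections, `Z` any fibrewise space over `B`.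
Then `ψ` is continuous iff `ψ ∘ φ` is continuous. -/
theorem continuous_iff_comp_fibrewise_surjection
    {B X Y Z : Type} [TopologicalSpace B] [TopologicalSpace X] [TopologicalSpace Y]
    [TopologicalSpace Z]
    (pX : X → B) (pY : Y → B) (pZ : Z → B)
    (hpX : Continuous pX) (hpY : Continuous pY) (hpZ : Continuous pZ)
    (hXc : FibrewiseCompact pX) (hXh : FibrewiseT2 pX)
    (hYc : FibrewiseCompact pY) (hYh : FibrewiseT2 pY)
    (φ : X → Y) (hφc : Continuous φ) (hφs : Function.Surjective φ)
    (hφcomm : ∀ x, pY (φ x) = pX x)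
    (ψ : Y → Z) (hψcomm : ∀ y, pZ (ψ y) = pY y) :
    Continuous ψ ↔ Continuous (ψ ∘ φ) := by
  have hclosed : IsClosedMap φ := fibrewise_closedMap pX pY hpY hXc hYh φ hφc hφcomm
  exact (hclosed.isQuotientMap hφc hφs).continuous_iff
end

section
/- Let B be a topological space and suppose given fibrewise compact, fibrewise Hausdorff spaces X, Y, Z, W over B and fibrewise maps i : X → Y, j : X → Z, u : Y → W, v : Z → W with u∘i = v∘j. Suppose that for every b ∈ B the induced square of fibres X_b → Y_b, X_b → Z_b, Y_b → W_b, Z_b → W_b (fibres carrying the subspace topologies) is a pushout square of topological spaces. Then the original square is a pushout of topological spaces, i.e. the canonical continuous map from the topological pushout Y ⊔_X Z to W is a homeomorphism; moreover, for any fibrewise space V over B, a function W → V commuting with the projections is continuous if and only if its composites with u and with v are both continuous. -/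
/-- A fibrewise map from a fibrewise compact space to a fibrewise Hausdorff space
is a closed map. -/
lemma fibrewise_closedMap_s2 {Y W B : Type} [TopologicalSpace Y] [TopologicalSpace W]
    [TopologicalSpace B] {pY : Y → B} {pW : W → B} (hpW : Continuous pW)
    (hYc : FibrewiseCompact pY) (hWh : FibrewiseT2 pW)
    {f : Y → W} (hf : Continuous f) (hcomm : ∀ y, pW (f y) = pY y) : IsClosedMap f := by
  intro A hA
  rw [← isOpen_compl_iff, isOpen_iff_forall_mem_open]
  intro w hw
  set b := pW w with hb
  set K := pY ⁻¹' {b} ∩ A with hKdef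
  have hK : IsCompact K := (hYc.2 b).inter_right hA
  have sep : ∀ y : K, ∃ U V : Set W,
      IsOpen U ∧ IsOpen V ∧ f y.1 ∈ U ∧ w ∈ V ∧ Disjoint U V := by
    rintro ⟨y, hy1, hy2⟩
    refine hWh (f y) w (fun h => hw ⟨y, hy2, h⟩) ?_
    rw [hcomm]; exact hy1
  choose U V hUo hVo hfU hwV hdis using sep
  obtain ⟨t, ht⟩ := hK.elim_finite_subcover (fun y : K => f ⁻¹' U y)
    (fun y => (hUo y).preimage hf)
    (fun y hy => Set.mem_iUnion.2 ⟨⟨y, hy⟩, hfU ⟨y, hy⟩⟩)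
  set U' := ⋃ y ∈ t, U y with hU'def
  set V' := ⋂ y ∈ t, V y with hV'def
  have hU'o : IsOpen U' := isOpen_biUnion fun y _ => hUo y
  have hV'o : IsOpen V' := isOpen_biInter_finset fun y _ => hVo y
  have hwV' : w ∈ V' := Set.mem_iInter₂.2 fun y _ => hwV y
  have hdis' : Disjoint U' V' := by
    refine Set.disjoint_left.2 fun a ha haV => ?_
    obtain ⟨y, hyt, hay⟩ := Set.mem_iUnion₂.1 ha
    exact Set.disjoint_left.1 (hdis y) hay (Set.mem_iInter₂.1 haV y hyt)
  have hC : IsClosed (A \ f ⁻¹' U') := hA.sdiff (hU'o.preimage hf)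
  have hClosedIm : IsClosed (pY '' (A \ f ⁻¹' U')) := hYc.1 _ hC
  have hbO : b ∉ pY '' (A \ f ⁻¹' U') := by
    rintro ⟨a, ⟨haA, haU⟩, hpa⟩
    have haK : a ∈ K := ⟨hpa, haA⟩
    obtain ⟨y, hyt, hay⟩ := Set.mem_iUnion₂.1 (ht haK)
    exact haU (Set.mem_iUnion₂.2 ⟨y, hyt, hay⟩)
  refine ⟨V' ∩ pW ⁻¹' (pY '' (A \ f ⁻¹' U'))ᶜ, ?_, hV'o.inter
    (hClosedIm.isOpen_compl.preimage hpW), hwV', ?_⟩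
  · rintro x ⟨hxV, hxO⟩ ⟨a, haA, rfl⟩
    have hpa : pY a ∉ pY '' (A \ f ⁻¹' U') := by
      have : pW (f a) ∉ pY '' (A \ f ⁻¹' U') := hxO
      rwa [hcomm] at this
    have haU : a ∈ f ⁻¹' U' := by
      by_contra hcon
      exact hpa ⟨a, ⟨haA, hcon⟩, rfl⟩
    exact Set.disjoint_left.1 hdis' haU hxV
  · show pW w ∉ pY '' (A \ f ⁻¹' U')
    rw [← hb]; exact hbO

/-- Pushing an equality in a fibre pushout forward to the global pushout. -/
lemma fibre_quot_map {B X Y Z : Type} (pX : X → B) (pY : Y → B) (pZ : Z → B)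
    (i : X → Y) (j : X → Z)
    (hicomm : ∀ x, pY (i x) = pX x) (hjcomm : ∀ x, pZ (j x) = pX x) (b : B)
    {s t : {y : Y // pY y = b} ⊕ {z : Z // pZ z = b}}
    (h : Quot.mk (fun s t : {y : Y // pY y = b} ⊕ {z : Z // pZ z = b} =>
          ∃ x : {x : X // pX x = b},
            s = Sum.inl ⟨i x.1, (hicomm x.1).trans x.2⟩ ∧
            t = Sum.inr ⟨j x.1, (hjcomm x.1).trans x.2⟩) s
       = Quot.mk _ t) :
    Quot.mk (fun s t : Y ⊕ Z => ∃ x : X, s = Sum.inl (i x) ∧ t = Sum.inr (j x))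
        (Sum.map Subtype.val Subtype.val s)
      = Quot.mk _ (Sum.map Subtype.val Subtype.val t) :=
  congrArg (Quot.lift
    (fun p => Quot.mk (fun s t : Y ⊕ Z => ∃ x : X, s = Sum.inl (i x) ∧ t = Sum.inr (j x))
      (Sum.map Subtype.val Subtype.val p))
    (fun p q hpq => by
      obtain ⟨x, rfl, rfl⟩ := hpq
      exact Quot.sound ⟨x.1, rfl, rfl⟩)) h

/-- A commuting square of fibrewise compact Hausdorff spaces over `B` which is a pushout
in each fibre is a pushout: the canonical map from the topological pushout `Y ⊔_X Z`
(the quotient of `Y ⊔ Z` identifying `i x` with `j x`) to `W` is a homeomorphism.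
Moreover a fibrewise function out of `W` is continuous iff its composites with `u` and `v`
are continuous. -/
theorem fibrewise_pushout_of_fibre_pushouts
    {B X Y Z W : Type} [TopologicalSpace B] [TopologicalSpace X] [TopologicalSpace Y]
    [TopologicalSpace Z] [TopologicalSpace W]
    (pX : X → B) (pY : Y → B) (pZ : Z → B) (pW : W → B)
    (hpX : Continuous pX) (hpY : Continuous pY) (hpZ : Continuous pZ) (hpW : Continuous pW)
    (hXc : FibrewiseCompact pX) (hXh : FibrewiseT2 pX)
    (hYc : FibrewiseCompact pY) (hYh : FibrewiseT2 pY)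
    (hZc : FibrewiseCompact pZ) (hZh : FibrewiseT2 pZ)
    (hWc : FibrewiseCompact pW) (hWh : FibrewiseT2 pW)
    (i : X → Y) (j : X → Z) (u : Y → W) (v : Z → W)
    (hi : Continuous i) (hj : Continuous j) (hu : Continuous u) (hv : Continuous v)
    (hicomm : ∀ x, pY (i x) = pX x) (hjcomm : ∀ x, pZ (j x) = pX x)
    (hucomm : ∀ y, pW (u y) = pY y) (hvcomm : ∀ z, pW (v z) = pZ z)
    (hsq : ∀ x, u (i x) = v (j x))
    -- In each fibre, the square is a pushout of topological spaces:
    (hfib : ∀ b : B,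
      IsHomeomorph
        ((Quot.lift
          (Sum.elim
            (fun y : {y : Y // pY y = b} => (⟨u y.1, (hucomm y.1).trans y.2⟩ : {w : W // pW w = b}))
            (fun z : {z : Z // pZ z = b} => (⟨v z.1, (hvcomm z.1).trans z.2⟩ : {w : W // pW w = b})))
          (fun s t hst => by
            obtain ⟨x, rfl, rfl⟩ := hst
            exact Subtype.ext (hsq x.1)))
          : Quot (fun s t : {y : Y // pY y = b} ⊕ {z : Z // pZ z = b} =>
              ∃ x : {x : X // pX x = b},
                s = Sum.inl ⟨i x.1, (hicomm x.1).trans x.2⟩ ∧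
                t = Sum.inr ⟨j x.1, (hjcomm x.1).trans x.2⟩) → {w : W // pW w = b})) :
    IsHomeomorph
      ((Quot.lift (Sum.elim u v)
        (fun s t hst => by
          obtain ⟨x, rfl, rfl⟩ := hst
          exact hsq x))
        : Quot (fun s t : Y ⊕ Z => ∃ x : X, s = Sum.inl (i x) ∧ t = Sum.inr (j x)) → W) ∧
    ∀ (V : Type) (_ : TopologicalSpace V) (pV : V → B), Continuous pV →
      ∀ w : W → V, (∀ x, pV (w x) = pW x) →
        (Continuous w ↔ Continuous (w ∘ u) ∧ Continuous (w ∘ v)) := by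
  have hclU : IsClosedMap u := fibrewise_closedMap_s2 hpW hYc hWh hu hucomm
  have hclV : IsClosedMap v := fibrewise_closedMap_s2 hpW hZc hWh hv hvcomm
  have hq : IsHomeomorph
      ((Quot.lift (Sum.elim u v)
        (fun s t hst => by
          obtain ⟨x, rfl, rfl⟩ := hst
          exact hsq x))
        : Quot (fun s t : Y ⊕ Z => ∃ x : X, s = Sum.inl (i x) ∧ t = Sum.inr (j x)) → W) := by
    rw [isHomeomorph_iff_continuous_isClosedMap_bijective]
    refine ⟨continuous_quot_lift _ (hu.sumElim hv), ?_, ?_, ?_⟩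
    · -- closed map
      intro D hD
      have himg : (Quot.lift (Sum.elim u v)
          (fun s t hst => by
            obtain ⟨x, rfl, rfl⟩ := hst
            exact hsq x)) '' D
          = Sum.elim u v '' (Quot.mk _ ⁻¹' D) := by
        ext w'
        constructor
        · rintro ⟨d, hd, rfl⟩
          obtain ⟨s, rfl⟩ := Quot.exists_rep d
          exact ⟨s, hd, rfl⟩
        · rintro ⟨s, hs, rfl⟩
          exact ⟨Quot.mk _ s, hs, rfl⟩
      rw [himg]
      have hCsum : Sum.elim u v '' (Quot.mk _ ⁻¹' D)
          = u '' (Sum.inl ⁻¹' (Quot.mk _ ⁻¹' D)) ∪ v '' (Sum.inr ⁻¹' (Quot.mk _ ⁻¹' D)) := by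
        ext w'
        constructor
        · rintro ⟨(y | z), hs, rfl⟩
          · exact Or.inl ⟨y, hs, rfl⟩
          · exact Or.inr ⟨z, hs, rfl⟩
        · rintro (⟨y, hy, rfl⟩ | ⟨z, hz, rfl⟩)
          · exact ⟨Sum.inl y, hy, rfl⟩
          · exact ⟨Sum.inr z, hz, rfl⟩
      rw [hCsum]
      have hDc : IsClosed ((Quot.mk _ : Y ⊕ Z → _) ⁻¹' D) := hD.preimage continuous_quot_mk
      exact (hclU _ (hDc.preimage continuous_inl)).union (hclV _ (hDc.preimage continuous_inr))
    · -- injective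
      intro a a' h
      obtain ⟨s, rfl⟩ := Quot.exists_rep a
      obtain ⟨t, rfl⟩ := Quot.exists_rep a'
      have h' : Sum.elim u v s = Sum.elim u v t := h
      have hinj' := (hfib (pW (Sum.elim u v s))).bijective.1
      rcases s with y | z <;> rcases t with y' | z'
      · exact fibre_quot_map pX pY pZ i j hicomm hjcomm _
          (hinj' (a₁ := Quot.mk _ (Sum.inl ⟨y, (hucomm y).symm⟩))
                 (a₂ := Quot.mk _ (Sum.inl ⟨y', (hucomm y').symm.trans (congrArg pW h'.symm)⟩))
                 (Subtype.ext h'))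
      · exact fibre_quot_map pX pY pZ i j hicomm hjcomm _
          (hinj' (a₁ := Quot.mk _ (Sum.inl ⟨y, (hucomm y).symm⟩))
                 (a₂ := Quot.mk _ (Sum.inr ⟨z', (hvcomm z').symm.trans (congrArg pW h'.symm)⟩))
                 (Subtype.ext h'))
      · exact fibre_quot_map pX pY pZ i j hicomm hjcomm _
          (hinj' (a₁ := Quot.mk _ (Sum.inr ⟨z, (hvcomm z).symm⟩))
                 (a₂ := Quot.mk _ (Sum.inl ⟨y', (hucomm y').symm.trans (congrArg pW h'.symm)⟩))
                 (Subtype.ext h'))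
      · exact fibre_quot_map pX pY pZ i j hicomm hjcomm _
          (hinj' (a₁ := Quot.mk _ (Sum.inr ⟨z, (hvcomm z).symm⟩))
                 (a₂ := Quot.mk _ (Sum.inr ⟨z', (hvcomm z').symm.trans (congrArg pW h'.symm)⟩))
                 (Subtype.ext h'))
    · -- surjective
      intro w'
      obtain ⟨a, ha⟩ := (hfib (pW w')).bijective.2 ⟨w', rfl⟩
      obtain ⟨p, rfl⟩ := Quot.exists_rep a
      have h2 := congrArg Subtype.val ha
      rcases p with y | z
      · exact ⟨Quot.mk _ (Sum.inl y.1), h2⟩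
      · exact ⟨Quot.mk _ (Sum.inr z.1), h2⟩
  refine ⟨hq, ?_⟩
  intro V _ pV _ w _
  constructor
  · exact fun hw => ⟨hw.comp hu, hw.comp hv⟩
  · rintro ⟨h1, h2⟩
    obtain ⟨e, he⟩ := isHomeomorph_iff_exists_homeomorph.1 hq
    have hg : Topology.IsQuotientMap (Sum.elim u v) := by
      have hcomp := e.isQuotientMap.comp (isQuotientMap_quot_mk
        (r := fun s t : Y ⊕ Z => ∃ x : X, s = Sum.inl (i x) ∧ t = Sum.inr (j x)))
      rw [he] at hcomp
      exact hcomp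
    rw [hg.continuous_iff]
    have : w ∘ Sum.elim u v = Sum.elim (w ∘ u) (w ∘ v) := by
      funext s; rcases s with y | z <;> rfl
    rw [this]
    exact h1.sumElim h2
end

section
/- Suppose that for every topological space K the map f_X × id_K : A×K → X×K has the homotopy extension property. Then the inclusion ι : Map_f(X,Y) → Map_f^h(X,Y) is a homotopy equivalence: there is a continuous map r : Map_f^h(X,Y) → Map_f(X,Y) such that r∘ι is homotopic to the identity of Map_f(X,Y) and ι∘r is homotopic to the identity of Map_f^h(X,Y). -/
open unitInterval

/-- A continuous map `f : A → X` has the homotopy extension property. -/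
def HEP {A X : Type} [TopologicalSpace A] [TopologicalSpace X] (f : A → X) : Prop :=
  ∀ (Z : Type) (_ : TopologicalSpace Z) (g : X → Z), Continuous g →
    ∀ G : A × I → Z, Continuous G → (∀ a, G (a, 0) = g (f a)) →
      ∃ G' : X × I → Z, Continuous G' ∧ (∀ x, G' (x, 0) = g x) ∧
        ∀ a t, G' (f a, t) = G (a, t)

/-- `Map_f(X,Y)`: the space of continuous maps `g : X → Y` with `g ∘ f_X = f_Y`,
topologized as a subspace of `C(X,Y)` with the compact-open topology. -/
abbrev MapRel {A X Y : Type} [TopologicalSpace A] [TopologicalSpace X] [TopologicalSpace Y]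
    (fX : C(A, X)) (fY : C(A, Y)) : Type :=
  {g : C(X, Y) // ∀ a, g (fX a) = fY a}

/-- `Map_f^h(X,Y)`: the space of pairs `(g, H)` where `g : X → Y` is continuous and
`H : A × [0,1] → Y` is a homotopy from `g ∘ f_X` to `f_Y`, topologized as a subspace of
`C(X,Y) × C(A × I, Y)` with compact-open topologies. -/
abbrev MapRelH {A X Y : Type} [TopologicalSpace A] [TopologicalSpace X] [TopologicalSpace Y]
    (fX : C(A, X)) (fY : C(A, Y)) : Type :=
  {gH : C(X, Y) × C(A × I, Y) //
    (∀ a, gH.2 (a, 0) = gH.1 (fX a)) ∧ ∀ a, gH.2 (a, 1) = fY a}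

/-- The inclusion `Map_f(X,Y) → Map_f^h(X,Y)`, `g ↦ (g, constant homotopy at f_Y)`. -/
def inclMapRel {A X Y : Type} [TopologicalSpace A] [TopologicalSpace X] [TopologicalSpace Y]
    (fX : C(A, X)) (fY : C(A, Y)) : C(MapRel fX fY, MapRelH fX fY) where
  toFun g := ⟨(g.1, fY.comp ContinuousMap.fst), fun a => (g.2 a).symm, fun _ => rfl⟩
  continuous_toFun :=
    Continuous.subtype_mk (continuous_subtype_val.prodMk continuous_const) _

/-- max as a continuous map on `I × I`. -/
def maxI : C(I × I, I) where
  toFun p := ⟨max p.1.1 p.2.1, ⟨le_max_of_le_left p.1.2.1, max_le p.1.2.2 p.2.2.2⟩⟩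
  continuous_toFun := Continuous.subtype_mk
    ((continuous_subtype_val.comp continuous_fst).max
      (continuous_subtype_val.comp continuous_snd)) _

lemma maxI_left_zero (t : I) : maxI (0, t) = t :=
  Subtype.ext (max_eq_right t.2.1)

lemma maxI_right_zero (s : I) : maxI (s, 0) = s :=
  Subtype.ext (max_eq_left s.2.1)

lemma maxI_left_one (t : I) : maxI (1, t) = 1 :=
  Subtype.ext (max_eq_left t.2.2)

lemma maxI_right_one (s : I) : maxI (s, 1) = 1 :=
  Subtype.ext (max_eq_right s.2.2)

/-- If `f_X × id_K` has the homotopy extension property for every space `K`, then the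
inclusion `Map_f(X,Y) → Map_f^h(X,Y)` is a homotopy equivalence. -/
theorem inclMapRel_homotopyEquiv
    {A X Y : Type} [TopologicalSpace A] [TopologicalSpace X] [TopologicalSpace Y]
    [CompactSpace A] [T2Space A] [CompactSpace X] [T2Space X] [CompactSpace Y] [T2Space Y]
    (fX : C(A, X)) (fY : C(A, Y))
    (hhep : ∀ (K : Type) (_ : TopologicalSpace K),
      HEP (fun p : A × K => (fX p.1, p.2))) :
    ∃ r : C(MapRelH fX fY, MapRel fX fY),
      (r.comp (inclMapRel fX fY)).Homotopic (ContinuousMap.id _) ∧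
      ((inclMapRel fX fY).comp r).Homotopic (ContinuousMap.id _) := by
  classical
  set K := MapRelH fX fY with hK
  set ι := inclMapRel fX fY with hι
  -- evaluation maps
  have hcfst : Continuous fun k : K => k.1.1 :=
    continuous_fst.comp continuous_subtype_val
  have hcsnd : Continuous fun k : K => k.1.2 :=
    continuous_snd.comp continuous_subtype_val
  let g : X × K → Y := fun p => p.2.1.1 p.1
  have hg : Continuous g :=
    ContinuousEval.continuous_eval.comp ((hcfst.comp continuous_snd).prodMk continuous_fst)
  let G : (A × K) × I → Y := fun q => q.1.2.1.2 (q.1.1, q.2)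
  have hG : Continuous G :=
    ContinuousEval.continuous_eval.comp
      ((hcsnd.comp (continuous_snd.comp continuous_fst)).prodMk
        (((continuous_fst.comp continuous_fst)).prodMk continuous_snd))
  have h0 : ∀ a : A × K, G (a, 0) = g (fX a.1, a.2) := fun a => a.2.2.1 a.1
  obtain ⟨G', hG'c, hG'0, hG'ext⟩ := hhep K inferInstance Y inferInstance g hg G hG h0
  -- the retraction
  let Φ : C(K × X, Y) :=
    ⟨fun p => G' ((p.2, p.1), 1),
      hG'c.comp ((continuous_snd.prodMk continuous_fst).prodMk continuous_const)⟩
  have hrprop : ∀ k : K, ∀ a, Φ.curry k (fX a) = fY a := by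
    intro k a
    show G' ((fX a, k), 1) = fY a
    rw [hG'ext (a, k) 1]
    exact k.2.2 a
  let r : C(K, MapRel fX fY) :=
    ⟨fun k => ⟨Φ.curry k, hrprop k⟩,
      Continuous.subtype_mk Φ.curry.continuous _⟩
  refine ⟨r, ?_, ?_⟩
  · -- r ∘ ι ≃ id
    let Ψ : C((I × MapRel fX fY) × X, Y) :=
      ⟨fun q => G' ((q.2, ι q.1.2), q.1.1),
        hG'c.comp ((continuous_snd.prodMk
          (ι.continuous.comp (continuous_snd.comp continuous_fst))).prodMk
          (continuous_fst.comp continuous_fst))⟩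
    have hΨprop : ∀ p : I × MapRel fX fY, ∀ a, Ψ.curry p (fX a) = fY a := by
      intro p a
      show G' ((fX a, ι p.2), p.1) = fY a
      rw [hG'ext (a, ι p.2) p.1]
      rfl
    let F : C(I × MapRel fX fY, MapRel fX fY) :=
      ⟨fun p => ⟨Ψ.curry p, hΨprop p⟩,
        Continuous.subtype_mk Ψ.curry.continuous _⟩
    have hF0 : ∀ p, F (0, p) = (ContinuousMap.id (MapRel fX fY)) p := by
      intro p
      apply Subtype.ext
      apply ContinuousMap.ext
      intro x
      show G' ((x, ι p), 0) = p.1 x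
      rw [hG'0 (x, ι p)]
      rfl
    have hF1 : ∀ p, F (1, p) = (r.comp ι) p := fun p => rfl
    exact ⟨(ContinuousMap.Homotopy.symm
      { toContinuousMap := F
        map_zero_left := hF0
        map_one_left := hF1 })⟩
  · -- ι ∘ r ≃ id
    let Ψa : C((I × K) × X, Y) :=
      ⟨fun q => G' ((q.2, q.1.2), q.1.1),
        hG'c.comp ((continuous_snd.prodMk
          (continuous_snd.comp continuous_fst)).prodMk
          (continuous_fst.comp continuous_fst))⟩
    let Ψb : C((I × K) × (A × I), Y) :=
      ⟨fun q => G' ((fX q.2.1, q.1.2), maxI (q.1.1, q.2.2)),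
        hG'c.comp ((((fX.continuous.comp (continuous_fst.comp continuous_snd)).prodMk
          (continuous_snd.comp continuous_fst))).prodMk
          (maxI.continuous.comp ((continuous_fst.comp continuous_fst).prodMk
            (continuous_snd.comp continuous_snd))))⟩
    have hprop : ∀ p : I × K,
        (∀ a, Ψb.curry p (a, 0) = Ψa.curry p (fX a)) ∧
        (∀ a, Ψb.curry p (a, 1) = fY a) := by
      intro p
      constructor
      · intro a
        show G' ((fX a, p.2), maxI (p.1, 0)) = G' ((fX a, p.2), p.1)
        rw [maxI_right_zero]
      · intro a
        show G' ((fX a, p.2), maxI (p.1, 1)) = fY a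
        rw [maxI_right_one, hG'ext (a, p.2) 1]
        exact p.2.2.2 a
    let F : C(I × K, K) :=
      ⟨fun p => ⟨(Ψa.curry p, Ψb.curry p), hprop p⟩,
        Continuous.subtype_mk (Ψa.curry.continuous.prodMk Ψb.curry.continuous) _⟩
    have hF0 : ∀ k : K, F (0, k) = (ContinuousMap.id K) k := by
      intro k
      apply Subtype.ext
      apply Prod.ext
      · apply ContinuousMap.ext
        intro x
        show G' ((x, k), 0) = k.1.1 x
        exact hG'0 (x, k)
      · apply ContinuousMap.ext
        rintro ⟨a, t⟩
        show G' ((fX a, k), maxI (0, t)) = k.1.2 (a, t)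
        rw [maxI_left_zero]
        exact hG'ext (a, k) t
    have hF1 : ∀ k : K, F (1, k) = (ι.comp r) k := by
      intro k
      apply Subtype.ext
      apply Prod.ext
      · rfl
      · apply ContinuousMap.ext
        rintro ⟨a, t⟩
        show G' ((fX a, k), maxI (1, t)) = fY a
        rw [maxI_left_one, hG'ext (a, k) 1]
        exact k.2.2 a
    exact ⟨(ContinuousMap.Homotopy.symm
      { toContinuousMap := F
        map_zero_left := hF0
        map_one_left := hF1 })⟩
end

section
/- Suppose that for every topological space K the map f_X × id_K : A×K → X×K has the homotopy extension property. Let Map_f^{≃}(X,Y) ⊆ Map_f(X,Y) be the subspace consisting of those g that are homotopy equivalences X → Y, and let Map_f^{h,≃}(X,Y) ⊆ Map_f^h(X,Y) be the subspace of pairs (g,H) in which g is a homotopy equivalence. Then the restriction of the inclusion ι to a map Map_f^{≃}(X,Y) → Map_f^{h,≃}(X,Y) is a homotopy equivalence. -/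
open unitInterval

/-- A continuous map `g : X → Y` is a homotopy equivalence. -/
def IsHtpyEquiv {X Y : Type} [TopologicalSpace X] [TopologicalSpace Y] (g : C(X, Y)) : Prop :=
  ∃ k : C(Y, X), (k.comp g).Homotopic (ContinuousMap.id X) ∧
    (g.comp k).Homotopic (ContinuousMap.id Y)

/-- `Map_f^{≃}(X,Y)`: the subspace of `Map_f(X,Y)` of maps `g` (with `g ∘ f_X = f_Y`)
that are homotopy equivalences. -/
abbrev MapRelE {A X Y : Type} [TopologicalSpace A] [TopologicalSpace X] [TopologicalSpace Y]
    (fX : C(A, X)) (fY : C(A, Y)) : Type :=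
  {g : C(X, Y) // (∀ a, g (fX a) = fY a) ∧ IsHtpyEquiv g}

/-- `Map_f^{h,≃}(X,Y)`: the subspace of `Map_f^h(X,Y)` of pairs `(g, H)` in which `g` is a
homotopy equivalence. -/
abbrev MapRelHE {A X Y : Type} [TopologicalSpace A] [TopologicalSpace X] [TopologicalSpace Y]
    (fX : C(A, X)) (fY : C(A, Y)) : Type :=
  {gH : C(X, Y) × C(A × I, Y) //
    ((∀ a, gH.2 (a, 0) = gH.1 (fX a)) ∧ ∀ a, gH.2 (a, 1) = fY a) ∧ IsHtpyEquiv gH.1}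

/-- The restricted inclusion `Map_f^{≃}(X,Y) → Map_f^{h,≃}(X,Y)`,
`g ↦ (g, constant homotopy at f_Y)`. -/
def inclMapRelE {A X Y : Type} [TopologicalSpace A] [TopologicalSpace X] [TopologicalSpace Y]
    (fX : C(A, X)) (fY : C(A, Y)) : C(MapRelE fX fY, MapRelHE fX fY) where
  toFun g := ⟨(g.1, fY.comp ContinuousMap.fst),
    ⟨fun a => (g.2.1 a).symm, fun _ => rfl⟩, g.2.2⟩
  continuous_toFun :=
    Continuous.subtype_mk (continuous_subtype_val.prodMk continuous_const) _

/-- Product in the unit interval. -/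
def mulI (s t : I) : I :=
  ⟨s.1 * t.1, mul_nonneg s.2.1 t.2.1, by nlinarith [s.2.1, s.2.2, t.2.1, t.2.2]⟩

lemma continuous_mulI : Continuous fun p : I × I => mulI p.1 p.2 :=
  Continuous.subtype_mk
    ((continuous_subtype_val.comp continuous_fst).mul
      (continuous_subtype_val.comp continuous_snd)) _

/-- The reparametrization `(s, t) ↦ s + t * (1 - s)` of the unit interval. -/
def sigmaI (s t : I) : I :=
  ⟨s.1 + t.1 * (1 - s.1),
    by nlinarith [s.2.1, s.2.2, t.2.1, t.2.2],
    by nlinarith [s.2.1, s.2.2, t.2.1, t.2.2]⟩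

lemma continuous_sigmaI : Continuous fun p : I × I => sigmaI p.1 p.2 := by
  apply Continuous.subtype_mk
  have h1 : Continuous fun p : I × I => (p.1 : ℝ) :=
    continuous_subtype_val.comp continuous_fst
  have h2 : Continuous fun p : I × I => (p.2 : ℝ) :=
    continuous_subtype_val.comp continuous_snd
  exact h1.add (h2.mul (continuous_const.sub h1))

lemma mulI_zero_left (s : I) : mulI 0 s = 0 := Subtype.ext (zero_mul _)

lemma mulI_one_left (s : I) : mulI 1 s = s := Subtype.ext (one_mul _)

lemma sigmaI_zero_left (t : I) : sigmaI 0 t = t := Subtype.ext (by simp [sigmaI])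

lemma sigmaI_one_left (t : I) : sigmaI 1 t = 1 := Subtype.ext (by simp [sigmaI])

lemma sigmaI_zero_right (s : I) : sigmaI s 0 = s := Subtype.ext (by simp [sigmaI])

lemma sigmaI_one_right (s : I) : sigmaI s 1 = 1 := Subtype.ext (by simp [sigmaI])

/-- Being a homotopy equivalence is invariant under homotopy. -/
lemma isHtpyEquiv_of_homotopic {X Y : Type} [TopologicalSpace X] [TopologicalSpace Y]
    {g g' : C(X, Y)} (h : g.Homotopic g') (hg : IsHtpyEquiv g) : IsHtpyEquiv g' := by
  obtain ⟨k, h1, h2⟩ := hg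
  exact ⟨k, ((ContinuousMap.Homotopic.comp (ContinuousMap.Homotopic.refl k) h.symm).trans h1),
    ((ContinuousMap.Homotopic.comp h.symm (ContinuousMap.Homotopic.refl k)).trans h2)⟩

/-- If `f_X × id_K` has the homotopy extension property for every space `K`, then the
inclusion `Map_f^{≃}(X,Y) → Map_f^{h,≃}(X,Y)` is a homotopy equivalence. -/
theorem inclMapRelE_homotopyEquiv
    {A X Y : Type} [TopologicalSpace A] [TopologicalSpace X] [TopologicalSpace Y]
    [CompactSpace A] [T2Space A] [CompactSpace X] [T2Space X] [CompactSpace Y] [T2Space Y]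
    (fX : C(A, X)) (fY : C(A, Y))
    (hhep : ∀ (K : Type) (_ : TopologicalSpace K),
      HEP (fun p : A × K => (fX p.1, p.2))) :
    ∃ r : C(MapRelHE fX fY, MapRelE fX fY),
      (r.comp (inclMapRelE fX fY)).Homotopic (ContinuousMap.id _) ∧
      ((inclMapRelE fX fY).comp r).Homotopic (ContinuousMap.id _) := by
  set K := MapRelHE fX fY with hKdef
  set E := MapRelE fX fY with hEdef
  set ι := inclMapRelE fX fY with hιdef
  -- apply the HEP hypothesis to the universal example over K
  have hg0c : Continuous fun p : X × K => p.2.1.1 p.1 := by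
    have h1 : Continuous fun p : X × K => (p.2.1.1, p.1) :=
      ((continuous_fst.comp (continuous_subtype_val.comp continuous_snd)).prodMk
        continuous_fst)
    exact ContinuousEval.continuous_eval.comp h1
  have hGc : Continuous fun p : (A × K) × I => p.1.2.1.2 (p.1.1, p.2) := by
    have h1 : Continuous fun p : (A × K) × I => (p.1.2.1.2, ((p.1.1, p.2) : A × I)) :=
      ((continuous_snd.comp (continuous_subtype_val.comp
          (continuous_snd.comp continuous_fst))).prodMk
        ((continuous_fst.comp continuous_fst).prodMk continuous_snd))
    exact ContinuousEval.continuous_eval.comp h1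
  obtain ⟨G', hG'c, hG'0, hG'f⟩ :=
    hhep K inferInstance Y inferInstance (fun p : X × K => p.2.1.1 p.1) hg0c
      (fun p : (A × K) × I => p.1.2.1.2 (p.1.1, p.2)) hGc
      (fun a => a.2.2.1.1 a.1)
  -- the curried family of maps X → Y
  let Ψ : C((K × I) × X, Y) :=
    ⟨fun p => G' ((p.2, p.1.1), p.1.2),
      hG'c.comp ((continuous_snd.prodMk (continuous_fst.comp continuous_fst)).prodMk
        (continuous_snd.comp continuous_fst))⟩
  let ψ : C(K × I, C(X, Y)) := Ψ.curry
  have hψ : ∀ (k : K) (s : I) (x : X), ψ (k, s) x = G' ((x, k), s) := fun _ _ _ => rfl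
  -- each stage is homotopic to the original map
  have hpsi_htpy : ∀ (k : K) (s : I), (k.1.1).Homotopic (ψ (k, s)) := by
    intro k s
    refine ⟨{ toFun := fun p => G' ((p.2, k), mulI p.1 s),
              continuous_toFun := hG'c.comp
                (((continuous_snd.prodMk continuous_const)).prodMk
                  (continuous_mulI.comp (continuous_fst.prodMk continuous_const))),
              map_zero_left := ?_, map_one_left := ?_ }⟩
    · intro x; simp only []; rw [mulI_zero_left]; exact hG'0 (x, k)
    · intro x
      show G' ((x, k), mulI 1 s) = (ψ (k, s)) x
      rw [mulI_one_left]; rfl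
  -- the retraction
  have hr_mem : ∀ k : K, (∀ a, ψ (k, 1) (fX a) = fY a) ∧ IsHtpyEquiv (ψ (k, 1)) := by
    intro k
    constructor
    · intro a
      have := hG'f (a, k) 1
      rw [hψ, this]
      exact k.2.1.2 a
    · exact isHtpyEquiv_of_homotopic (hpsi_htpy k 1) k.2.2
  let r : C(K, E) :=
    ⟨fun k => ⟨ψ (k, 1), hr_mem k⟩,
      Continuous.subtype_mk (ψ.continuous.comp (continuous_id.prodMk continuous_const)) _⟩
  -- the deformation of the homotopy component
  let Θ : C((K × I) × (A × I), Y) :=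
    ⟨fun q => q.1.1.1.2 (q.2.1, sigmaI q.1.2 q.2.2), by
      have h1 : Continuous fun q : (K × I) × (A × I) =>
          (q.1.1.1.2, ((q.2.1, sigmaI q.1.2 q.2.2) : A × I)) := by
        refine Continuous.prodMk
          (continuous_snd.comp (continuous_subtype_val.comp
            (continuous_fst.comp continuous_fst))) ?_
        exact (continuous_fst.comp continuous_snd).prodMk
          (continuous_sigmaI.comp ((continuous_snd.comp continuous_fst).prodMk
            (continuous_snd.comp continuous_snd)))
      exact ContinuousEval.continuous_eval.comp h1⟩
  -- homotopy on E between the identity and r ∘ ι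
  have hstage1 : ∀ p : I × E,
      (∀ a, ψ (ι p.2, p.1) (fX a) = fY a) ∧ IsHtpyEquiv (ψ (ι p.2, p.1)) := by
    rintro ⟨s, g⟩
    constructor
    · intro a
      have := hG'f (a, ι g) s
      rw [hψ, this]
      rfl
    · exact isHtpyEquiv_of_homotopic (hpsi_htpy (ι g) s) g.2.2
  let Htpy1 : ContinuousMap.Homotopy (ContinuousMap.id E) (r.comp ι) :=
    { toFun := fun p => ⟨ψ (ι p.2, p.1), hstage1 p⟩
      continuous_toFun := Continuous.subtype_mk
        (ψ.continuous.comp ((ι.continuous.comp continuous_snd).prodMk continuous_fst)) _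
      map_zero_left := by
        intro g
        apply Subtype.ext
        apply ContinuousMap.ext
        intro x
        rw [hψ]
        exact hG'0 (x, ι g)
      map_one_left := fun g => rfl }
  -- homotopy on K between the identity and ι ∘ r
  have hstage2 : ∀ p : I × K,
      ((∀ a, (Θ.curry p.swap) (a, 0) = ψ p.swap (fX a)) ∧
        ∀ a, (Θ.curry p.swap) (a, 1) = fY a) ∧
        IsHtpyEquiv (ψ p.swap) := by
    rintro ⟨s, k⟩
    refine ⟨⟨?_, ?_⟩, isHtpyEquiv_of_homotopic (hpsi_htpy k s) k.2.2⟩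
    · intro a
      show k.1.2 (a, sigmaI s 0) = (ψ (k, s)) (fX a)
      rw [sigmaI_zero_right]
      exact (hG'f (a, k) s).symm
    · intro a
      show k.1.2 (a, sigmaI s 1) = fY a
      rw [sigmaI_one_right]
      exact k.2.1.2 a
  let Htpy2 : ContinuousMap.Homotopy (ContinuousMap.id K) (ι.comp r) :=
    { toFun := fun p => ⟨(ψ p.swap, Θ.curry p.swap), hstage2 p⟩
      continuous_toFun := Continuous.subtype_mk
        ((ψ.continuous.comp continuous_swap).prodMk
          (Θ.curry.continuous.comp continuous_swap)) _
      map_zero_left := by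
        intro k
        apply Subtype.ext
        refine Prod.ext ?_ ?_
        · apply ContinuousMap.ext
          intro x
          rw [hψ]
          exact hG'0 (x, k)
        · apply ContinuousMap.ext
          rintro ⟨a, t⟩
          show k.1.2 (a, sigmaI 0 t) = k.1.2 (a, t)
          rw [sigmaI_zero_left]
      map_one_left := by
        intro k
        apply Subtype.ext
        refine Prod.ext rfl ?_
        apply ContinuousMap.ext
        rintro ⟨a, t⟩
        show k.1.2 (a, sigmaI 1 t) = fY a
        rw [sigmaI_one_left]
        exact k.2.1.2 a }
  exact ⟨r, ⟨Htpy1.symm⟩, ⟨Htpy2.symm⟩⟩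
end

section
/- Let (X, f_X), (Y, f_Y) and (Z, f_Z) be spaces under A. If there exists a homotopy equivalence from (X, f_X) to (Y, f_Y) and a homotopy equivalence from (Y, f_Y) to (Z, f_Z), then there exists a homotopy equivalence from (X, f_X) to (Z, f_Z). -/
open unitInterval

/-- The set of endpoints `{0,1} × A ⊆ I × A`, used for homotopies rel endpoints. -/
def relEnds (A : Type) [TopologicalSpace A] : Set (I × A) :=
  {p | p.1 = 0 ∨ p.1 = 1}

/-- A homotopy equivalence from `(X, f_X)` to `(Y, f_Y)` (spaces under `A`): a 6-tuple
`(φ, ψ, G, H, K, L)` where `G : ψ∘φ ⇒ id_X`, `H : φ∘ψ ⇒ id_Y`, `K : φ∘f_X ⇒ f_Y`,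
`L : ψ∘f_Y ⇒ f_X`, the homotopies `L·(ψ∘K)` and `G∘f_X` are homotopic rel endpoints, and
the homotopies `K·(φ∘L)` and `H∘f_Y` are homotopic rel endpoints. -/
structure UnderHtpyEquiv {A X Y : Type} [TopologicalSpace A] [TopologicalSpace X]
    [TopologicalSpace Y] (fX : C(A, X)) (fY : C(A, Y)) where
  φ : C(X, Y)
  ψ : C(Y, X)
  G : ContinuousMap.Homotopy (ψ.comp φ) (ContinuousMap.id X)
  H : ContinuousMap.Homotopy (φ.comp ψ) (ContinuousMap.id Y)
  K : ContinuousMap.Homotopy (φ.comp fX) fY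
  L : ContinuousMap.Homotopy (ψ.comp fY) fX
  rel_left : ContinuousMap.HomotopicRel
    (((ContinuousMap.Homotopy.refl ψ).comp K).trans L).toContinuousMap
    (G.comp (ContinuousMap.Homotopy.refl fX)).toContinuousMap
    (relEnds A)
  rel_right : ContinuousMap.HomotopicRel
    (((ContinuousMap.Homotopy.refl φ).comp L).trans K).toContinuousMap
    (H.comp (ContinuousMap.Homotopy.refl fY)).toContinuousMap
    (relEnds A)

abbrev ContinuousMap.Homotopy.hcomp {A X Y : Type} [TopologicalSpace A] [TopologicalSpace X]
    [TopologicalSpace Y] {f₀ f₁ : C(A, X)} {g₀ g₁ : C(X, Y)}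
    (F : ContinuousMap.Homotopy f₀ f₁) (G : ContinuousMap.Homotopy g₀ g₁) :
    ContinuousMap.Homotopy (g₀.comp f₀) (g₁.comp f₁) :=
  G.comp F

@[simp] lemma ContinuousMap.Homotopy.hcomp_apply {A X Y : Type} [TopologicalSpace A]
    [TopologicalSpace X] [TopologicalSpace Y] {f₀ f₁ : C(A, X)} {g₀ g₁ : C(X, Y)}
    (F : ContinuousMap.Homotopy f₀ f₁) (G : ContinuousMap.Homotopy g₀ g₁) (x : I × A) :
    (F.hcomp G) x = G (x.1, F x) := rfl

namespace UnderHtpyAux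
open ContinuousMap

variable {A X Y Z : Type} [TopologicalSpace A] [TopologicalSpace X] [TopologicalSpace Y]
  [TopologicalSpace Z]

def toPath {f g : C(A, X)} (F : Homotopy f g) : Path f g where
  toContinuousMap := F.curry
  source' := by ext a; simp
  target' := by ext a; simp

@[simp] lemma toPath_apply {f g : C(A, X)} (F : Homotopy f g) (t : I) (a : A) :
    toPath F t a = F (t, a) := rfl


@[simp] lemma hcomp_apply' {f₀ f₁ : C(A, X)} {g₀ g₁ : C(X, Y)} (F : Homotopy f₀ f₁)
    (G : Homotopy g₀ g₁) (x : I × A) : (F.hcomp G) x = G (x.1, F x) := rfl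

@[simp] lemma refl_apply' {f : C(A, X)} (x : I × A) : (ContinuousMap.Homotopy.refl f) x = f x.2 :=
  rfl

theorem homotopic_map {α β : Type} [TopologicalSpace α] [TopologicalSpace β] {x y : α}
    {p q : Path x y} (h : p.Homotopic q) {f : α → β} (hf : Continuous f) :
    (p.map hf).Homotopic (q.map hf) :=
  Path.Homotopic.map h ⟨f, hf⟩

theorem htrans_assoc {α : Type} [TopologicalSpace α] {w x y z : α} (p : Path w x) (q : Path x y)
    (r : Path y z) : ((p.trans q).trans r).Homotopic (p.trans (q.trans r)) :=
  ⟨Path.Homotopy.transAssoc p q r⟩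

theorem prod_decomp₁ {α β : Type} [TopologicalSpace α] [TopologicalSpace β] {a₁ a₂ : α}
    {b₁ b₂ : β} (p : Path a₁ a₂) (q : Path b₁ b₂) :
    ((p.prod (Path.refl b₁)).trans ((Path.refl a₂).prod q)).Homotopic (p.prod q) := by
  rw [Path.trans_prod_eq_prod_trans]
  exact ⟨Path.Homotopic.prodHomotopy (Path.Homotopy.transRefl p) (Path.Homotopy.reflTrans q)⟩

theorem prod_decomp₂ {α β : Type} [TopologicalSpace α] [TopologicalSpace β] {a₁ a₂ : α}
    {b₁ b₂ : β} (p : Path a₁ a₂) (q : Path b₁ b₂) :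
    (((Path.refl a₁).prod q).trans (p.prod (Path.refl b₂))).Homotopic (p.prod q) := by
  rw [Path.trans_prod_eq_prod_trans]
  exact ⟨Path.Homotopic.prodHomotopy (Path.Homotopy.reflTrans p) (Path.Homotopy.transRefl q)⟩

theorem homotopicRel_iff [CompactSpace A] [T2Space A] {f g : C(A, X)}
    (F G : Homotopy f g) :
    HomotopicRel F.toContinuousMap G.toContinuousMap (relEnds A) ↔
      (toPath F).Homotopic (toPath G) := by
  constructor
  · rintro ⟨Q⟩
    refine ⟨{ toFun := fun ts => ⟨fun a => Q (ts.1, (ts.2, a)),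
                (map_continuous Q).comp (by fun_prop)⟩
              continuous_toFun := ?_
              map_zero_left := ?_
              map_one_left := ?_
              prop' := ?_ }⟩
    · exact ContinuousMap.continuous_of_continuous_uncurry _
        ((map_continuous Q).comp (by fun_prop))
    · intro s
      exact ContinuousMap.ext fun a => Q.apply_zero (s, a)
    · intro s
      exact ContinuousMap.ext fun a => Q.apply_one (s, a)
    · intro t s hs
      refine ContinuousMap.ext fun a => ?_
      refine Q.prop t (s, a) ?_
      simpa [relEnds] using hs
  · rintro ⟨R⟩
    refine ⟨{ toContinuousMap := (ContinuousMap.uncurry R.toContinuousMap).comp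
                ⟨fun p : I × (I × A) => ((p.1, p.2.1), p.2.2), by fun_prop⟩
              map_zero_left := ?_
              map_one_left := ?_
              prop' := ?_ }⟩
    · intro x
      exact DFunLike.congr_fun (R.apply_zero x.1) x.2
    · intro x
      exact DFunLike.congr_fun (R.apply_one x.1) x.2
    · intro t x hx
      refine DFunLike.congr_fun (R.eq_fst t ?_) x.2
      simpa [relEnds] using hx

theorem core [CompactSpace A] [T2Space A] [CompactSpace Y] [T2Space Y]
    (fX : C(A, X)) (fY : C(A, Y)) (fZ : C(A, Z))
    (u₁ : C(X, Y)) (v₁ : C(Y, X)) (u₂ : C(Y, Z)) (v₂ : C(Z, Y))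
    (G₁ : Homotopy (v₁.comp u₁) (ContinuousMap.id X))
    (G₂ : Homotopy (v₂.comp u₂) (ContinuousMap.id Y))
    (K₁ : Homotopy (u₁.comp fX) fY) (K₂ : Homotopy (u₂.comp fY) fZ)
    (L₁ : Homotopy (v₁.comp fY) fX) (L₂ : Homotopy (v₂.comp fZ) fY)
    (h1 : HomotopicRel ((K₁.hcomp (ContinuousMap.Homotopy.refl v₁)).trans L₁).toContinuousMap
      ((ContinuousMap.Homotopy.refl fX).hcomp G₁).toContinuousMap (relEnds A))
    (h2 : HomotopicRel ((K₂.hcomp (ContinuousMap.Homotopy.refl v₂)).trans L₂).toContinuousMap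
      ((ContinuousMap.Homotopy.refl fY).hcomp G₂).toContinuousMap (relEnds A)) :
    HomotopicRel
      ((((show Homotopy ((u₂.comp u₁).comp fX) (u₂.comp fY) from
            K₁.hcomp (ContinuousMap.Homotopy.refl u₂)).trans K₂).hcomp
          (ContinuousMap.Homotopy.refl (v₁.comp v₂))).trans
        ((show Homotopy ((v₁.comp v₂).comp fZ) (v₁.comp fY) from
            L₂.hcomp (ContinuousMap.Homotopy.refl v₁)).trans L₁)).toContinuousMap
      (((ContinuousMap.Homotopy.refl fX).hcomp
        ((show Homotopy ((v₁.comp v₂).comp (u₂.comp u₁)) (v₁.comp u₁) from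
            ((ContinuousMap.Homotopy.refl u₁).hcomp G₂).hcomp
              (ContinuousMap.Homotopy.refl v₁)).trans G₁))).toContinuousMap
      (relEnds A) := by
  -- continuity facts
  have hv₁ : Continuous (fun g : C(A, Y) => v₁.comp g) := continuous_postcomp v₁
  have hv₂ : Continuous (fun g : C(A, Z) => v₂.comp g) := continuous_postcomp v₂
  have hψ : Continuous (fun g : C(A, Z) => v₁.comp (v₂.comp g)) :=
    (continuous_postcomp v₁).comp (continuous_postcomp v₂)
  have hA₁ : Continuous (fun g : C(A, Y) => v₁.comp (v₂.comp (u₂.comp g))) :=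
    hψ.comp (continuous_postcomp u₂)
  have hpreX : Continuous (fun g : C(X, X) => g.comp fX) := continuous_precomp fX
  have hpreY : Continuous (fun g : C(Y, Y) => g.comp fY) := continuous_precomp fY
  have hc : Continuous (fun p : C(A, Y) × C(Y, Y) => v₁.comp (p.2.comp p.1)) :=
    (continuous_postcomp v₁).comp continuous_comp'
  have hn₁ : Continuous (fun g : C(Y, Y) => v₁.comp (g.comp (u₁.comp fX))) :=
    (continuous_postcomp v₁).comp (continuous_precomp (u₁.comp fX))
  have hnC : Continuous (fun g : C(Y, Y) => v₁.comp (g.comp fY)) :=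
    (continuous_postcomp v₁).comp (continuous_precomp fY)
  -- hypothesis 1 as a path homotopy
  have hp1 : (((toPath K₁).map hv₁).trans (toPath L₁)).Homotopic ((toPath G₁).map hpreX) := by
    have h := (homotopicRel_iff ((K₁.hcomp (ContinuousMap.Homotopy.refl v₁)).trans L₁)
      (show Homotopy (v₁.comp (u₁.comp fX)) fX from
        (ContinuousMap.Homotopy.refl fX).hcomp G₁)).1 h1
    have e₁ : toPath ((K₁.hcomp (ContinuousMap.Homotopy.refl v₁)).trans L₁) =
        ((toPath K₁).map hv₁).trans (toPath L₁) := by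
      ext t a
      simp only [toPath_apply, Homotopy.trans_apply, Path.trans_apply, Homotopy.hcomp_apply, hcomp_apply', refl_apply',
        Homotopy.refl_apply, Path.map_coe, Function.comp_apply, ContinuousMap.comp_apply]
      split_ifs <;> rfl
    have e₂ : toPath (show Homotopy (v₁.comp (u₁.comp fX)) fX from
        (ContinuousMap.Homotopy.refl fX).hcomp G₁) = (toPath G₁).map hpreX := by
      ext t a
      rfl
    rw [e₁, e₂] at h
    exact h
  -- hypothesis 2 as a path homotopy
  have hp2 : (((toPath K₂).map hv₂).trans (toPath L₂)).Homotopic ((toPath G₂).map hpreY) := by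
    have h := (homotopicRel_iff ((K₂.hcomp (ContinuousMap.Homotopy.refl v₂)).trans L₂)
      (show Homotopy (v₂.comp (u₂.comp fY)) fY from
        (ContinuousMap.Homotopy.refl fY).hcomp G₂)).1 h2
    have e₁ : toPath ((K₂.hcomp (ContinuousMap.Homotopy.refl v₂)).trans L₂) =
        ((toPath K₂).map hv₂).trans (toPath L₂) := by
      ext t a
      simp only [toPath_apply, Homotopy.trans_apply, Path.trans_apply, Homotopy.hcomp_apply, hcomp_apply', refl_apply',
        Homotopy.refl_apply, Path.map_coe, Function.comp_apply, ContinuousMap.comp_apply]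
      split_ifs <;> rfl
    have e₂ : toPath (show Homotopy (v₂.comp (u₂.comp fY)) fY from
        (ContinuousMap.Homotopy.refl fY).hcomp G₂) = (toPath G₂).map hpreY := by
      ext t a
      rfl
    rw [e₁, e₂] at h
    exact h
  -- step 2 : middle segment
  have hp2' : ((((toPath K₂).map hψ).trans ((toPath L₂).map hv₁))).Homotopic
      ((toPath G₂).map hnC) := by
    have hm := homotopic_map hp2 hv₁
    have ea : ((((toPath K₂).map hv₂).trans (toPath L₂)).map hv₁) =
        ((toPath K₂).map hψ).trans ((toPath L₂).map hv₁) := by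
      ext t a
      simp only [toPath_apply, Path.trans_apply, Path.map_coe, Function.comp_apply,
        ContinuousMap.comp_apply]
      split_ifs <;> rfl
    have eb : (((toPath G₂).map hpreY).map hv₁) = (toPath G₂).map hnC := by
      ext t a
      simp only [toPath_apply, Path.map_coe, Function.comp_apply, ContinuousMap.comp_apply]
    obtain ⟨F⟩ := hm
    exact ⟨ea ▸ eb ▸ F⟩
  -- step 3 : interchange
  have hint : (((toPath K₁).map hA₁).trans ((toPath G₂).map hnC)).Homotopic
      (((toPath G₂).map hn₁).trans ((toPath K₁).map hv₁)) := by
    have d₁ : ((toPath K₁).map hA₁).trans ((toPath G₂).map hnC) =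
        (((toPath K₁).prod (Path.refl (v₂.comp u₂))).trans
          ((Path.refl fY).prod (toPath G₂))).map hc := by
      ext t a
      simp only [toPath_apply, Path.trans_apply, Path.map_coe, Function.comp_apply,
        Path.prod_coe, Path.refl_apply, ContinuousMap.comp_apply]
      split_ifs <;> rfl
    have d₂ : ((toPath G₂).map hn₁).trans ((toPath K₁).map hv₁) =
        (((Path.refl (u₁.comp fX)).prod (toPath G₂)).trans
          ((toPath K₁).prod (Path.refl (ContinuousMap.id Y)))).map hc := by
      ext t a
      symm
      erw [Path.map_coe, Function.comp_apply, Path.trans_apply]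
      symm
      erw [Path.trans_apply]
      simp only [toPath_apply, Path.trans_apply, Path.map_coe, Function.comp_apply,
        Path.prod_coe, Path.refl_apply, ContinuousMap.comp_apply]
      split_ifs <;> rfl
    rw [d₁]
    exact d₂ ▸ (homotopic_map (prod_decomp₁ (toPath K₁) (toPath G₂)) hc).trans
      (homotopic_map (prod_decomp₂ (toPath K₁) (toPath G₂)) hc).symm
  -- final conversion
  refine (homotopicRel_iff
    (show Homotopy ((v₁.comp v₂).comp ((u₂.comp u₁).comp fX)) fX from
      (((show Homotopy ((u₂.comp u₁).comp fX) (u₂.comp fY) from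
            K₁.hcomp (ContinuousMap.Homotopy.refl u₂)).trans K₂).hcomp
          (ContinuousMap.Homotopy.refl (v₁.comp v₂))).trans
        ((show Homotopy ((v₁.comp v₂).comp fZ) (v₁.comp fY) from
            L₂.hcomp (ContinuousMap.Homotopy.refl v₁)).trans L₁))
    (show Homotopy ((v₁.comp v₂).comp ((u₂.comp u₁).comp fX)) fX from
      ((ContinuousMap.Homotopy.refl fX).hcomp
        ((show Homotopy ((v₁.comp v₂).comp (u₂.comp u₁)) (v₁.comp u₁) from
            ((ContinuousMap.Homotopy.refl u₁).hcomp G₂).hcomp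
              (ContinuousMap.Homotopy.refl v₁)).trans G₁)))).2 ?_
  -- strict decompositions of both sides
  have e0 : toPath (show Homotopy ((v₁.comp v₂).comp ((u₂.comp u₁).comp fX)) fX from
      (((show Homotopy ((u₂.comp u₁).comp fX) (u₂.comp fY) from
            K₁.hcomp (ContinuousMap.Homotopy.refl u₂)).trans K₂).hcomp
          (ContinuousMap.Homotopy.refl (v₁.comp v₂))).trans
        ((show Homotopy ((v₁.comp v₂).comp fZ) (v₁.comp fY) from
            L₂.hcomp (ContinuousMap.Homotopy.refl v₁)).trans L₁)) =
      (((toPath K₁).map hA₁).trans ((toPath K₂).map hψ)).trans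
        (((toPath L₂).map hv₁).trans (toPath L₁)) := by
    ext t a
    simp only [toPath_apply, Homotopy.trans_apply, Path.trans_apply, Homotopy.hcomp_apply, hcomp_apply', refl_apply',
      Homotopy.refl_apply, Path.map_coe, Function.comp_apply, ContinuousMap.comp_apply]
    split_ifs <;> rfl
  have e0' : toPath
      ((ContinuousMap.Homotopy.refl fX).hcomp
        ((show Homotopy ((v₁.comp v₂).comp (u₂.comp u₁)) (v₁.comp u₁) from
            ((ContinuousMap.Homotopy.refl u₁).hcomp G₂).hcomp
              (ContinuousMap.Homotopy.refl v₁)).trans G₁)) =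
      ((toPath G₂).map hn₁).trans ((toPath G₁).map hpreX) := by
    ext t a
    simp only [toPath_apply, Homotopy.trans_apply, Path.trans_apply, Homotopy.hcomp_apply, hcomp_apply', refl_apply',
      Homotopy.refl_apply, Path.map_coe, Function.comp_apply, ContinuousMap.comp_apply]
    erw [Homotopy.trans_apply, Path.trans_apply]
    split_ifs <;> rfl
  have hR : ((((toPath G₂).map hn₁)).trans ((toPath G₁).map hpreX)).Homotopic
      (toPath ((ContinuousMap.Homotopy.refl fX).hcomp
        ((show Homotopy ((v₁.comp v₂).comp (u₂.comp u₁)) (v₁.comp u₁) from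
            ((ContinuousMap.Homotopy.refl u₁).hcomp G₂).hcomp
              (ContinuousMap.Homotopy.refl v₁)).trans G₁))) := by
    rw [e0']
  rw [e0]
  refine Path.Homotopic.trans ?_ hR
  -- the chain of homotopies
  refine (htrans_assoc _ _ _).trans ?_
  refine (Path.Homotopic.hcomp (Path.Homotopic.refl ((toPath K₁).map hA₁))
    ((htrans_assoc ((toPath K₂).map hψ) ((toPath L₂).map hv₁) (toPath L₁)).symm)).trans ?_
  refine (Path.Homotopic.hcomp (Path.Homotopic.refl ((toPath K₁).map hA₁))
    (Path.Homotopic.hcomp hp2' (Path.Homotopic.refl (toPath L₁)))).trans ?_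
  refine ((htrans_assoc ((toPath K₁).map hA₁) ((toPath G₂).map hnC) (toPath L₁)).symm).trans ?_
  refine (Path.Homotopic.hcomp hint (Path.Homotopic.refl (toPath L₁))).trans ?_
  refine (htrans_assoc ((toPath G₂).map hn₁) ((toPath K₁).map hv₁) (toPath L₁)).trans ?_
  exact Path.Homotopic.hcomp (Path.Homotopic.refl ((toPath G₂).map hn₁)) hp1

end UnderHtpyAux

/-- Homotopy equivalence of spaces under `A` is transitive. -/
theorem underHtpyEquiv_trans
    {A X Y Z : Type} [TopologicalSpace A] [TopologicalSpace X] [TopologicalSpace Y]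
    [TopologicalSpace Z]
    [CompactSpace A] [T2Space A] [CompactSpace X] [T2Space X]
    [CompactSpace Y] [T2Space Y] [CompactSpace Z] [T2Space Z]
    (fX : C(A, X)) (fY : C(A, Y)) (fZ : C(A, Z))
    (h₁ : Nonempty (UnderHtpyEquiv fX fY)) (h₂ : Nonempty (UnderHtpyEquiv fY fZ)) :
    Nonempty (UnderHtpyEquiv fX fZ) := by
  obtain ⟨e₁⟩ := h₁
  obtain ⟨e₂⟩ := h₂
  exact ⟨{
    φ := e₂.φ.comp e₁.φ
    ψ := e₁.ψ.comp e₂.ψ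
    G := (show ContinuousMap.Homotopy ((e₁.ψ.comp e₂.ψ).comp (e₂.φ.comp e₁.φ))
          (e₁.ψ.comp e₁.φ) from
        ((ContinuousMap.Homotopy.refl e₁.φ).hcomp e₂.G).hcomp
          (ContinuousMap.Homotopy.refl e₁.ψ)).trans e₁.G
    H := (show ContinuousMap.Homotopy ((e₂.φ.comp e₁.φ).comp (e₁.ψ.comp e₂.ψ))
          (e₂.φ.comp e₂.ψ) from
        ((ContinuousMap.Homotopy.refl e₂.ψ).hcomp e₁.H).hcomp
          (ContinuousMap.Homotopy.refl e₂.φ)).trans e₂.H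
    K := (show ContinuousMap.Homotopy ((e₂.φ.comp e₁.φ).comp fX) (e₂.φ.comp fY) from
        e₁.K.hcomp (ContinuousMap.Homotopy.refl e₂.φ)).trans e₂.K
    L := (show ContinuousMap.Homotopy ((e₁.ψ.comp e₂.ψ).comp fZ) (e₁.ψ.comp fY) from
        e₂.L.hcomp (ContinuousMap.Homotopy.refl e₁.ψ)).trans e₁.L
    rel_left := UnderHtpyAux.core fX fY fZ e₁.φ e₁.ψ e₂.φ e₂.ψ e₁.G e₂.G e₁.K e₂.K e₁.L e₂.L
      e₁.rel_left e₂.rel_left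
    rel_right := UnderHtpyAux.core fZ fY fX e₂.ψ e₂.φ e₁.ψ e₁.φ e₂.H e₁.H e₂.L e₁.L e₂.K e₁.K
      e₂.rel_right e₁.rel_right }⟩
end

section
/- Let (X, f_X) be a space under A, and let T ⊆ X be a closed subspace such that T (with the subspace topology) is contractible and the inclusion T ↪ X has the homotopy extension property. Let X/T be the quotient space of X obtained by collapsing T to a point, π : X → X/T the quotient map, and f_{X/T} = π∘f_X. Then there exists a homotopy equivalence (of spaces under A) from (X, f_X) to (X/T, f_{X/T}). -/
open unitInterval

private lemma projIcc_coe (v : ℝ) (w : I) (hw : (w : ℝ) = v) :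
    Set.projIcc (0:ℝ) 1 zero_le_one v = w := by
  rw [← hw]; exact Set.projIcc_val zero_le_one w

/-- If `T ⊆ X` is a closed contractible subspace whose inclusion is a cofibration, then
`(X, f_X)` is homotopy equivalent, as a space under `A`, to the quotient `(X/T, π ∘ f_X)`.
Here `X/T` is the quotient of `X` collapsing `T` to a point. -/
theorem underHtpyEquiv_quotient_contractible
    {A X : Type} [TopologicalSpace A] [TopologicalSpace X]
    [CompactSpace A] [T2Space A] [CompactSpace X] [T2Space X]
    (fX : C(A, X)) (T : Set X) (hTclosed : IsClosed T)
    (hTcontr : ContractibleSpace T)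
    (hHEP : HEP ((↑) : T → X)) :
    Nonempty (UnderHtpyEquiv fX
      (⟨fun a => Quot.mk (fun x y : X => x ∈ T ∧ y ∈ T) (fX a),
        continuous_quot_mk.comp fX.continuous⟩ :
        C(A, Quot (fun x y : X => x ∈ T ∧ y ∈ T)))) := by
  classical
  obtain ⟨t₀, ⟨C⟩⟩ := id_nullhomotopic T
  obtain ⟨E, Econt, E0, Eext⟩ :=
    hHEP X ‹TopologicalSpace X› id continuous_id
      (fun p : T × I => ((C (p.2, p.1) : T) : X))
      (by exact continuous_subtype_val.comp (C.continuous.comp (continuous_snd.prodMk continuous_fst)))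
      (fun s => by simp)
  have hmemT : ∀ (s : T) (t : I), E (↑s, t) ∈ T := fun s t => by
    rw [Eext s t]; exact (C (t, s)).2
  have hE1 : ∀ (s : T), E (↑s, 1) = (t₀ : X) := fun s => by
    rw [Eext s 1, C.apply_one]; rfl
  -- notation
  let Q := Quot (fun x y : X => x ∈ T ∧ y ∈ T)
  let φ : C(X, Q) := ⟨Quot.mk _, continuous_quot_mk⟩
  let ψ : C(Q, X) :=
    ⟨Quot.lift (fun x => E (x, 1)) (fun x y hxy =>
        (hE1 ⟨x, hxy.1⟩).trans (hE1 ⟨y, hxy.2⟩).symm),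
      continuous_quot_lift _ (Econt.comp (continuous_id.prodMk continuous_const))⟩
  let fQ : C(A, Q) :=
    ⟨fun a => Quot.mk (fun x y : X => x ∈ T ∧ y ∈ T) (fX a),
      continuous_quot_mk.comp fX.continuous⟩
  -- the curried quotient homotopy
  let Fc : C(X, C(I, Q)) :=
    (ContinuousMap.mk (fun p : X × I => Quot.mk _ (E p))
      (continuous_quot_mk.comp Econt)).curry
  let Fbar : C(Q, C(I, Q)) :=
    ⟨Quot.lift (fun x => Fc x) (fun x y hxy => ContinuousMap.ext fun t =>
        Quot.sound ⟨hmemT ⟨x, hxy.1⟩ t, hmemT ⟨y, hxy.2⟩ t⟩),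
      continuous_quot_lift _ Fc.continuous⟩
  have hFc : ∀ (x : X) (t : I), Fbar (Quot.mk (fun x y : X => x ∈ T ∧ y ∈ T) x)
      = Fc x := fun x t => rfl
  have hFbar : ∀ (x : X) (t : I), Fbar (Quot.mk (fun x y : X => x ∈ T ∧ y ∈ T) x) t
      = Quot.mk (fun x y : X => x ∈ T ∧ y ∈ T) (E (x, t)) := fun x t =>
    (congrArg (fun g : C(I, Q) => g t) (hFc x t)).trans rfl
  let Ght : ContinuousMap.Homotopy (ψ.comp φ) (ContinuousMap.id X) :=
    { toFun := fun p => E (p.2, σ p.1)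
      continuous_toFun :=
        Econt.comp (continuous_snd.prodMk (continuous_symm.comp continuous_fst))
      map_zero_left := fun x => by
        show E (x, σ 0) = _
        rw [symm_zero]; rfl
      map_one_left := fun x => by
        show E (x, σ 1) = _
        rw [symm_one]; exact E0 x }
  let Hht : ContinuousMap.Homotopy (φ.comp ψ) (ContinuousMap.id Q) :=
    { toFun := fun p => Fbar p.2 (σ p.1)
      continuous_toFun :=
        (Fbar.continuous.comp continuous_snd).eval (continuous_symm.comp continuous_fst)
      map_zero_left := fun y => by
        show Fbar y (σ 0) = _
        rw [symm_zero]
        induction y using Quot.ind with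
        | _ x => exact (hFbar x 1).trans rfl
      map_one_left := fun y => by
        show Fbar y (σ 1) = _
        rw [symm_one]
        induction y using Quot.ind with
        | _ x =>
          refine (hFbar x 0).trans ?_
          rw [E0 x]
          rfl }
  let Kht : ContinuousMap.Homotopy (φ.comp fX) fQ :=
    { toFun := fun p => Quot.mk _ (fX p.2)
      continuous_toFun := continuous_quot_mk.comp (fX.continuous.comp continuous_snd)
      map_zero_left := fun a => rfl
      map_one_left := fun a => rfl }
  let Lht : ContinuousMap.Homotopy (ψ.comp fQ) fX :=
    { toFun := fun p => E (fX p.2, σ p.1)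
      continuous_toFun :=
        Econt.comp ((fX.continuous.comp continuous_snd).prodMk
          (continuous_symm.comp continuous_fst))
      map_zero_left := fun a => by
        show E (fX a, σ 0) = _
        rw [symm_zero]; rfl
      map_one_left := fun a => by
        show E (fX a, σ 1) = _
        rw [symm_one]; exact E0 (fX a) }
  refine ⟨⟨φ, ψ, Ght, Hht, Kht, Lht, ?_, ?_⟩⟩
  · -- rel_left
    refine ⟨{
      toFun := fun p => E (fX p.2.2, Set.projIcc (0:ℝ) 1 zero_le_one
        ((1 - (p.1 : ℝ)) * min 1 (2 - 2 * (p.2.1 : ℝ)) + (p.1 : ℝ) * (1 - (p.2.1 : ℝ))))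
      continuous_toFun := Econt.comp
        ((fX.continuous.comp (continuous_snd.comp continuous_snd)).prodMk
          (continuous_projIcc.comp (by fun_prop)))
      map_zero_left := ?_
      map_one_left := ?_
      prop' := ?_ }⟩
    · rintro ⟨t, a⟩
      refine Eq.trans ?_ (ContinuousMap.Homotopy.trans_apply _ _ (t, a)).symm
      by_cases h : (t : ℝ) ≤ 1 / 2
      · rw [dif_pos h]
        exact congrArg (fun u => E (fX a, u)) (projIcc_coe _ 1 (by
          show (1 : ℝ) = _
          rw [min_eq_left (by linarith)]
          norm_num))
      · rw [dif_neg h]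
        refine congrArg (fun u => E (fX a, u)) (projIcc_coe _
          (σ ⟨2 * (t : ℝ) - 1, ⟨by linarith, by linarith [t.2.2]⟩⟩) ?_)
        rw [coe_symm_eq]
        show 1 - (2 * (t : ℝ) - 1) = _
        rw [min_eq_right (by linarith)]
        simp only [show ((0:I) : ℝ) = 0 from rfl, show ((1:I) : ℝ) = 1 from rfl]
        ring
    · rintro ⟨t, a⟩
      show _ = Ght (t, fX a)
      refine congrArg (fun u => E (fX a, u)) (projIcc_coe _ (σ t) ?_)
      rw [coe_symm_eq]
      show 1 - (t : ℝ) = _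
      norm_num
    · rintro s ⟨t, a⟩ (h | h) <;>
        simp only [Set.mem_setOf_eq] at h <;> subst h
      · refine Eq.trans ?_ (ContinuousMap.Homotopy.trans_apply _ _ (0, a)).symm
        rw [dif_pos (by norm_num)]
        refine congrArg (fun u => E (fX a, u)) (projIcc_coe _ 1 ?_)
        show (1 : ℝ) = _
        rw [show ((0:I) : ℝ) = 0 from rfl, min_eq_left (by norm_num)]
        ring
      · refine Eq.trans ?_ (ContinuousMap.Homotopy.trans_apply _ _ (1, a)).symm
        rw [dif_neg (by norm_num)]
        refine congrArg (fun u => E (fX a, u)) (projIcc_coe _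
          (σ ⟨2 * ((1:I) : ℝ) - 1, ⟨by norm_num, by norm_num⟩⟩) ?_)
        rw [coe_symm_eq]
        show 1 - (2 * ((1:I) : ℝ) - 1) = _
        rw [show ((1:I) : ℝ) = 1 from rfl, min_eq_right (by norm_num)]
        ring
  · -- rel_right
    refine ⟨{
      toFun := fun p => Quot.mk _ (E (fX p.2.2, Set.projIcc (0:ℝ) 1 zero_le_one
        ((1 - (p.1 : ℝ)) * max 0 (1 - 2 * (p.2.1 : ℝ)) + (p.1 : ℝ) * (1 - (p.2.1 : ℝ)))))
      continuous_toFun := continuous_quot_mk.comp (Econt.comp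
        ((fX.continuous.comp (continuous_snd.comp continuous_snd)).prodMk
          (continuous_projIcc.comp (by fun_prop))))
      map_zero_left := ?_
      map_one_left := ?_
      prop' := ?_ }⟩
    · rintro ⟨t, a⟩
      refine Eq.trans ?_ (ContinuousMap.Homotopy.trans_apply _ _ (t, a)).symm
      by_cases h : (t : ℝ) ≤ 1 / 2
      · rw [dif_pos h]
        refine congrArg (fun u => Quot.mk _ (E (fX a, u))) (projIcc_coe _
          (σ ⟨2 * (t : ℝ), ⟨by linarith [t.2.1], by linarith⟩⟩) ?_)
        rw [coe_symm_eq]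
        show 1 - 2 * (t : ℝ) = _
        rw [max_eq_right (by linarith)]
        simp only [show ((0:I) : ℝ) = 0 from rfl]
        ring
      · rw [dif_neg h]
        refine Eq.trans (congrArg (fun u => Quot.mk (fun x y : X => x ∈ T ∧ y ∈ T)
          (E (fX a, u))) (projIcc_coe _ 0 ?_)) ?_
        · show (0 : ℝ) = _
          rw [max_eq_left (by linarith)]
          simp [show ((0:I) : ℝ) = 0 from rfl]
        · show Quot.mk (fun x y : X => x ∈ T ∧ y ∈ T) (E (fX a, 0)) = _
          rw [E0 (fX a)]
          rfl
    · rintro ⟨t, a⟩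
      refine Eq.trans ?_ (hFbar (fX a) (σ t)).symm
      refine congrArg (fun u => Quot.mk _ (E (fX a, u))) (projIcc_coe _ (σ t) ?_)
      rw [coe_symm_eq]
      show 1 - (t : ℝ) = _
      norm_num
    · rintro s ⟨t, a⟩ (h | h) <;>
        simp only [Set.mem_setOf_eq] at h <;> subst h
      · refine Eq.trans ?_ (ContinuousMap.Homotopy.trans_apply _ _ (0, a)).symm
        rw [dif_pos (by norm_num)]
        refine congrArg (fun u => Quot.mk _ (E (fX a, u))) (projIcc_coe _
          (σ ⟨2 * ((0:I) : ℝ), ⟨by norm_num, by norm_num⟩⟩) ?_)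
        rw [coe_symm_eq]
        show 1 - 2 * ((0:I) : ℝ) = _
        rw [show ((0:I) : ℝ) = 0 from rfl, max_eq_right (by norm_num)]
        ring
      · refine Eq.trans ?_ (ContinuousMap.Homotopy.trans_apply _ _ (1, a)).symm
        rw [dif_neg (by norm_num)]
        refine Eq.trans (congrArg (fun u => Quot.mk (fun x y : X => x ∈ T ∧ y ∈ T)
          (E (fX a, u))) (projIcc_coe _ 0 ?_)) ?_
        · show (0 : ℝ) = _
          rw [max_eq_left (by norm_num [show ((1:I) : ℝ) = 1 from rfl])]
          simp [show ((1:I) : ℝ) = 1 from rfl]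
        · show Quot.mk (fun x y : X => x ∈ T ∧ y ∈ T) (E (fX a, 0)) = _
          rw [E0 (fX a)]
          rfl
end

section
/- Assume Q_a is connected for every a ∈ A. Then Q = {(a,y) ∈ A×ℝⁿ : y ∈ Q_a} (a configuration of orthogonal line segments over A) is fibrewise contractible; more precisely, Q is fibrewise convex: there exists a continuous map h : {(a,p,q) ∈ A×ℝⁿ×ℝⁿ : p ∈ Q_a and q ∈ Q_a} × [0,1] → ℝⁿ such that for every such (a,p,q) and every t ∈ [0,1] one has h((a,p,q),t) ∈ Q_a, h((a,p,q),0) = p, and h((a,p,q),1) = q. -/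
open unitInterval

open Topology

namespace OrthoSeg

variable {n : ℕ} (c : Fin n → Fin n → ℝ)

/-- The `i`-th segment. -/
def Lb (i : Fin n) : Set (Fin n → ℝ) :=
  {y | (∀ j, j ≠ i → y j = c i j) ∧ y i ∈ Set.Icc (0 : ℝ) 1}

/-- The union of the segments. -/
def Tb : Set (Fin n → ℝ) := ⋃ i, Lb c i

variable {c}

lemma Lb_nonempty (i : Fin n) : (Lb c i).Nonempty :=
  ⟨fun j => if h : j = i then 0 else c i j, fun j hj => by simp [hj], by simp⟩

lemma eq_of_mem_Lb {i : Fin n} {y z : Fin n → ℝ} (hy : y ∈ Lb c i) (hz : z ∈ Lb c i)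
    {j : Fin n} (hj : j ≠ i) : y j = z j := by
  rw [hy.1 j hj, hz.1 j hj]

lemma const_of_inter {i k j : Fin n} {w : Fin n → ℝ} (hi : w ∈ Lb c i) (hk : w ∈ Lb c k)
    (hji : j ≠ i) (hjk : j ≠ k) : c i j = c k j := by
  rw [← hi.1 j hji, hk.1 j hjk]

lemma inter_unique {i k : Fin n} (hik : i ≠ k) {w w' : Fin n → ℝ}
    (hwi : w ∈ Lb c i) (hwk : w ∈ Lb c k) (hw'i : w' ∈ Lb c i) (hw'k : w' ∈ Lb c k) :
    w = w' := by
  funext j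
  rcases eq_or_ne j i with rfl | hji
  · exact eq_of_mem_Lb hwk hw'k hik
  · exact eq_of_mem_Lb hwi hw'i hji

lemma isClosed_Lb (i : Fin n) : IsClosed (Lb c i) := by
  have : Lb c i = (⋂ j, ⋂ _ : j ≠ i, {y : Fin n → ℝ | y j = c i j}) ∩
      {y : Fin n → ℝ | y i ∈ Set.Icc (0:ℝ) 1} := by
    ext y; simp [Lb, Set.mem_iInter]
  rw [this]
  refine IsClosed.inter (isClosed_iInter fun j => isClosed_iInter fun hj => ?_) ?_
  · exact isClosed_eq (continuous_apply j) continuous_const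
  · exact IsClosed.preimage (continuous_apply i) isClosed_Icc

/-- The intersection relation on segment indices. -/
def Rrel (c : Fin n → Fin n → ℝ) (i k : Fin n) : Prop := (Lb c i ∩ Lb c k).Nonempty

lemma rtg_of_connected (hconn : IsConnected (Tb c)) (i k : Fin n) :
    Relation.ReflTransGen (Rrel c) i k := by
  classical
  set S : Set (Fin n) := {k | Relation.ReflTransGen (Rrel c) i k} with hS
  set A : Set (Fin n → ℝ) := ⋃ l ∈ S, Lb c l with hA
  set B : Set (Fin n → ℝ) := ⋃ l ∈ Sᶜ, Lb c l with hB
  have hAc : IsClosed A := (Set.toFinite S).isClosed_biUnion (fun l _ => isClosed_Lb l)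
  have hBc : IsClosed B := (Set.toFinite Sᶜ).isClosed_biUnion (fun l _ => isClosed_Lb l)
  have hdisj : A ∩ B = ∅ := by
    ext y; simp only [Set.mem_inter_iff, Set.mem_empty_iff_false, iff_false]
    rintro ⟨hyA, hyB⟩
    obtain ⟨l, hl, hyl⟩ := Set.mem_iUnion₂.1 hyA
    obtain ⟨l', hl', hyl'⟩ := Set.mem_iUnion₂.1 hyB
    exact hl' (Relation.ReflTransGen.tail hl ⟨y, hyl, hyl'⟩)
  have hcover : Tb c ⊆ A ∪ B := by
    intro y hy
    obtain ⟨l, hl⟩ := Set.mem_iUnion.1 hy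
    by_cases h : l ∈ S
    · exact Or.inl (Set.mem_biUnion h hl)
    · exact Or.inr (Set.mem_biUnion h hl)
  have hTA : Tb c ⊆ A := by
    by_contra hTA
    have hsub : Tb c ⊆ Aᶜ ∪ Bᶜ := by
      intro y hy
      by_cases h : y ∈ A
      · refine Or.inr fun hyB => ?_
        have : y ∈ A ∩ B := ⟨h, hyB⟩
        simp [hdisj] at this
      · exact Or.inl h
    have h1 : (Tb c ∩ Bᶜ).Nonempty := by
      obtain ⟨w, hw⟩ := Lb_nonempty (c := c) i
      refine ⟨w, Set.mem_iUnion.2 ⟨i, hw⟩, fun hwB => ?_⟩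
      have : w ∈ A ∩ B := ⟨Set.mem_biUnion (Relation.ReflTransGen.refl) hw, hwB⟩
      simp [hdisj] at this
    have h2 : (Tb c ∩ Aᶜ).Nonempty := by
      obtain ⟨y, hy, hyA⟩ := Set.not_subset.1 hTA
      exact ⟨y, hy, hyA⟩
    have := hconn.isPreconnected Bᶜ Aᶜ hBc.isOpen_compl hAc.isOpen_compl
      (by intro y hy; exact (hsub hy).symm) h1 h2
    obtain ⟨y, hy, hyB, hyA⟩ := this
    rcases hcover hy with h | h
    · exact hyA h
    · exact hyB h
  obtain ⟨w, hw⟩ := Lb_nonempty (c := c) k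
  have : w ∈ A := hTA (Set.mem_iUnion.2 ⟨k, hw⟩)
  obtain ⟨l, hl, hwl⟩ := Set.mem_iUnion₂.1 this
  exact Relation.ReflTransGen.tail hl ⟨w, hwl, hw⟩

/-- A walk: consecutive points lie on a common segment. -/
def IsWalk (c : Fin n → Fin n → ℝ) (v : ℕ → Fin n → ℝ) (m : ℕ) : Prop :=
  ∀ t, t < m → ∃ κ, v t ∈ Lb c κ ∧ v (t + 1) ∈ Lb c κ

/-- A good walk: moreover each coordinate changes during at most one step. -/
def IsGoodWalk (c : Fin n → Fin n → ℝ) (v : ℕ → Fin n → ℝ) (m : ℕ) : Prop :=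
  IsWalk c v m ∧ ∀ j t t', t < m → t' < m →
    v t j ≠ v (t + 1) j → v t' j ≠ v (t' + 1) j → t = t'

lemma step_mem_Lb {v : ℕ → Fin n → ℝ} {m : ℕ} (hw : IsWalk c v m) {t : ℕ} (ht : t < m)
    {j : Fin n} (hch : v t j ≠ v (t + 1) j) :
    v t ∈ Lb c j ∧ v (t + 1) ∈ Lb c j := by
  obtain ⟨κ, h1, h2⟩ := hw t ht
  rcases eq_or_ne j κ with rfl | hne
  · exact ⟨h1, h2⟩
  · exact absurd (eq_of_mem_Lb h1 h2 hne) hch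

/-- If coordinate `j` does not change in steps `[t₁, t₂)`, it is constant there. -/
lemma walk_const {v : ℕ → Fin n → ℝ} {j : Fin n} :
    ∀ t₂ t₁, t₁ ≤ t₂ → (∀ t, t₁ ≤ t → t < t₂ → v t j = v (t + 1) j) → v t₁ j = v t₂ j := by
  intro t₂
  induction t₂ with
  | zero => intro t₁ h _; rw [Nat.le_zero.1 h]
  | succ m ih =>
    intro t₁ h hstep
    rcases Nat.eq_or_lt_of_le h with rfl | hlt
    · rfl
    · rw [ih t₁ (by omega) (fun t ht1 ht2 => hstep t ht1 (by omega))]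
      exact hstep m (by omega) (by omega)

/-- In a good walk each coordinate of each point is one of the endpoint values. -/
lemma goodWalk_coords {v : ℕ → Fin n → ℝ} {m : ℕ} (hg : IsGoodWalk c v m)
    {t : ℕ} (ht : t ≤ m) (j : Fin n) : v t j = v 0 j ∨ v t j = v m j := by
  by_cases h : ∀ u, u < t → v u j = v (u + 1) j
  · exact Or.inl (walk_const t 0 (Nat.zero_le _) (fun u hu1 hu2 => h u hu2)).symm
  · push_neg at h
    obtain ⟨u, hu, hch⟩ := h
    refine Or.inr (walk_const m t ht fun t' ht1 ht2 => ?_)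
    by_contra hch'
    have := hg.2 j u t' (by omega) ht2 hch hch'
    omega

lemma exists_walk_of_rtg {i k : Fin n} (h : Relation.ReflTransGen (Rrel c) i k)
    {q : Fin n → ℝ} (hq : q ∈ Lb c k) :
    ∀ p ∈ Lb c i, ∃ m v, IsWalk c v m ∧ v 0 = p ∧ v m = q ∧ 1 ≤ m := by
  induction h using Relation.ReflTransGen.head_induction_on with
  | refl =>
    intro p hp
    refine ⟨1, fun t => if t = 0 then p else q, ?_, by simp, by simp, le_refl _⟩
    intro t ht
    have : t = 0 := by omega
    subst this
    exact ⟨k, by simpa using hp, by simpa using hq⟩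
  | head hr _ ih =>
    rename_i a b _
    intro p hp
    obtain ⟨w, hwa, hwb⟩ := hr
    obtain ⟨m, v, hwalk, hv0, hvm, hm⟩ := ih w hwb
    refine ⟨m + 1, fun t => if t = 0 then p else v (t - 1), ?_, by simp, ?_, by omega⟩
    · intro t ht
      rcases Nat.eq_zero_or_pos t with rfl | htpos
      · exact ⟨a, by simpa using hp, by simpa [hv0] using hwa⟩
      · obtain ⟨κ, h1, h2⟩ := hwalk (t - 1) (by omega)
        refine ⟨κ, ?_, ?_⟩
        · simpa [Nat.pos_iff_ne_zero.1 htpos] using h1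
        · have : t + 1 - 1 = t - 1 + 1 := by omega
          simp only [if_neg (by omega : ¬ t + 1 = 0), this]
          exact h2
    · simp only [if_neg (by omega : ¬ m + 1 = 0)]
      simpa using hvm

lemma exists_goodWalk_aux : ∀ m v, IsWalk c v m → 1 ≤ m →
    ∃ m' v', IsGoodWalk c v' m' ∧ v' 0 = v 0 ∧ v' m' = v m ∧ 1 ≤ m' := by
  intro m
  induction m using Nat.strong_induction_on with
  | _ m ih =>
    intro v hw hm
    by_cases hgood : ∀ j t t', t < m → t' < m →
        v t j ≠ v (t + 1) j → v t' j ≠ v (t' + 1) j → t = t'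
    · exact ⟨m, v, ⟨hw, hgood⟩, rfl, rfl, hm⟩
    · push_neg at hgood
      obtain ⟨j, t, t', ht, ht', hch, hch', hne⟩ := hgood
      -- wlog t < t'
      rcases Nat.lt_or_ge t t' with hlt | hge
      case _ =>
        -- splice out steps (t, t']
        set d := t' - t with hd
        set m'' := m - d with hm''
        set v'' : ℕ → Fin n → ℝ := fun s => if s ≤ t then v s else v (s + d) with hv''
        have hstept : v t ∈ Lb c j ∧ v (t + 1) ∈ Lb c j := step_mem_Lb hw ht hch
        have hstept' : v t' ∈ Lb c j ∧ v (t' + 1) ∈ Lb c j := step_mem_Lb hw ht' hch'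
        have hwalk'' : IsWalk c v'' m'' := by
          intro s hs
          rcases Nat.lt_trichotomy s t with hst | rfl | hst
          · obtain ⟨κ, h1, h2⟩ := hw s (by omega)
            exact ⟨κ, by simpa [hv'', (by omega : s ≤ t)] using h1,
              by simpa [hv'', (by omega : s + 1 ≤ t)] using h2⟩
          · refine ⟨j, by simpa [hv''] using hstept.1, ?_⟩
            have : s + 1 + d = t' + 1 := by omega
            simpa [hv'', if_neg (by omega : ¬ s + 1 ≤ s), this] using hstept'.2
          · obtain ⟨κ, h1, h2⟩ := hw (s + d) (by omega)
            exact ⟨κ, by simpa [hv'', if_neg (by omega : ¬ s ≤ t)] using h1,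
              by simpa [hv'', if_neg (by omega : ¬ s + 1 ≤ t), Nat.add_right_comm s d 1] using h2⟩
        have h0 : v'' 0 = v 0 := by simp [hv'']
        have hlast : v'' m'' = v m := by
          rcases Nat.lt_or_ge t m'' with h2 | h2
          · have : m'' + d = m := by omega
            simp [hv'', if_neg (by omega : ¬ m'' ≤ t), this]
          · -- m'' ≤ t < t' < m, but m'' = m - d = m - t' + t ≥ t + 1, contradiction
            omega
        obtain ⟨m', vf, hg, h0', hl', hm'⟩ := ih m'' (by omega) v'' hwalk'' (by omega)
        exact ⟨m', vf, hg, by rw [h0', h0], by rw [hl', hlast], hm'⟩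
      case _ =>
        have hlt : t' < t := by omega
        set d := t - t' with hd
        set m'' := m - d with hm''
        set v'' : ℕ → Fin n → ℝ := fun s => if s ≤ t' then v s else v (s + d) with hv''
        have hstept : v t ∈ Lb c j ∧ v (t + 1) ∈ Lb c j := step_mem_Lb hw ht hch
        have hstept' : v t' ∈ Lb c j ∧ v (t' + 1) ∈ Lb c j := step_mem_Lb hw ht' hch'
        have hwalk'' : IsWalk c v'' m'' := by
          intro s hs
          rcases Nat.lt_trichotomy s t' with hst | rfl | hst
          · obtain ⟨κ, h1, h2⟩ := hw s (by omega)
            exact ⟨κ, by simpa [hv'', (by omega : s ≤ t')] using h1,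
              by simpa [hv'', (by omega : s + 1 ≤ t')] using h2⟩
          · refine ⟨j, by simpa [hv''] using hstept'.1, ?_⟩
            have : s + 1 + d = t + 1 := by omega
            simpa [hv'', if_neg (by omega : ¬ s + 1 ≤ s), this] using hstept.2
          · obtain ⟨κ, h1, h2⟩ := hw (s + d) (by omega)
            exact ⟨κ, by simpa [hv'', if_neg (by omega : ¬ s ≤ t')] using h1,
              by simpa [hv'', if_neg (by omega : ¬ s + 1 ≤ t'), Nat.add_right_comm s d 1] using h2⟩
        have h0 : v'' 0 = v 0 := by simp [hv'']
        have hlast : v'' m'' = v m := by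
          rcases Nat.lt_or_ge t' m'' with h2 | h2
          · have : m'' + d = m := by omega
            simp [hv'', if_neg (by omega : ¬ m'' ≤ t'), this]
          · omega
        obtain ⟨m', vf, hg, h0', hl', hm'⟩ := ih m'' (by omega) v'' hwalk'' (by omega)
        exact ⟨m', vf, hg, by rw [h0', h0], by rw [hl', hlast], hm'⟩

/-- Main walk existence: between any two points of a connected `Tb` there is a good walk. -/
lemma exists_goodWalk (hconn : IsConnected (Tb c)) {p q : Fin n → ℝ}
    (hp : p ∈ Tb c) (hq : q ∈ Tb c) :
    ∃ m v, IsGoodWalk c v m ∧ v 0 = p ∧ v m = q ∧ 1 ≤ m := by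
  obtain ⟨i, hpi⟩ := Set.mem_iUnion.1 hp
  obtain ⟨k, hqk⟩ := Set.mem_iUnion.1 hq
  obtain ⟨m, v, hw, h0, hl, hm⟩ :=
    exists_walk_of_rtg (rtg_of_connected hconn i k) hqk p hpi
  obtain ⟨m', v', hg, h0', hl', hm'⟩ := exists_goodWalk_aux m v hw hm
  exact ⟨m', v', hg, by rw [h0', h0], by rw [hl', hl], hm'⟩


lemma mem_Tb_of_mem_Lb {i : Fin n} {w : Fin n → ℝ} (h : w ∈ Lb c i) : w ∈ Tb c :=
  Set.mem_iUnion.2 ⟨i, h⟩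

/-- From a base point `P`, a junction of two segments can differ from `P`
in at most one of the two segment coordinates. -/
lemma np (hconn : IsConnected (Tb c)) {P w : Fin n → ℝ} (hP : P ∈ Tb c)
    {u u' : Fin n} (huu : u ≠ u') (hwu : w ∈ Lb c u) (hwu' : w ∈ Lb c u') :
    P u = w u ∨ P u' = w u' := by
  obtain ⟨m, v, hg, h0, hm, hm1⟩ := exists_goodWalk hconn hP (mem_Tb_of_mem_Lb hwu)
  subst h0; subst hm
  by_cases hu : ∀ t, 0 ≤ t → t < m → v t u = v (t + 1) u
  · exact Or.inl (walk_const m 0 (Nat.zero_le _) hu)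
  · push_neg at hu
    obtain ⟨tu, _, htu, hchu⟩ := hu
    by_cases hu' : ∀ t, 0 ≤ t → t < m → v t u' = v (t + 1) u'
    · exact Or.inr (walk_const m 0 (Nat.zero_le _) hu')
    · push_neg at hu'
      obtain ⟨tv, _, htv, hchv⟩ := hu'
      have hne : tu ≠ tv := by
        rintro rfl
        obtain ⟨h1u, h2u⟩ := step_mem_Lb hg.1 htu hchu
        obtain ⟨h1v, h2v⟩ := step_mem_Lb hg.1 htv hchv
        exact hchu (congrFun (inter_unique huu h1u h1v h2u h2v) u)
      obtain ⟨h1u, h2u⟩ := step_mem_Lb hg.1 htu hchu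
      obtain ⟨h1v, h2v⟩ := step_mem_Lb hg.1 htv hchv
      rcases Nat.lt_or_ge tu tv with hlt | hge
      · -- u-step happens first; coordinate u' has not moved yet at time tu
        refine Or.inr ?_
        have hconst : v 0 u' = v tu u' := by
          refine walk_const tu 0 (Nat.zero_le _) fun t _ ht => ?_
          by_contra hch
          have := hg.2 u' t tv (by omega) htv hch hchv
          omega
        rw [hconst]
        rw [h1u.1 u' (Ne.symm huu), hwu.1 u' (Ne.symm huu)]
      · have hlt : tv < tu := by omega
        refine Or.inl ?_
        have hconst : v 0 u = v tv u := by
          refine walk_const tv 0 (Nat.zero_le _) fun t _ ht => ?_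
          by_contra hch
          have := hg.2 u t tu (by omega) htu hch hchu
          omega
        rw [hconst]
        rw [h1v.1 u huu, hwu'.1 u huu]

/-- Two points on the same side of `P` with equal distances to `P` are equal -/
lemma same_side_abs_inj {P e α β : ℝ} (hα : α ∈ Set.Icc (P ⊓ e) (P ⊔ e))
    (hβ : β ∈ Set.Icc (P ⊓ e) (P ⊔ e)) (h : |α - P| = |β - P|) : α = β := by
  obtain ⟨hα1, hα2⟩ := hα
  obtain ⟨hβ1, hβ2⟩ := hβ
  rcases le_total P e with h' | h'
  · rw [inf_eq_left.2 h'] at hα1 hβ1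
    rw [abs_of_nonneg (by linarith), abs_of_nonneg (by linarith)] at h
    linarith
  · rw [sup_eq_left.2 h'] at hα2 hβ2
    rw [abs_of_nonpos (by linarith), abs_of_nonpos (by linarith)] at h
    linarith

lemma sum_split {f g : Fin n → ℝ} {κ : Fin n} (h : ∀ j, j ≠ κ → f j = g j) :
    (∑ j, f j) - f κ = (∑ j, g j) - g κ := by
  rw [← Finset.sum_erase_add Finset.univ f (Finset.mem_univ κ),
    ← Finset.sum_erase_add Finset.univ g (Finset.mem_univ κ)]
  have : ∑ j ∈ Finset.univ.erase κ, f j = ∑ j ∈ Finset.univ.erase κ, g j :=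
    Finset.sum_congr rfl fun j hj => h j (Finset.ne_of_mem_erase hj)
  rw [this]; ring

/-- Along a good walk staying between `P` and `e` (coordinatewise), the ℓ¹-distance
to `P` is at most the max of its endpoint values. -/
lemma noPeak (hconn : IsConnected (Tb c)) {P e : Fin n → ℝ} (hP : P ∈ Tb c)
    {v : ℕ → Fin n → ℝ} {m : ℕ} (hg : IsGoodWalk c v m)
    (hside : ∀ t, t ≤ m → ∀ j, v t j ∈ Set.Icc (P j ⊓ e j) (P j ⊔ e j)) :
    ∀ t, t ≤ m → (∑ j, |v t j - P j|) ≤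
      max (∑ j, |v 0 j - P j|) (∑ j, |v m j - P j|) := by
  classical
  set F : ℕ → ℝ := fun t => ∑ j, |v t j - P j| with hF
  by_contra hcon
  push_neg at hcon
  obtain ⟨t₀, ht₀, hgt⟩ := hcon
  obtain ⟨ts, htsmem, htsmax⟩ := Finset.exists_max_image (Finset.range (m + 1)) F
    ⟨0, by simp⟩
  rw [Finset.mem_range] at htsmem
  set M := F ts with hM
  have hMgt : max (F 0) (F m) < M :=
    lt_of_lt_of_le hgt (htsmax t₀ (Finset.mem_range.2 (by omega)))
  have hle : ∀ t, t ≤ m → F t ≤ M := fun t ht => htsmax t (Finset.mem_range.2 (by omega))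
  -- least index attaining the max
  have hex1 : ∃ t, t ≤ m ∧ F t = M := ⟨ts, by omega, rfl⟩
  set t₁ := Nat.find hex1 with ht₁def
  obtain ⟨ht₁m, ht₁M⟩ := Nat.find_spec hex1
  rw [← ht₁def] at ht₁m ht₁M
  have ht₁min : ∀ t, t < t₁ → t ≤ m → F t ≠ M := by
    intro t ht htm
    have := Nat.find_min hex1 ht
    tauto
  have ht₁pos : 0 < t₁ := by
    rcases Nat.eq_zero_or_pos t₁ with h | h
    · exfalso; rw [h] at ht₁M
      have h2 : F 0 ≤ F 0 ⊔ F m := le_max_left _ _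
      linarith
    · exact h
  have ht₁m' : t₁ < m := by
    rcases Nat.lt_or_ge t₁ m with h | h
    · exact h
    · exfalso
      have : t₁ = m := by omega
      rw [this] at ht₁M
      have h2 : F m ≤ F 0 ⊔ F m := le_max_right _ _
      linarith
  -- least index ≥ t₁ where F drops from M
  have hex2 : ∃ t, t₁ ≤ t ∧ t ≤ m ∧ F t ≠ M := ⟨m, by omega, le_refl _, by
    intro h
    have h2 : F m ≤ F 0 ⊔ F m := le_max_right _ _
    linarith⟩
  set t₂ := Nat.find hex2 with ht₂def
  obtain ⟨ht₂1, ht₂m, ht₂M⟩ := Nat.find_spec hex2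
  rw [← ht₂def] at ht₂1 ht₂m ht₂M
  have ht₂min : ∀ t, t < t₂ → t₁ ≤ t → t ≤ m → F t = M := by
    intro t ht h1 h2
    have := Nat.find_min hex2 ht
    tauto
  have ht₁t₂ : t₁ < t₂ := by
    rcases Nat.lt_or_ge t₁ t₂ with h | h
    · exact h
    · exfalso; exact ht₂M (by
        have : t₂ = t₁ := by omega
        rw [this]; exact ht₁M)
  -- the point at the top is constant on [t₁, t₂ - 1]
  have hconstpt : ∀ t, t₁ ≤ t → t < t₂ - 1 → ∀ j, v t j = v (t + 1) j := by
    intro t h1 h2 j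
    obtain ⟨κ, hk1, hk2⟩ := hg.1 t (by omega)
    have hFt : F t = M := ht₂min t (by omega) h1 (by omega)
    have hFt1 : F (t + 1) = M := ht₂min (t + 1) (by omega) (by omega) (by omega)
    have habs : |v t κ - P κ| = |v (t + 1) κ - P κ| := by
      have hsplit := sum_split (f := fun j => |v t j - P j|)
        (g := fun j => |v (t + 1) j - P j|) (κ := κ)
        (fun j hj => show |v t j - P j| = |v (t + 1) j - P j| by
          rw [eq_of_mem_Lb hk1 hk2 hj])
      have : F t = F (t + 1) := by rw [hFt, hFt1]
      linarith [hsplit]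
    have hκ : v t κ = v (t + 1) κ :=
      same_side_abs_inj (hside t (by omega) κ) (hside (t + 1) (by omega) κ) habs
    rcases eq_or_ne j κ with rfl | hj
    · exact hκ
    · exact eq_of_mem_Lb hk1 hk2 hj
  have hw : ∀ j, v t₁ j = v (t₂ - 1) j := fun j =>
    walk_const (t₂ - 1) t₁ (by omega) (fun t h1 h2 => hconstpt t h1 h2 j)
  -- the rising step into t₁
  obtain ⟨κ₁, hk11, hk12⟩ := hg.1 (t₁ - 1) (by omega)
  rw [(by omega : t₁ - 1 + 1 = t₁)] at hk12
  have hF1lt : F (t₁ - 1) < F t₁ := by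
    rw [ht₁M]
    exact lt_of_le_of_ne (hle (t₁ - 1) (by omega)) (ht₁min (t₁ - 1) (by omega) (by omega))
  have hsplit1 := sum_split (f := fun j => |v (t₁ - 1) j - P j|)
    (g := fun j => |v t₁ j - P j|) (κ := κ₁)
    (fun j hj => show |v (t₁ - 1) j - P j| = |v t₁ j - P j| by
      rw [eq_of_mem_Lb hk11 hk12 hj])
  have habs1 : |v (t₁ - 1) κ₁ - P κ₁| < |v t₁ κ₁ - P κ₁| := by linarith [hsplit1, hF1lt]
  have hPκ₁ : P κ₁ ≠ v t₁ κ₁ := by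
    intro h
    rw [← h, sub_self, abs_zero] at habs1
    exact absurd habs1 (abs_nonneg _).not_gt
  have hch1 : v (t₁ - 1) κ₁ ≠ v t₁ κ₁ := fun h => by rw [h] at habs1; exact lt_irrefl _ habs1
  -- the falling step out of t₂ - 1
  obtain ⟨κ₂, hk21, hk22⟩ := hg.1 (t₂ - 1) (by omega)
  rw [(by omega : t₂ - 1 + 1 = t₂)] at hk22
  have hF2 : F (t₂ - 1) = M := ht₂min (t₂ - 1) (by omega) (by omega) (by omega)
  have hF2lt : F t₂ < F (t₂ - 1) := by
    rw [hF2]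
    exact lt_of_le_of_ne (hle t₂ ht₂m) ht₂M
  have hsplit2 := sum_split (f := fun j => |v (t₂ - 1) j - P j|)
    (g := fun j => |v t₂ j - P j|) (κ := κ₂)
    (fun j hj => show |v (t₂ - 1) j - P j| = |v t₂ j - P j| by
      rw [eq_of_mem_Lb hk21 hk22 hj])
  have habs2 : |v t₂ κ₂ - P κ₂| < |v (t₂ - 1) κ₂ - P κ₂| := by linarith [hsplit2, hF2lt]
  have hPκ₂ : P κ₂ ≠ v (t₂ - 1) κ₂ := by
    intro h
    rw [← h, sub_self, abs_zero] at habs2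
    exact absurd habs2 (abs_nonneg _).not_gt
  have hch2 : v (t₂ - 1) κ₂ ≠ v t₂ κ₂ := fun h => by rw [h] at habs2; exact lt_irrefl _ habs2
  -- the two step coordinates are distinct
  have hκne : κ₁ ≠ κ₂ := by
    rintro rfl
    have := hg.2 κ₁ (t₁ - 1) (t₂ - 1) (by omega) (by omega)
      (by rw [(by omega : t₁ - 1 + 1 = t₁)]; exact hch1)
      (by rw [(by omega : t₂ - 1 + 1 = t₂)]; exact hch2)
    omega
  -- conclude with np
  have hwκ₁ : v t₁ ∈ Lb c κ₁ := hk12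
  have hwκ₂ : v t₁ ∈ Lb c κ₂ := by
    have : v t₁ = v (t₂ - 1) := funext hw
    rw [this]; exact hk21
  rcases np hconn hP hκne hwκ₁ hwκ₂ with h | h
  · exact hPκ₁ h
  · rw [hw κ₂] at h; exact hPκ₂ h

lemma real_btw {a b y : ℝ} (h1 : a ⊓ b ≤ y) (h2 : y ≤ a ⊔ b) :
    |y - a| + |y - b| = |a - b| := by
  rcases le_total a b with h | h
  · rw [inf_eq_left.2 h] at h1
    rw [sup_eq_right.2 h] at h2
    rw [abs_of_nonneg (by linarith), abs_of_nonpos (by linarith),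
      abs_of_nonpos (by linarith)]
    ring
  · rw [inf_eq_right.2 h] at h1
    rw [sup_eq_left.2 h] at h2
    rw [abs_of_nonpos (by linarith), abs_of_nonneg (by linarith),
      abs_of_nonneg (by linarith)]
    ring

lemma bracket {a b c s : ℝ} (h1 : a ⊓ c ≤ s) (h2 : s ≤ a ⊔ c)
    (h3 : ¬(b ⊓ c ≤ s ∧ s ≤ b ⊔ c)) : a ⊓ b ≤ s ∧ s ≤ a ⊔ b := by
  by_contra hcon
  rw [not_and_or] at hcon
  rcases hcon with h | h
  · push_neg at h
    have hsa : s < a := lt_of_lt_of_le h inf_le_left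
    have hsb : s < b := lt_of_lt_of_le h inf_le_right
    have hcs : c ≤ s := by
      rcases inf_le_iff.1 h1 with h' | h'
      · linarith
      · exact h'
    exact h3 ⟨le_trans inf_le_right hcs, le_trans (le_of_lt hsb) le_sup_left⟩
  · push_neg at h
    have hsa : a < s := lt_of_le_of_lt le_sup_left h
    have hsb : b < s := lt_of_le_of_lt le_sup_right h
    have hcs : s ≤ c := by
      rcases le_sup_iff.1 h2 with h' | h'
      · linarith
      · exact h'
    exact h3 ⟨le_trans inf_le_left (le_of_lt hsb), le_trans hcs le_sup_right⟩

lemma discrete_ivt (F : ℕ → ℝ) : ∀ m, 1 ≤ m → ∀ s, F 0 ⊓ F m ≤ s → s ≤ F 0 ⊔ F m →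
    ∃ t, t < m ∧ F t ⊓ F (t + 1) ≤ s ∧ s ≤ F t ⊔ F (t + 1) := by
  intro m
  induction m with
  | zero => omega
  | succ k ih =>
    intro hk s h1 h2
    rcases Nat.eq_zero_or_pos k with rfl | hkpos
    · exact ⟨0, by omega, h1, h2⟩
    · by_cases hbr : F k ⊓ F (k + 1) ≤ s ∧ s ≤ F k ⊔ F (k + 1)
      · exact ⟨k, by omega, hbr.1, hbr.2⟩
      · obtain ⟨hb1, hb2⟩ := bracket h1 h2 hbr
        obtain ⟨t, ht, h3, h4⟩ := ih hkpos s hb1 hb2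
        exact ⟨t, by omega, h3, h4⟩

/-- The key pointwise existence-and-uniqueness result. -/
theorem exists_unique_point (hconn : IsConnected (Tb c))
    {p q : Fin n → ℝ} (hp : p ∈ Tb c) (hq : q ∈ Tb c)
    {s : ℝ} (hs0 : 0 ≤ s) (hs1 : s ≤ ∑ j, |p j - q j|) :
    ∃! y : Fin n → ℝ, (y ∈ Tb c ∧ ∀ j, y j ∈ Set.Icc (p j ⊓ q j) (p j ⊔ q j)) ∧
      (∑ j, |y j - p j|) = s := by
  classical
  have hbox_p : ∀ j, p j ∈ Set.Icc (p j ⊓ q j) (p j ⊔ q j) :=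
    fun j => ⟨inf_le_left, le_sup_left⟩
  have hbox_q : ∀ j, q j ∈ Set.Icc (p j ⊓ q j) (p j ⊔ q j) :=
    fun j => ⟨inf_le_right, le_sup_right⟩
  -- existence
  have hex : ∃ y : Fin n → ℝ, (y ∈ Tb c ∧ ∀ j, y j ∈ Set.Icc (p j ⊓ q j) (p j ⊔ q j)) ∧
      (∑ j, |y j - p j|) = s := by
    obtain ⟨m, v, hg, h0, hm, hm1⟩ := exists_goodWalk hconn hp hq
    have hside : ∀ t, t ≤ m → ∀ j, v t j ∈ Set.Icc (p j ⊓ q j) (p j ⊔ q j) := by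
      intro t ht j
      rcases goodWalk_coords hg ht j with h | h
      · rw [h, h0]; exact hbox_p j
      · rw [h, hm]; exact hbox_q j
    set F : ℕ → ℝ := fun t => ∑ j, |v t j - p j| with hF
    have hF0 : F 0 = 0 := by simp [hF, h0]
    have hFm : F m = ∑ j, |p j - q j| := by
      simp only [hF, hm]
      exact Finset.sum_congr rfl fun j _ => abs_sub_comm _ _
    obtain ⟨t, htm, hbr1, hbr2⟩ := discrete_ivt F m hm1 s
      (by rw [hF0, hFm]; exact le_trans inf_le_left hs0)
      (by rw [hF0, hFm]; exact le_trans hs1 le_sup_right)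
    obtain ⟨κ, hk1, hk2⟩ := hg.1 t htm
    set α := v t κ with hα
    set β := v (t + 1) κ with hβ
    have hsplit := sum_split (f := fun j => |v t j - p j|)
      (g := fun j => |v (t + 1) j - p j|) (κ := κ)
      (fun j hj => show |v t j - p j| = |v (t + 1) j - p j| by
        rw [eq_of_mem_Lb hk1 hk2 hj])
    set A := F t - |α - p κ| with hA
    have hFt : F t = A + |α - p κ| := by rw [hA]; ring
    have hFt1 : F (t + 1) = A + |β - p κ| := by
      have h' : F (t + 1) - |β - p κ| = A := hsplit.symm
      linarith
    set τ := s - A with hτ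
    have hτ1 : |α - p κ| ⊓ |β - p κ| ≤ τ := by
      rw [hFt, hFt1] at hbr1
      rcases inf_le_iff.1 hbr1 with h | h
      · exact le_trans inf_le_left (by rw [hτ]; linarith)
      · exact le_trans inf_le_right (by rw [hτ]; linarith)
    have hτ2 : τ ≤ |α - p κ| ⊔ |β - p κ| := by
      rw [hFt, hFt1] at hbr2
      rcases le_sup_iff.1 hbr2 with h | h
      · exact le_trans (by rw [hτ]; linarith) le_sup_left
      · exact le_trans (by rw [hτ]; linarith) le_sup_right
    have hτ0 : 0 ≤ τ := le_trans (le_inf (abs_nonneg _) (abs_nonneg _)) hτ1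
    have hα01 : α ∈ Set.Icc (0:ℝ) 1 := hk1.2
    have hβ01 : β ∈ Set.Icc (0:ℝ) 1 := hk2.2
    have hαbox := hside t (by omega) κ
    have hβbox := hside (t + 1) (by omega) κ
    -- choose the κ-th coordinate
    obtain ⟨ξ, hξαβ1, hξαβ2, hξτ⟩ :
        ∃ ξ : ℝ, α ⊓ β ≤ ξ ∧ ξ ≤ α ⊔ β ∧ |ξ - p κ| = τ := by
      rcases le_total (p κ) (q κ) with h | h
      · have hα' : p κ ≤ α := le_trans (by rw [← inf_eq_left.2 h]; exact hαbox.1) (le_refl _)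
        have hβ' : p κ ≤ β := le_trans (by rw [← inf_eq_left.2 h]; exact hβbox.1) (le_refl _)
        refine ⟨p κ + τ, ?_, ?_, by rw [abs_of_nonneg (by linarith)]; ring⟩
        · rw [abs_of_nonneg (by linarith), abs_of_nonneg (by linarith)] at hτ1
          rcases inf_le_iff.1 hτ1 with h' | h'
          · exact le_trans inf_le_left (by linarith)
          · exact le_trans inf_le_right (by linarith)
        · rw [abs_of_nonneg (by linarith), abs_of_nonneg (by linarith)] at hτ2
          rcases le_sup_iff.1 hτ2 with h' | h'
          · exact le_trans (by linarith) le_sup_left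
          · exact le_trans (by linarith) le_sup_right
      · have hα' : α ≤ p κ := le_trans (le_refl _) (by rw [← sup_eq_left.2 h]; exact hαbox.2)
        have hβ' : β ≤ p κ := le_trans (le_refl _) (by rw [← sup_eq_left.2 h]; exact hβbox.2)
        refine ⟨p κ - τ, ?_, ?_, by rw [abs_of_nonpos (by linarith)]; ring⟩
        · rw [abs_of_nonpos (by linarith), abs_of_nonpos (by linarith)] at hτ2
          rcases le_sup_iff.1 hτ2 with h' | h'
          · exact le_trans inf_le_left (by linarith)
          · exact le_trans inf_le_right (by linarith)
        · rw [abs_of_nonpos (by linarith), abs_of_nonpos (by linarith)] at hτ1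
          rcases inf_le_iff.1 hτ1 with h' | h'
          · exact le_trans (by linarith) le_sup_left
          · exact le_trans (by linarith) le_sup_right
    set y : Fin n → ℝ := Function.update (v t) κ ξ with hy
    have hyj : ∀ j, j ≠ κ → y j = v t j := fun j hj => Function.update_of_ne hj _ _
    have hyκ : y κ = ξ := Function.update_self _ _ _
    refine ⟨y, ⟨?_, ?_⟩, ?_⟩
    · refine Set.mem_iUnion.2 ⟨κ, ⟨fun j hj => ?_, ?_⟩⟩
      · rw [hyj j hj]; exact hk1.1 j hj
      · rw [hyκ]
        exact ⟨le_trans (le_inf hα01.1 hβ01.1) hξαβ1,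
          le_trans hξαβ2 (sup_le hα01.2 hβ01.2)⟩
    · intro j
      rcases eq_or_ne j κ with rfl | hj
      · rw [hyκ]
        exact ⟨le_trans (le_inf hαbox.1 hβbox.1) hξαβ1,
          le_trans hξαβ2 (sup_le hαbox.2 hβbox.2)⟩
      · rw [hyj j hj]; exact hside t (by omega) j
    · have hsplit' := sum_split (f := fun j => |y j - p j|)
        (g := fun j => |v t j - p j|) (κ := κ)
        (fun j hj => show |y j - p j| = |v t j - p j| by rw [hyj j hj])
      simp only [hyκ, hξτ] at hsplit'
      have hA' : A = (∑ x : Fin n, |v t x - p x|) - |v t κ - p κ| := rfl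
      linarith [hsplit', hA', hτ]
  -- uniqueness
  obtain ⟨y, hy⟩ := hex
  refine ⟨y, hy, ?_⟩
  rintro z ⟨⟨hzT, hzbox⟩, hzs⟩
  obtain ⟨⟨hyT, hybox⟩, hys⟩ := hy
  -- walk from z to y
  obtain ⟨m, v, hg, h0, hm, hm1⟩ := exists_goodWalk hconn hzT hyT
  have hside : ∀ t, t ≤ m → ∀ j, v t j ∈ Set.Icc (p j ⊓ q j) (p j ⊔ q j) := by
    intro t ht j
    rcases goodWalk_coords hg ht j with h | h
    · rw [h, h0]; exact hzbox j
    · rw [h, hm]; exact hybox j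
  have hside' : ∀ t, t ≤ m → ∀ j, v t j ∈ Set.Icc (q j ⊓ p j) (q j ⊔ p j) := by
    intro t ht j
    rw [inf_comm, sup_comm]
    exact hside t ht j
  set D := ∑ j, |p j - q j| with hD
  have hFG : ∀ t, t ≤ m →
      (∑ j, |v t j - p j|) + (∑ j, |v t j - q j|) = D := by
    intro t ht
    rw [hD, ← Finset.sum_add_distrib]
    exact Finset.sum_congr rfl fun j _ => real_btw (hside t ht j).1 (hside t ht j).2
  have hGz : (∑ j, |z j - q j|) = D - s := by
    have := hFG 0 (by omega)
    rw [h0] at this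
    linarith [this, hzs]
  have hGy : (∑ j, |y j - q j|) = D - s := by
    have := hFG m (le_refl _)
    rw [hm] at this
    linarith [this, hys]
  have hFle : ∀ t, t ≤ m → (∑ j, |v t j - p j|) ≤ s := by
    intro t ht
    have := noPeak hconn hp hg hside t ht
    rw [h0, hm, hzs, hys] at this
    simpa using this
  have hGle : ∀ t, t ≤ m → (∑ j, |v t j - q j|) ≤ D - s := by
    intro t ht
    have := noPeak hconn hq hg hside' t ht
    rw [h0, hm, hGz, hGy] at this
    simpa using this
  have hFeq : ∀ t, t ≤ m → (∑ j, |v t j - p j|) = s := by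
    intro t ht
    have h1 := hFle t ht
    have h2 := hGle t ht
    have h3 := hFG t ht
    linarith
  -- all steps are degenerate
  have hsteps : ∀ t, t < m → ∀ j, v t j = v (t + 1) j := by
    intro t ht j
    obtain ⟨κ, hk1, hk2⟩ := hg.1 t ht
    have hsplit := sum_split (f := fun j => |v t j - p j|)
      (g := fun j => |v (t + 1) j - p j|) (κ := κ)
      (fun j hj => show |v t j - p j| = |v (t + 1) j - p j| by
        rw [eq_of_mem_Lb hk1 hk2 hj])
    have habs : |v t κ - p κ| = |v (t + 1) κ - p κ| := by
      have e1 := hFeq t (by omega)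
      have e2 := hFeq (t + 1) (by omega)
      linarith [hsplit]
    have hκ : v t κ = v (t + 1) κ :=
      same_side_abs_inj (hside t (by omega) κ) (hside (t + 1) (by omega) κ) habs
    rcases eq_or_ne j κ with rfl | hj
    · exact hκ
    · exact eq_of_mem_Lb hk1 hk2 hj
  funext j
  rw [← congrFun hm j, ← congrFun h0 j]
  exact walk_const m 0 (Nat.zero_le _) fun t _ ht => hsteps t ht j

lemma real_btw' {a b y : ℝ} (h : |y - a| + |y - b| = |a - b|) :
    y ∈ Set.Icc (a ⊓ b) (a ⊔ b) := by
  have h3 := le_abs_self (y - a); have h4 := neg_abs_le (y - a)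
  have h5 := le_abs_self (y - b); have h6 := neg_abs_le (y - b)
  rcases le_total a b with hab | hab
  · rw [abs_of_nonpos (by linarith : a - b ≤ 0)] at h
    constructor
    · rw [inf_eq_left.2 hab]; linarith
    · rw [sup_eq_right.2 hab]; linarith
  · rw [abs_of_nonneg (by linarith : 0 ≤ a - b)] at h
    constructor
    · rw [inf_eq_right.2 hab]; linarith
    · rw [sup_eq_left.2 hab]; linarith

end OrthoSeg

open unitInterval

/-- A configuration of orthogonal line segments over a space `A` is fibrewise convex
(hence fibrewise contractible), provided each fibre is connected. -/
theorem orthogonal_segments_fibrewise_convex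
    {A : Type} [TopologicalSpace A] (n : ℕ) (hn : 1 ≤ n)
    (x : Fin n → Fin n → A → ℝ) (hx : ∀ i j, Continuous (x i j))
    (L : A → Fin n → Set (Fin n → ℝ))
    (hL : ∀ a i, L a i =
      {y | (∀ j, j ≠ i → y j = x i j a) ∧ y i ∈ Set.Icc (0 : ℝ) 1})
    (Q : A → Set (Fin n → ℝ)) (hQ : ∀ a, Q a = ⋃ i, L a i)
    (hconn : ∀ a, IsConnected (Q a)) :
    ∃ h : {t : A × (Fin n → ℝ) × (Fin n → ℝ) // t.2.1 ∈ Q t.1 ∧ t.2.2 ∈ Q t.1} × I →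
        (Fin n → ℝ),
      Continuous h ∧
      (∀ t s, h (t, s) ∈ Q t.1.1) ∧
      (∀ t, h (t, 0) = t.1.2.1) ∧
      (∀ t, h (t, 1) = t.1.2.2) := by
  classical
  set ca : A → Fin n → Fin n → ℝ := fun a i j => x i j a with hca
  have hQT : ∀ a, Q a = OrthoSeg.Tb (ca a) := by
    intro a
    rw [hQ a]
    exact Set.iUnion_congr fun i => by rw [hL a i]; rfl
  have hconn' : ∀ a, IsConnected (OrthoSeg.Tb (ca a)) := fun a => hQT a ▸ hconn a
  set X := {t : A × (Fin n → ℝ) × (Fin n → ℝ) // t.2.1 ∈ Q t.1 ∧ t.2.2 ∈ Q t.1} with hX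
  set pa : X × I → A := fun w => w.1.1.1 with hpa
  set pp : X × I → (Fin n → ℝ) := fun w => w.1.1.2.1 with hpp
  set pq : X × I → (Fin n → ℝ) := fun w => w.1.1.2.2 with hpq
  set ps : X × I → ℝ := fun w => (w.2 : ℝ) with hps
  have key : ∀ w : X × I, ∃! y : Fin n → ℝ,
      (y ∈ OrthoSeg.Tb (ca (pa w)) ∧
        ∀ j, y j ∈ Set.Icc (pp w j ⊓ pq w j) (pp w j ⊔ pq w j)) ∧
      (∑ j, |y j - pp w j|) = ps w * ∑ j, |pp w j - pq w j| := by
    intro w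
    have hD0 : (0:ℝ) ≤ ∑ j, |pp w j - pq w j| :=
      Finset.sum_nonneg fun j _ => abs_nonneg _
    refine OrthoSeg.exists_unique_point (hconn' (pa w)) ?_ ?_ ?_ ?_
    · rw [← hQT]; exact w.1.2.1
    · rw [← hQT]; exact w.1.2.2
    · exact mul_nonneg w.2.2.1 hD0
    · calc ps w * ∑ j, |pp w j - pq w j| ≤ 1 * ∑ j, |pp w j - pq w j| :=
            mul_le_mul_of_nonneg_right w.2.2.2 hD0
        _ = ∑ j, |pp w j - pq w j| := one_mul _
  choose h hspec huniq using key
  have hmem : ∀ w : X × I, h w ∈ OrthoSeg.Tb (ca (pa w)) := fun w => (hspec w).1.1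
  have hbox : ∀ w : X × I, ∀ j,
      h w j ∈ Set.Icc (pp w j ⊓ pq w j) (pp w j ⊔ pq w j) := fun w => (hspec w).1.2
  have hsum : ∀ w : X × I,
      (∑ j, |h w j - pp w j|) = ps w * ∑ j, |pp w j - pq w j| := fun w => (hspec w).2
  refine ⟨h, ?_, ?_, ?_, ?_⟩
  · -- continuity
    rw [continuous_iff_continuousAt]
    intro z₀
    rw [ContinuousAt, Filter.tendsto_iff_ultrafilter]
    intro 𝒰 h𝒰
    have hpa_cont : Continuous pa := (continuous_subtype_val.comp continuous_fst).fst
    have hpp_cont : Continuous pp := (continuous_subtype_val.comp continuous_fst).snd.fst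
    have hpq_cont : Continuous pq := (continuous_subtype_val.comp continuous_fst).snd.snd
    have hps_cont : Continuous ps := continuous_subtype_val.comp continuous_snd
    set B : ℝ := 1 + ∑ i, ∑ j, |x i j (pa z₀)| with hB
    have hBnn : ∀ (i _j : Fin n), (0:ℝ) ≤ ∑ j', |x i j' (pa z₀)| :=
      fun i _j => Finset.sum_nonneg fun _ _ => abs_nonneg _
    have hB1 : (1:ℝ) ≤ B := by
      rw [hB]
      have : (0:ℝ) ≤ ∑ i, ∑ j, |x i j (pa z₀)| :=
        Finset.sum_nonneg fun i _ => hBnn i i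
      linarith
    have hBx : ∀ i j, |x i j (pa z₀)| < B := by
      intro i j
      have h1 : |x i j (pa z₀)| ≤ ∑ j', |x i j' (pa z₀)| :=
        Finset.single_le_sum (f := fun j' => |x i j' (pa z₀)|)
          (fun _ _ => abs_nonneg _) (Finset.mem_univ j)
      have h2 : (∑ j', |x i j' (pa z₀)|) ≤ ∑ i', ∑ j', |x i' j' (pa z₀)| :=
        Finset.single_le_sum (f := fun i' => ∑ j', |x i' j' (pa z₀)|)
          (fun i' _ => hBnn i' i') (Finset.mem_univ i)
      rw [hB]; linarith
    have hU : ∀ᶠ z in (𝒰 : Filter (X × I)), ∀ i j, |x i j (pa z)| < B := by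
      rw [Filter.eventually_all]
      intro i
      rw [Filter.eventually_all]
      intro j
      have hcont : Continuous fun z : X × I => |x i j (pa z)| :=
        ((hx i j).comp hpa_cont).abs
      have : ∀ᶠ z in 𝓝 z₀, |x i j (pa z)| < B :=
        (hcont.continuousAt (x := z₀)).eventually_lt continuousAt_const (hBx i j)
      exact this.filter_mono h𝒰
    set K : Set (Fin n → ℝ) := Set.univ.pi (fun _ : Fin n => Set.Icc (-B) B) with hK
    have hKcomp : IsCompact K := isCompact_univ_pi fun _ => isCompact_Icc
    have hKmem : ∀ᶠ z in (𝒰 : Filter (X × I)), h z ∈ K := by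
      refine hU.mono fun z hz => ?_
      intro j _
      obtain ⟨i, hi⟩ := Set.mem_iUnion.1 (hmem z)
      rcases eq_or_ne j i with rfl | hj
      · exact ⟨le_trans (by linarith) hi.2.1, le_trans hi.2.2 hB1⟩
      · rw [hi.1 j hj]
        have := hz i j
        rw [abs_lt] at this
        exact ⟨le_of_lt this.1, le_of_lt this.2⟩
    obtain ⟨y, hyK, hy𝒰⟩ := hKcomp.ultrafilter_le_nhds (𝒰.map h)
      (by rwa [Filter.le_principal_iff, Ultrafilter.mem_coe, Ultrafilter.mem_map])
    have htend : Filter.Tendsto h (𝒰 : Filter (X × I)) (𝓝 y) := hy𝒰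
    -- coordinate limits
    have htendj : ∀ j, Filter.Tendsto (fun z => h z j) (𝒰 : Filter (X × I)) (𝓝 (y j)) :=
      fun j => ((continuous_apply j).tendsto y).comp htend
    have htendpa : Filter.Tendsto pa (𝒰 : Filter (X × I)) (𝓝 (pa z₀)) :=
      (hpa_cont.tendsto z₀).comp h𝒰
    have htendpp : ∀ j, Filter.Tendsto (fun z => pp z j) (𝒰 : Filter (X × I))
        (𝓝 (pp z₀ j)) := fun j => ((continuous_apply j).tendsto _).comp
          ((hpp_cont.tendsto z₀).comp h𝒰)
    have htendpq : ∀ j, Filter.Tendsto (fun z => pq z j) (𝒰 : Filter (X × I))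
        (𝓝 (pq z₀ j)) := fun j => ((continuous_apply j).tendsto _).comp
          ((hpq_cont.tendsto z₀).comp h𝒰)
    have htendps : Filter.Tendsto ps (𝒰 : Filter (X × I)) (𝓝 (ps z₀)) :=
      (hps_cont.tendsto z₀).comp h𝒰
    -- y satisfies the three conditions at z₀
    have hyT : y ∈ OrthoSeg.Tb (ca (pa z₀)) := by
      -- pick a fixed segment index valid 𝒰-a.e.
      have hexists : ∃ i, {z : X × I | h z ∈ OrthoSeg.Lb (ca (pa z)) i} ∈ 𝒰 := by
        by_contra hcon
        push_neg at hcon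
        have hcompl : ∀ i, {z : X × I | h z ∈ OrthoSeg.Lb (ca (pa z)) i}ᶜ ∈ 𝒰 :=
          fun i => (Ultrafilter.compl_mem_iff_notMem.2 (hcon i))
      
        have hint : (⋂ i, {z : X × I | h z ∈ OrthoSeg.Lb (ca (pa z)) i}ᶜ) ∈ 𝒰 :=
          (Filter.iInter_mem).2 hcompl
        have hempty : (⋂ i, {z : X × I | h z ∈ OrthoSeg.Lb (ca (pa z)) i}ᶜ) = ∅ := by
          ext z
          simp only [Set.mem_iInter, Set.mem_compl_iff, Set.mem_empty_iff_false, iff_false]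
          push_neg
          obtain ⟨i, hi⟩ :=
            Set.mem_iUnion.1 (show h z ∈ ⋃ i, OrthoSeg.Lb (ca (pa z)) i from hmem z)
          exact ⟨i, hi⟩
        rw [hempty] at hint
        exact (Ultrafilter.neBot 𝒰).ne (Filter.empty_mem_iff_bot.1 hint)
      obtain ⟨i, hi⟩ := hexists
      have hae : ∀ᶠ z in (𝒰 : Filter (X × I)),
          (∀ j, j ≠ i → h z j = x i j (pa z)) ∧ h z i ∈ Set.Icc (0:ℝ) 1 := hi
      refine Set.mem_iUnion.2 ⟨i, ⟨fun j hj => ?_, ?_⟩⟩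
      · refine tendsto_nhds_unique (htendj j) ?_
        have : Filter.Tendsto (fun z => x i j (pa z)) (𝒰 : Filter (X × I))
            (𝓝 (x i j (pa z₀))) := ((hx i j).tendsto _).comp htendpa
        exact this.congr' (hae.mono fun z hz => (hz.1 j hj).symm)
      · exact IsClosed.mem_of_tendsto isClosed_Icc (htendj i)
          (hae.mono fun z hz => hz.2)
    have hybox : ∀ j, y j ∈ Set.Icc (pp z₀ j ⊓ pq z₀ j) (pp z₀ j ⊔ pq z₀ j) := by
      intro j
      refine OrthoSeg.real_btw' (a := pp z₀ j) (b := pq z₀ j) ?_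
      have t1 : Filter.Tendsto (fun z => |h z j - pp z j| + |h z j - pq z j|)
          (𝒰 : Filter (X × I)) (𝓝 (|y j - pp z₀ j| + |y j - pq z₀ j|)) :=
        (((htendj j).sub (htendpp j)).abs.add ((htendj j).sub (htendpq j)).abs)
      have t2 : Filter.Tendsto (fun z => |pp z j - pq z j|)
          (𝒰 : Filter (X × I)) (𝓝 (|pp z₀ j - pq z₀ j|)) :=
        ((htendpp j).sub (htendpq j)).abs
      refine tendsto_nhds_unique t1 (t2.congr' ?_)
      refine Filter.Eventually.of_forall fun z => ?_
      exact (OrthoSeg.real_btw (hbox z j).1 (hbox z j).2).symm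
    have hysum : (∑ j, |y j - pp z₀ j|) = ps z₀ * ∑ j, |pp z₀ j - pq z₀ j| := by
      have t1 : Filter.Tendsto (fun z => ∑ j, |h z j - pp z j|)
          (𝒰 : Filter (X × I)) (𝓝 (∑ j, |y j - pp z₀ j|)) :=
        tendsto_finset_sum _ fun j _ => ((htendj j).sub (htendpp j)).abs
      have t2 : Filter.Tendsto (fun z => ps z * ∑ j, |pp z j - pq z j|)
          (𝒰 : Filter (X × I)) (𝓝 (ps z₀ * ∑ j, |pp z₀ j - pq z₀ j|)) :=
        htendps.mul (tendsto_finset_sum _ fun j _ => ((htendpp j).sub (htendpq j)).abs)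
      refine tendsto_nhds_unique t1 (t2.congr' ?_)
      exact Filter.Eventually.of_forall fun z => (hsum z).symm
    have : y = h z₀ := huniq z₀ y ⟨⟨hyT, hybox⟩, hysum⟩
    rwa [this] at htend
  · -- membership in the fibre
    intro t s
    have := hmem (t, s)
    rw [hQT]
    exact this
  · -- value at 0
    intro t
    refine (huniq (t, 0) (pp (t, 0)) ⟨⟨?_, ?_⟩, ?_⟩).symm
    · rw [← hQT]; exact t.2.1
    · exact fun j => ⟨inf_le_left, le_sup_left⟩
    · simp [hps]
  · -- value at 1
    intro t
    refine (huniq (t, 1) (pq (t, 1)) ⟨⟨?_, ?_⟩, ?_⟩).symm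
    · rw [← hQT]; exact t.2.2
    · exact fun j => ⟨inf_le_right, le_sup_right⟩
    · simp only [hps]
      rw [Set.Icc.coe_one, one_mul]
      exact Finset.sum_congr rfl fun j _ => abs_sub_comm _ _
end

section
/- If Q = L_1 ∪ ⋯ ∪ L_n is connected, then Q is a contractible topological space. -/
open Set

section Aux

variable {n : ℕ} {x : Fin n → Fin n → ℝ} {L : Fin n → Set (Fin n → ℝ)}

lemma seg_mem_iff (hL : ∀ i, L i = {y | (∀ j, j ≠ i → y j = x i j) ∧ y i ∈ Set.Icc (0 : ℝ) 1})
    (i : Fin n) (y : Fin n → ℝ) :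
    y ∈ L i ↔ (∀ j, j ≠ i → y j = x i j) ∧ y i ∈ Set.Icc (0 : ℝ) 1 := by
  rw [hL i]; rfl

lemma seg_nonempty (hL : ∀ i, L i = {y | (∀ j, j ≠ i → y j = x i j) ∧ y i ∈ Set.Icc (0 : ℝ) 1})
    (i : Fin n) : (L i).Nonempty := by
  classical
  refine ⟨fun j => if j = i then 0 else x i j, ?_⟩
  rw [seg_mem_iff hL]
  refine ⟨fun j hj => by simp [hj], by simp⟩

lemma seg_convex (hL : ∀ i, L i = {y | (∀ j, j ≠ i → y j = x i j) ∧ y i ∈ Set.Icc (0 : ℝ) 1})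
    (i : Fin n) : Convex ℝ (L i) := by
  intro y hy z hz a b ha hb hab
  rw [seg_mem_iff hL] at hy hz ⊢
  constructor
  · intro j hj
    have h1 := hy.1 j hj; have h2 := hz.1 j hj
    simp only [Pi.add_apply, Pi.smul_apply, smul_eq_mul, h1, h2]
    linear_combination (x i j) * hab
  · have h1 := hy.2; have h2 := hz.2
    simp only [Set.mem_Icc] at h1 h2 ⊢
    constructor
    · have := mul_nonneg ha h1.1; have := mul_nonneg hb h2.1
      simp only [Pi.add_apply, Pi.smul_apply, smul_eq_mul]; nlinarith
    · simp only [Pi.add_apply, Pi.smul_apply, smul_eq_mul]; nlinarith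

lemma seg_connected (hL : ∀ i, L i = {y | (∀ j, j ≠ i → y j = x i j) ∧ y i ∈ Set.Icc (0 : ℝ) 1})
    (i : Fin n) : IsConnected (L i) :=
  ⟨seg_nonempty hL i, (seg_convex hL i).isPreconnected⟩

lemma seg_closed (hL : ∀ i, L i = {y | (∀ j, j ≠ i → y j = x i j) ∧ y i ∈ Set.Icc (0 : ℝ) 1})
    (i : Fin n) : IsClosed (L i) := by
  have : L i = (⋂ j ∈ {j | j ≠ i}, {y : Fin n → ℝ | y j = x i j}) ∩
      ((fun y : Fin n → ℝ => y i) ⁻¹' Set.Icc (0:ℝ) 1) := by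
    ext y
    simp [seg_mem_iff hL, Set.mem_iInter]
  rw [this]
  refine IsClosed.inter ?_ (IsClosed.preimage (continuous_apply i) isClosed_Icc)
  exact isClosed_biInter fun j _ => isClosed_eq (continuous_apply j) continuous_const

lemma union_closed (hL : ∀ i, L i = {y | (∀ j, j ≠ i → y j = x i j) ∧ y i ∈ Set.Icc (0 : ℝ) 1})
    (S : Finset (Fin n)) : IsClosed (⋃ j ∈ S, L j) :=
  S.finite_toSet.isClosed_biUnion fun j _ => seg_closed hL j

/-- On a connected union of segments not using direction `i`, coordinate `i` is constant. -/
lemma coord_const (hL : ∀ i, L i = {y | (∀ j, j ≠ i → y j = x i j) ∧ y i ∈ Set.Icc (0 : ℝ) 1})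
    {S : Finset (Fin n)} {i : Fin n} (hi : i ∉ S)
    (hc : IsPreconnected (⋃ j ∈ S, L j)) {a b : Fin n → ℝ}
    (ha : a ∈ ⋃ j ∈ S, L j) (hb : b ∈ ⋃ j ∈ S, L j) : a i = b i := by
  classical
  set T : Set ℝ := (fun y : Fin n → ℝ => y i) '' (⋃ j ∈ S, L j) with hT
  have hTpre : IsPreconnected T := hc.image _ (continuous_apply i).continuousOn
  have hTfin : T.Finite := by
    refine (S.image (fun j => x j i)).finite_toSet.subset ?_
    rintro - ⟨y, hy, rfl⟩
    simp only [Set.mem_iUnion] at hy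
    obtain ⟨j, hjS, hyj⟩ := hy
    have hji : i ≠ j := fun h => hi (h ▸ hjS)
    have := ((seg_mem_iff hL j y).1 hyj).1 i hji
    simp only [Finset.coe_image, Set.mem_image, Finset.mem_coe]
    exact ⟨j, hjS, this.symm⟩
  by_contra hne
  have haT : a i ∈ T := ⟨a, ha, rfl⟩
  have hbT : b i ∈ T := ⟨b, hb, rfl⟩
  rcases lt_or_gt_of_ne hne with h | h
  · exact (Set.Icc_infinite h).mono (hTpre.Icc_subset haT hbT) hTfin
  · exact (Set.Icc_infinite h).mono (hTpre.Icc_subset hbT haT) hTfin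

/-- We can grow a connected subunion one segment at a time. -/
lemma grow (hL : ∀ i, L i = {y | (∀ j, j ≠ i → y j = x i j) ∧ y i ∈ Set.Icc (0 : ℝ) 1})
    {S : Finset (Fin n)} (hS : S.Nonempty) (hc : IsPreconnected (⋃ j ∈ S, L j)) :
    ∀ m, 1 ≤ m → m ≤ S.card → ∃ P : Finset (Fin n), P ⊆ S ∧ P.card = m ∧
      IsConnected (⋃ j ∈ P, L j) := by
  classical
  intro m
  induction m with
  | zero => omega
  | succ m ih =>
    intro _ hmS
    rcases Nat.eq_or_lt_of_le (Nat.one_le_iff_ne_zero.mpr (Nat.succ_ne_zero m)) with h1 | h1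
    · -- m + 1 = 1
      obtain ⟨i, hi⟩ := hS
      refine ⟨{i}, Finset.singleton_subset_iff.mpr hi, by rw [Finset.card_singleton]; omega, ?_⟩
      simpa using seg_connected hL i
    · -- m ≥ 1
      obtain ⟨P, hPS, hPcard, hPconn⟩ := ih (by omega) (by omega)
      have hPne : P ≠ S := by
        intro h; rw [h] at hPcard; omega
      -- find i ∈ S \ P with L i meeting the union over P
      have hex : ∃ i ∈ S, i ∉ P ∧ (L i ∩ ⋃ j ∈ P, L j).Nonempty := by
        by_contra hcon
        push_neg at hcon
        have hA : IsClosed (⋃ j ∈ P, L j) := union_closed hL P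
        have hB : IsClosed (⋃ j ∈ S \ P, L j) := union_closed hL (S \ P)
        have hcover : (⋃ j ∈ S, L j) ⊆ (⋃ j ∈ P, L j) ∪ ⋃ j ∈ S \ P, L j := by
          intro y hy
          simp only [Set.mem_iUnion, Set.mem_union] at hy ⊢
          obtain ⟨j, hjS, hyj⟩ := hy
          by_cases hjP : j ∈ P
          · exact Or.inl ⟨j, hjP, hyj⟩
          · exact Or.inr ⟨j, Finset.mem_sdiff.mpr ⟨hjS, hjP⟩, hyj⟩
        have hSdP : (S \ P).Nonempty := by
          obtain ⟨i, hiS, hiP⟩ := Finset.exists_of_ssubset (hPS.ssubset_of_ne hPne)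
          exact ⟨i, Finset.mem_sdiff.mpr ⟨hiS, hiP⟩⟩
        have hNA : ((⋃ j ∈ S, L j) ∩ ⋃ j ∈ P, L j).Nonempty := by
          obtain ⟨i, hiP⟩ := Finset.card_pos.mp (by omega : 0 < P.card)
          obtain ⟨y, hy⟩ := seg_nonempty hL i
          exact ⟨y, Set.mem_biUnion (hPS hiP) hy, Set.mem_biUnion hiP hy⟩
        have hNB : ((⋃ j ∈ S, L j) ∩ ⋃ j ∈ S \ P, L j).Nonempty := by
          obtain ⟨i, hi⟩ := hSdP
          obtain ⟨y, hy⟩ := seg_nonempty hL i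
          exact ⟨y, Set.mem_biUnion (Finset.mem_sdiff.mp hi).1 hy, Set.mem_biUnion hi hy⟩
        obtain ⟨y, -, hy⟩ := isPreconnected_closed_iff.mp hc _ _ hA hB hcover hNA hNB
        obtain ⟨hyA, hyB⟩ := hy
        simp only [Set.mem_iUnion] at hyB
        obtain ⟨j, hj, hyj⟩ := hyB
        rw [Finset.mem_sdiff] at hj
        exact (Set.eq_empty_iff_forall_notMem.mp (hcon j hj.1 hj.2) y) ⟨hyj, hyA⟩
      obtain ⟨i, hiS, hiP, hne⟩ := hex
      refine ⟨insert i P, Finset.insert_subset hiS hPS, by rw [Finset.card_insert_of_notMem hiP]; omega, ?_⟩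
      rw [Finset.set_biUnion_insert]
      exact IsConnected.union hne (seg_connected hL i) hPconn

/-- Main induction: any connected finite union of the segments is contractible. -/
lemma key (hL : ∀ i, L i = {y | (∀ j, j ≠ i → y j = x i j) ∧ y i ∈ Set.Icc (0 : ℝ) 1})
    (S : Finset (Fin n)) (hS : S.Nonempty) (hc : IsConnected (⋃ j ∈ S, L j)) :
    ContractibleSpace ↥(⋃ j ∈ S, L j) := by
  classical
  induction S using Finset.strongInduction with
  | _ S ih =>
  rcases Nat.lt_or_ge S.card 2 with hcard | hcard
  · -- S is a singleton
    have h1 : S.card = 1 := by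
      have := Finset.card_pos.mpr hS; omega
    obtain ⟨i, rfl⟩ := Finset.card_eq_one.mp h1
    have hset : (⋃ j ∈ ({i} : Finset (Fin n)), L j) = L i := by simp
    rw [hset]
    exact (seg_convex hL i).contractibleSpace (seg_nonempty hL i)
  · -- at least two segments: find a leaf
    obtain ⟨P, hPS, hPcard, hPconn⟩ :=
      grow hL hS hc.isPreconnected (S.card - 1) (by omega) (by omega)
    have hSdP : (S \ P).card = 1 := by
      rw [Finset.card_sdiff_of_subset hPS]; omega
    obtain ⟨i, hi⟩ := Finset.card_eq_one.mp hSdP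
    have hiS : i ∈ S := by
      have : i ∈ S \ P := hi ▸ Finset.mem_singleton_self i
      exact (Finset.mem_sdiff.mp this).1
    have hiP : i ∉ P := by
      have : i ∈ S \ P := hi ▸ Finset.mem_singleton_self i
      exact (Finset.mem_sdiff.mp this).2
    have hSins : S = insert i P := by
      apply Finset.Subset.antisymm
      · intro j hj
        by_cases hjP : j ∈ P
        · exact Finset.mem_insert_of_mem hjP
        · have : j ∈ S \ P := Finset.mem_sdiff.mpr ⟨hj, hjP⟩
          rw [hi, Finset.mem_singleton] at this
          exact this ▸ Finset.mem_insert_self i P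
      · exact Finset.insert_subset hiS hPS
    set U' : Set (Fin n → ℝ) := ⋃ j ∈ P, L j with hU'
    set US : Set (Fin n → ℝ) := ⋃ j ∈ S, L j with hUS
    have hUSeq : US = L i ∪ U' := by
      rw [hUS, hSins, Finset.set_biUnion_insert]
    have hsubU' : U' ⊆ US := biUnion_subset_biUnion_left (by exact_mod_cast hPS)
    have hsubL : L i ⊆ US := hUSeq ▸ Set.subset_union_left
    -- L i meets U'
    have hmeet : (L i ∩ U').Nonempty := by
      by_contra hcon
      rw [Set.not_nonempty_iff_eq_empty] at hcon
      have hNA : (US ∩ L i).Nonempty := by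
        obtain ⟨y, hy⟩ := seg_nonempty hL i
        exact ⟨y, hsubL hy, hy⟩
      have hNB : (US ∩ U').Nonempty := by
        obtain ⟨j, hjP⟩ := Finset.card_pos.mp (by omega : 0 < P.card)
        obtain ⟨y, hy⟩ := seg_nonempty hL j
        exact ⟨y, hsubU' (Set.mem_biUnion hjP hy), Set.mem_biUnion hjP hy⟩
      obtain ⟨y, -, hy1, hy2⟩ := isPreconnected_closed_iff.mp hc.isPreconnected _ _
        (seg_closed hL i) (union_closed hL P) (hUSeq.le) hNA hNB
      exact absurd (Set.mem_inter hy1 hy2) (by rw [hcon]; exact Set.notMem_empty y)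
    obtain ⟨p, hpL, hpU'⟩ := hmeet
    have hconst : ∀ y ∈ U', y i = p i :=
      fun y hy => coord_const hL hiP hPconn.isPreconnected hy hpU'
    -- contractibility of U'
    have hPne : P.Nonempty := Finset.card_pos.mp (by omega)
    have hPss : P ⊂ S := Finset.ssubset_iff_of_subset hPS |>.mpr ⟨i, hiS, hiP⟩
    have IH : ContractibleSpace ↥U' := ih P hPss hPne hPconn
    -- the retraction r' : US → U'
    have hmem' : ∀ y : Fin n → ℝ, y ∈ US → Function.update y i (p i) ∈ U' := by
      intro y hy
      rw [hUSeq] at hy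
      rcases hy with hy | hy
      · have : Function.update y i (p i) = p := by
          funext j
          by_cases hj : j = i
          · subst hj; simp
          · rw [Function.update_of_ne hj]
            rw [((seg_mem_iff hL i y).1 hy).1 j hj, ← ((seg_mem_iff hL i p).1 hpL).1 j hj]
        rw [this]; exact hpU'
      · have : Function.update y i (p i) = y := by
          rw [← hconst y hy, Function.update_eq_self]
        rw [this]; exact hy
    have hcontupd : Continuous (fun y : Fin n → ℝ => Function.update y i (p i)) :=
      continuous_id.update i continuous_const
    let r' : C(↥US, ↥U') :=
      ⟨fun y => ⟨Function.update (y : Fin n → ℝ) i (p i), hmem' _ y.2⟩,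
        (hcontupd.comp continuous_subtype_val).subtype_mk _⟩
    let incl : C(↥U', ↥US) := ⟨Set.inclusion hsubU', continuous_inclusion hsubU'⟩
    -- homotopy from the identity to incl ∘ r'
    have hmemH : ∀ (t : ↥unitInterval) (y : Fin n → ℝ), y ∈ US →
        Function.update y i ((1 - (t:ℝ)) * y i + (t:ℝ) * p i) ∈ US := by
      intro t y hy
      rw [hUSeq] at hy
      rcases hy with hy | hy
      · apply hsubL
        rw [seg_mem_iff hL]
        have hyi := ((seg_mem_iff hL i _).1 hy).2
        have hpi := ((seg_mem_iff hL i p).1 hpL).2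
        simp only [Set.mem_Icc] at hyi hpi
        have ht0 : (0:ℝ) ≤ (t:ℝ) := t.2.1
        have ht1 : (t:ℝ) ≤ 1 := t.2.2
        constructor
        · intro j hj
          rw [Function.update_of_ne hj]
          exact ((seg_mem_iff hL i _).1 hy).1 j hj
        · rw [Function.update_self]
          constructor
          · nlinarith
          · nlinarith
      · apply hsubU'
        have : Function.update y i ((1 - (t:ℝ)) * y i + (t:ℝ) * p i) = y := by
          have h1 : y i = p i := hconst _ hy
          have h2 : (1 - (t:ℝ)) * y i + (t:ℝ) * p i = y i := by
            rw [h1]; ring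
          rw [h2, Function.update_eq_self]
        rw [this]; exact hy
    let H : ContinuousMap.Homotopy (ContinuousMap.id ↥US) (incl.comp r') :=
      { toFun := fun q => ⟨Function.update (q.2 : Fin n → ℝ) i
            ((1 - (q.1:ℝ)) * (q.2 : Fin n → ℝ) i + (q.1:ℝ) * p i), hmemH q.1 ↑q.2 q.2.2⟩
        continuous_toFun := by
          apply Continuous.subtype_mk
          apply Continuous.update
          · exact continuous_subtype_val.comp continuous_snd
          · apply Continuous.add
            · exact ((continuous_const.sub (continuous_subtype_val.comp continuous_fst)).mul
                ((continuous_apply i).comp (continuous_subtype_val.comp continuous_snd)))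
            · exact (continuous_subtype_val.comp continuous_fst).mul continuous_const
        map_zero_left := by
          intro y
          apply Subtype.ext
          simp [Function.update_eq_self]
        map_one_left := by
          intro y
          apply Subtype.ext
          simp [r', incl, Set.inclusion] }
    have h1 : (ContinuousMap.id ↥US).Homotopic (incl.comp r') := ⟨H⟩
    obtain ⟨c, hcnull⟩ := (contractible_iff_id_nullhomotopic ↥U').mp IH
    have h2 : (incl.comp r').Homotopic (ContinuousMap.const _ (incl c)) := by
      have step1 := ContinuousMap.Homotopic.comp hcnull (ContinuousMap.Homotopic.refl r')
      have step2 := ContinuousMap.Homotopic.comp (ContinuousMap.Homotopic.refl incl) step1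
      simpa using step2
    exact (contractible_iff_id_nullhomotopic ↥US).mpr ⟨incl c, h1.trans h2⟩

end Aux

/-- A connected configuration of axis-parallel unit segments `Q = L_1 ∪ ⋯ ∪ L_n ⊆ ℝⁿ`
is contractible. -/
theorem orthogonal_segments_contractible
    (n : ℕ) (hn : 1 ≤ n) (x : Fin n → Fin n → ℝ)
    (L : Fin n → Set (Fin n → ℝ))
    (hL : ∀ i, L i = {y | (∀ j, j ≠ i → y j = x i j) ∧ y i ∈ Set.Icc (0 : ℝ) 1})
    (Q : Set (Fin n → ℝ)) (hQ : Q = ⋃ i, L i)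
    (hconn : IsConnected Q) :
    ContractibleSpace Q := by
  have hinst : Nonempty (Fin n) := ⟨⟨0, hn⟩⟩
  have huniv : (⋃ j ∈ (Finset.univ : Finset (Fin n)), L j) = ⋃ i, L i := by
    simp
  subst hQ
  rw [← huniv] at hconn ⊢
  exact key hL Finset.univ Finset.univ_nonempty hconn
end

section
/- The projection ρ : ℝfD°(n) → fD°(n) is a locally trivial fibre bundle, and the local trivializations can be chosen compatible with the boundary maps: for every a ∈ fD°(n) there exist an open neighbourhood U of a in fD°(n) and a homeomorphism Φ : ρ⁻¹(U) → U × |a| whose first coordinate is ρ, such that Φ(b, ∂_i^b(θ)) = (b, ∂_i^a(θ)) for all b ∈ U, all i ∈ {0,1,…,n} and all θ ∈ S¹. -/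
/-- Ambient space of parameters for `n` framed little discs:
centres, radii, framings. -/
abbrev Amb (n : ℕ) : Type := (Fin n → ℂ) × (Fin n → ℝ) × (Fin n → ℂ)

/-- The framed little discs operad space `fD(n)`: `n` disjoint framed little discs inside
the unit disc (the `i`-th little disc is `w ↦ zᵢ + rᵢαᵢw`). -/
def fD (n : ℕ) : Set (Amb n) :=
  {a | (∀ i, 0 < a.2.1 i) ∧ (∀ i, ‖a.1 i‖ + a.2.1 i ≤ 1) ∧
       (∀ i, ‖a.2.2 i‖ = 1) ∧
       ∀ i j, i ≠ j → a.2.1 i + a.2.1 j < ‖a.1 i - a.1 j‖}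

/-- `fD°(n)`: the subspace of `fD(n)` where the little discs avoid the boundary circle. -/
def fDo (n : ℕ) : Set (Amb n) :=
  {a | a ∈ fD n ∧ ∀ i, ‖a.1 i‖ + a.2.1 i < 1}

/-- The realization `|a|`: the closed unit disc minus the interiors of the little discs. -/
def realiz {n : ℕ} (a : Amb n) : Set ℂ :=
  {w | ‖w‖ ≤ 1 ∧ ∀ i, a.2.1 i ≤ ‖w - a.1 i‖}

/-- The boundary maps of `|a|`: `∂₀ = ∂_out` is the boundary of the big disc, and for
`i ≥ 1`, `∂ᵢ` is the boundary of the `i`-th little disc. -/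
def bdry {n : ℕ} (a : Amb n) (i : Fin (n + 1)) (θ : ℂ) : ℂ :=
  if h : i = 0 then θ
  else a.1 (i.pred h) + (a.2.1 (i.pred h) : ℂ) * a.2.2 (i.pred h) * θ

/-- The total space `ℝfD°(n)` of realizations over `fD°(n)`. -/
def RfDo (n : ℕ) : Set (↥(fDo n) × ℂ) :=
  {p | p.2 ∈ realiz (p.1 : Amb n)}

set_option maxHeartbeats 1000000

namespace FDAux

open Finset

/-- The finite set of "margins" of `a`. -/
noncomputable def gapset (n : ℕ) (a : Amb n) : Finset ℝ :=
  insert 1 ((Finset.univ.image fun i => a.2.1 i) ∪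
    (Finset.univ.image fun i => (1 - ‖a.1 i‖ - a.2.1 i) / 3) ∪
    ((Finset.univ.offDiag).image fun p : Fin n × Fin n =>
      (‖a.1 p.1 - a.1 p.2‖ - a.2.1 p.1 - a.2.1 p.2) / 3))

noncomputable def del (n : ℕ) (a : Amb n) : ℝ :=
  (gapset n a).min' ⟨1, Finset.mem_insert_self 1 _⟩

noncomputable def eps (n : ℕ) (a : Amb n) : ℝ := del n a ^ 2 / (1000 * (n + 1))

/-- `b` is in the good neighbourhood of `a`. -/
def Near (n : ℕ) (a b : Amb n) : Prop :=
  b ∈ fDo n ∧ ∀ i, ‖b.1 i - a.1 i‖ < eps n a ∧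
    |b.2.1 i - a.2.1 i| < eps n a ∧ ‖b.2.2 i - a.2.2 i‖ < eps n a

noncomputable def sig {n : ℕ} (a b : Amb n) (i : Fin n) : ℂ :=
  ((a.2.1 i : ℂ) * a.2.2 i) / ((b.2.1 i : ℂ) * b.2.2 i)

noncomputable def phi (n : ℕ) (a b : Amb n) (i : Fin n) (w : ℂ) : ℝ :=
  max 0 (min 1 ((a.2.1 i + del n a - ‖w - b.1 i‖) /
    (a.2.1 i + del n a - b.2.1 i)))

noncomputable def Fm (n : ℕ) (a b : Amb n) (w : ℂ) : ℂ :=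
  w + ∑ i, (phi n a b i w : ℂ) *
    ((sig a b i - 1) * (w - b.1 i) + (a.1 i - b.1 i))

noncomputable def Gm (n : ℕ) (a b : Amb n) : ℂ → ℂ := Function.invFun (Fm n a b)

section Basic

variable {n : ℕ} {a b : Amb n}

lemma del_le (x : ℝ) (hx : x ∈ gapset n a) : del n a ≤ x := Finset.min'_le _ _ hx

lemma del_le_one : del n a ≤ 1 := del_le 1 (Finset.mem_insert_self 1 _)

lemma del_le_r (i : Fin n) : del n a ≤ a.2.1 i := by
  refine del_le _ ?_
  simp only [gapset, Finset.mem_insert, Finset.mem_union, Finset.mem_image, Finset.mem_univ]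
  exact Or.inr (Or.inl (Or.inl ⟨i, trivial, rfl⟩))

lemma del_le_out (i : Fin n) : 3 * del n a ≤ 1 - ‖a.1 i‖ - a.2.1 i := by
  have h := del_le ((1 - ‖a.1 i‖ - a.2.1 i) / 3) (by
    simp only [gapset, Finset.mem_insert, Finset.mem_union, Finset.mem_image, Finset.mem_univ]
    exact Or.inr (Or.inl (Or.inr ⟨i, trivial, rfl⟩)))
  linarith

lemma del_le_gap {i j : Fin n} (hij : i ≠ j) :
    3 * del n a ≤ ‖a.1 i - a.1 j‖ - a.2.1 i - a.2.1 j := by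
  have h := del_le ((‖a.1 i - a.1 j‖ - a.2.1 i - a.2.1 j) / 3) (by
    simp only [gapset, Finset.mem_insert, Finset.mem_union, Finset.mem_image,
      Finset.mem_offDiag, Finset.mem_univ]
    exact Or.inr (Or.inr ⟨(i, j), ⟨trivial, trivial, hij⟩, rfl⟩))
  linarith

lemma del_pos (ha : a ∈ fDo n) : 0 < del n a := by
  unfold del; apply (Finset.lt_min'_iff _ _).2
  intro y hy
  simp only [gapset, Finset.mem_insert, Finset.mem_union, Finset.mem_image,
    Finset.mem_offDiag, Finset.mem_univ] at hy
  obtain rfl | (⟨i, -, rfl⟩ | ⟨i, -, rfl⟩) | ⟨p, ⟨-, -, hp⟩, rfl⟩ := hy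
  · norm_num
  · exact ha.1.1 i
  · have := ha.2 i; linarith
  · have := ha.1.2.2.2 p.1 p.2 hp; linarith

lemma eps_pos (ha : a ∈ fDo n) : 0 < eps n a := by
  have := del_pos ha
  have : (0:ℝ) < del n a ^ 2 := by positivity
  unfold eps; positivity

lemma eps_le_del (ha : a ∈ fDo n) : 1000 * eps n a ≤ del n a := by
  have h0 := del_pos ha
  have h1 : del n a ≤ 1 := del_le_one
  rw [eps, mul_div_assoc', div_le_iff₀ (show (0:ℝ) < 1000*((n:ℝ)+1) by positivity)]
  have hn : (0:ℝ) ≤ (n:ℝ) := Nat.cast_nonneg n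
  nlinarith [sq_nonneg (del n a)]

lemma eps_le_delsq (ha : a ∈ fDo n) : 1000 * (n+1) * eps n a = del n a ^ 2 := by
  rw [eps]; field_simp

end Basic

end FDAux

namespace FDAux2
open FDAux Complex

variable {n : ℕ} {a b : Amb n}

lemma min_lip (a b c : ℝ) : |min a c - min b c| ≤ |a - b| := by
  rcases le_total a c with h1 | h1 <;> rcases le_total b c with h2 | h2 <;>
    simp only [min_eq_left, min_eq_right, h1, h2] <;>
    rcases abs_cases (a - b) with ⟨h, h'⟩ | ⟨h, h'⟩ <;> rw [abs_le] <;>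
    constructor <;> linarith

section NearFacts

variable {i : Fin n}

lemma r_pos (ha : a ∈ fDo n) (i : Fin n) : 0 < a.2.1 i := ha.1.1 i

lemma r_lt_one (ha : a ∈ fDo n) (i : Fin n) : a.2.1 i < 1 := by
  have h := ha.2 i; have := norm_nonneg (a.1 i); linarith

lemma rb_pos (hb : Near n a b) (i : Fin n) : 0 < b.2.1 i := hb.1.1.1 i

lemma ab_norm (hb : Near n a b) (i : Fin n) : ‖b.2.2 i‖ = 1 := hb.1.1.2.2.1 i

lemma a_norm (ha : a ∈ fDo n) (i : Fin n) : ‖a.2.2 i‖ = 1 := ha.1.2.2.1 i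

lemma eps_lt_del (ha : a ∈ fDo n) : eps n a < del n a := by
  have h1 := eps_le_del ha; have h2 := eps_pos ha; linarith

lemma rb_lower (hb : Near n a b) (i : Fin n) : a.2.1 i - eps n a ≤ b.2.1 i := by
  have h := abs_le.1 (hb.2 i).2.1.le; linarith [h.1]

lemma rb_upper (hb : Near n a b) (i : Fin n) : b.2.1 i ≤ a.2.1 i + eps n a := by
  have h := abs_le.1 (hb.2 i).2.1.le; linarith [h.2]

lemma rb_ge_half_del (ha : a ∈ fDo n) (hb : Near n a b) (i : Fin n) :
    del n a / 2 ≤ b.2.1 i := by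
  have h1 := rb_lower hb i
  have h2 := del_le_r (a := a) i
  have h3 := eps_le_del ha
  have h4 := eps_pos ha
  linarith

lemma denom_lb (hb : Near n a b) (i : Fin n) :
    del n a - eps n a ≤ a.2.1 i + del n a - b.2.1 i := by
  have := rb_upper hb i; linarith

lemma denom_pos (ha : a ∈ fDo n) (hb : Near n a b) (i : Fin n) :
    0 < a.2.1 i + del n a - b.2.1 i := by
  have h1 := denom_lb hb i
  have := eps_lt_del ha
  linarith

lemma denom_ge (ha : a ∈ fDo n) (hb : Near n a b) (i : Fin n) :
    del n a / 2 ≤ a.2.1 i + del n a - b.2.1 i := by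
  have h1 := denom_lb hb i
  have h2 := eps_le_del ha
  have h3 := del_pos ha
  linarith

lemma rbab_ne (hb : Near n a b) (i : Fin n) : ((b.2.1 i : ℂ)) * b.2.2 i ≠ 0 := by
  apply mul_ne_zero
  · exact_mod_cast (rb_pos hb i).ne'
  · intro h
    have := ab_norm hb i
    rw [h] at this; simp at this

lemma sig_abs (ha : a ∈ fDo n) (hb : Near n a b) (i : Fin n) :
    ‖sig a b i‖ = a.2.1 i / b.2.1 i := by
  rw [sig, norm_div, norm_mul, norm_mul, ab_norm hb i, a_norm ha i,
    Complex.norm_real, Real.norm_eq_abs, Complex.norm_real, Real.norm_eq_abs, abs_of_pos (r_pos ha i),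
    abs_of_pos (rb_pos hb i), mul_one, mul_one]

lemma sig_mul (hb : Near n a b) (i : Fin n) :
    sig a b i * ((b.2.1 i : ℂ) * b.2.2 i) = (a.2.1 i : ℂ) * a.2.2 i :=
  div_mul_cancel₀ _ (rbab_ne hb i)

lemma c_le (ha : a ∈ fDo n) (hb : Near n a b) (i : Fin n) :
    ‖sig a b i - 1‖ ≤ 6 * eps n a / del n a := by
  have hne := rbab_ne hb i
  have h1 : sig a b i - 1 =
      (((a.2.1 i : ℂ) * a.2.2 i) - ((b.2.1 i : ℂ) * b.2.2 i)) /
        ((b.2.1 i : ℂ) * b.2.2 i) := by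
    rw [sig, sub_div, div_self hne]
  have hnum : ‖((a.2.1 i : ℂ) * a.2.2 i) - ((b.2.1 i : ℂ) * b.2.2 i)‖ ≤
      3 * eps n a := by
    have hsplit : ((a.2.1 i : ℂ) * a.2.2 i) - ((b.2.1 i : ℂ) * b.2.2 i) =
        ((a.2.1 i : ℂ) - (b.2.1 i : ℂ)) * a.2.2 i +
          (b.2.1 i : ℂ) * (a.2.2 i - b.2.2 i) := by ring
    rw [hsplit]
    have e1 : ‖((a.2.1 i : ℂ) - (b.2.1 i : ℂ)) * a.2.2 i‖ ≤ eps n a := by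
      rw [norm_mul, a_norm ha i, mul_one]
      rw [show ((a.2.1 i : ℂ) - (b.2.1 i : ℂ)) = ((a.2.1 i - b.2.1 i : ℝ) : ℂ) by push_cast; ring,
        Complex.norm_real, Real.norm_eq_abs, abs_sub_comm]
      exact (hb.2 i).2.1.le
    have e2 : ‖(b.2.1 i : ℂ) * (a.2.2 i - b.2.2 i)‖ ≤ 2 * eps n a := by
      rw [norm_mul, Complex.norm_real, Real.norm_eq_abs, abs_of_pos (rb_pos hb i)]
      have hα : ‖a.2.2 i - b.2.2 i‖ ≤ eps n a := by
        rw [← norm_neg]; simpa [neg_sub] using (hb.2 i).2.2.le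
      have hrb : b.2.1 i ≤ 2 := by
        have := rb_upper hb i
        have h1 := r_lt_one ha i
        have h2 := eps_le_del ha
        have h3 := del_le_one (a := a) (n := n)
        have h4 := del_pos ha
        linarith
      nlinarith [norm_nonneg (a.2.2 i - b.2.2 i), eps_pos ha, rb_pos hb i]
    refine le_trans (norm_add_le _ _) ?_
    linarith
  rw [h1, norm_div, norm_mul, Complex.norm_real, Real.norm_eq_abs, ab_norm hb i, mul_one,
    abs_of_pos (rb_pos hb i)]
  rw [div_le_div_iff₀ (rb_pos hb i) (del_pos ha)]
  have h2 := rb_ge_half_del ha hb i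
  have h3 := eps_pos ha
  have h4 := del_pos ha
  nlinarith


noncomputable def Del (a b : Amb n) (i : Fin n) (w : ℂ) : ℂ :=
  (sig a b i - 1) * (w - b.1 i) + (a.1 i - b.1 i)

lemma Fm_def (w : ℂ) : Fm n a b w = w + ∑ i, (phi n a b i w : ℂ) * Del a b i w := rfl

lemma phi_nonneg (i : Fin n) (w : ℂ) : 0 ≤ phi n a b i w := le_max_left _ _

lemma phi_le_one (i : Fin n) (w : ℂ) : phi n a b i w ≤ 1 :=
  max_le zero_le_one (min_le_left _ _)

lemma phi_eq_zero (ha : a ∈ fDo n) (hb : Near n a b) {i : Fin n} {w : ℂ}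
    (h : a.2.1 i + del n a ≤ ‖w - b.1 i‖) : phi n a b i w = 0 := by
  apply max_eq_left
  refine le_trans (min_le_right _ _) ?_
  apply div_nonpos_of_nonpos_of_nonneg (by linarith) (denom_pos ha hb i).le

lemma phi_eq_one (ha : a ∈ fDo n) (hb : Near n a b) {i : Fin n} {w : ℂ}
    (h : ‖w - b.1 i‖ ≤ b.2.1 i) : phi n a b i w = 1 := by
  have hD := denom_pos ha hb i
  have : (1:ℝ) ≤ (a.2.1 i + del n a - ‖w - b.1 i‖) /
      (a.2.1 i + del n a - b.2.1 i) := (one_le_div hD).2 (by linarith)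
  rw [phi, min_eq_left this, max_eq_right zero_le_one]

lemma one_sub_phi_le (ha : a ∈ fDo n) (hb : Near n a b) {i : Fin n} {w : ℂ}
    (h : b.2.1 i ≤ ‖w - b.1 i‖) :
    1 - phi n a b i w ≤ (‖w - b.1 i‖ - b.2.1 i) /
      (a.2.1 i + del n a - b.2.1 i) := by
  have hD := denom_pos ha hb i
  set t := ‖w - b.1 i‖ with ht
  set x := (a.2.1 i + del n a - t) / (a.2.1 i + del n a - b.2.1 i) with hx
  rcases le_total 1 x with h1 | h1
  · rw [phi, ← hx, min_eq_left h1, max_eq_right zero_le_one]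
    simp only [sub_self]
    exact div_nonneg (by linarith) hD.le
  · have hphi : x ≤ phi n a b i w := by
      rw [phi, ← hx, min_eq_right h1]; exact le_max_right _ _
    have hxx : 1 - x = (t - b.2.1 i) / (a.2.1 i + del n a - b.2.1 i) := by
      rw [eq_div_iff hD.ne', sub_mul, one_mul, hx,
        div_mul_cancel₀ _ hD.ne']
      ring
    linarith [hxx ▸ (by linarith : 1 - phi n a b i w ≤ 1 - x)]

lemma phi_lip (ha : a ∈ fDo n) (hb : Near n a b) (i : Fin n) (w w' : ℂ) :
    |phi n a b i w - phi n a b i w'| ≤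
      ‖w - w'‖ / (a.2.1 i + del n a - b.2.1 i) := by
  have hD := denom_pos ha hb i
  set t := ‖w - b.1 i‖
  set t' := ‖w' - b.1 i‖
  set x := (a.2.1 i + del n a - t) / (a.2.1 i + del n a - b.2.1 i) with hx
  set x' := (a.2.1 i + del n a - t') / (a.2.1 i + del n a - b.2.1 i) with hx'
  have step1 : |phi n a b i w - phi n a b i w'| ≤ |x - x'| := by
    rw [phi, phi, max_comm 0 _, max_comm 0 _]
    refine le_trans (abs_max_sub_max_le_abs _ _ _) ?_
    rw [min_comm 1 _, min_comm 1 _]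
    exact min_lip _ _ _
  have step2 : |x - x'| = |t' - t| / (a.2.1 i + del n a - b.2.1 i) := by
    have hxe : x - x' = (t' - t) / (a.2.1 i + del n a - b.2.1 i) := by
      rw [hx, hx', div_sub_div_same]; ring_nf
    rw [hxe, abs_div, abs_of_pos hD]
  have step3 : |t' - t| ≤ ‖w - w'‖ := by
    rw [abs_sub_comm]
    have := abs_norm_sub_norm_le (w - b.1 i) (w' - b.1 i)
    simpa using this
  rw [step2] at step1
  refine le_trans step1 ?_
  gcongr

lemma Del_norm_le (ha : a ∈ fDo n) (hb : Near n a b) (i : Fin n) (w : ℂ) :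
    ‖Del a b i w‖ ≤
      ‖sig a b i - 1‖ * ‖w - b.1 i‖ + eps n a := by
  refine le_trans (norm_add_le _ _) ?_
  rw [norm_mul]
  have : ‖a.1 i - b.1 i‖ ≤ eps n a := by
    rw [← norm_neg]; simpa [neg_sub] using (hb.2 i).1.le
  linarith

lemma Del_sub (i : Fin n) (w w' : ℂ) :
    Del a b i w - Del a b i w' = (sig a b i - 1) * (w - w') := by
  rw [Del, Del]; ring

lemma support_far (ha : a ∈ fDo n) (hb : Near n a b) {j k : Fin n} (hk : k ≠ j)
    {w : ℂ} (hw : ‖w - b.1 j‖ < a.2.1 j + del n a) :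
    a.2.1 k + del n a ≤ ‖w - b.1 k‖ := by
  have hgap := del_le_gap (a := a) (Ne.symm hk)
  have h1 : ‖a.1 j - a.1 k‖ ≤
      ‖b.1 j - b.1 k‖ + eps n a + eps n a := by
    have e1 : ‖a.1 j - b.1 j‖ ≤ eps n a := by
      rw [← norm_neg]; simpa [neg_sub] using (hb.2 j).1.le
    have e2 : ‖b.1 k - a.1 k‖ ≤ eps n a := (hb.2 k).1.le
    calc ‖a.1 j - a.1 k‖
        = ‖(a.1 j - b.1 j) + (b.1 j - b.1 k) + (b.1 k - a.1 k)‖ := by ring_nf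
      _ ≤ _ := by
          refine le_trans (norm_add_le _ _) ?_
          have := norm_add_le (a.1 j - b.1 j) (b.1 j - b.1 k)
          linarith
  have h2 : ‖b.1 j - b.1 k‖ ≤
      ‖w - b.1 j‖ + ‖w - b.1 k‖ := by
    calc ‖b.1 j - b.1 k‖ = ‖-(w - b.1 j) + (w - b.1 k)‖ := by ring_nf
      _ ≤ _ := by
          refine le_trans (norm_add_le _ _) ?_
          rw [norm_neg]
  have h3 := eps_le_del ha
  have h4 := eps_pos ha
  have h5 := del_pos ha
  linarith

lemma Fm_eq_self (ha : a ∈ fDo n) (hb : Near n a b) {w : ℂ}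
    (h : ∀ k, a.2.1 k + del n a ≤ ‖w - b.1 k‖) : Fm n a b w = w := by
  rw [Fm_def]
  rw [Finset.sum_eq_zero, add_zero]
  intro k _
  rw [phi_eq_zero ha hb (h k)]
  simp

lemma Fm_eq_single (ha : a ∈ fDo n) (hb : Near n a b) {j : Fin n} {w : ℂ}
    (hj : ‖w - b.1 j‖ < a.2.1 j + del n a) :
    Fm n a b w = w + (phi n a b j w : ℂ) * Del a b j w := by
  rw [Fm_def]
  congr 1
  refine Finset.sum_eq_single_of_mem j (Finset.mem_univ j) ?_
  intro k _ hkj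
  rw [phi_eq_zero ha hb (support_far ha hb hkj hj)]
  simp


lemma M_le (ha : a ∈ fDo n) (hb : Near n a b) {i : Fin n} {w : ℂ}
    (hw : ‖w - b.1 i‖ ≤ a.2.1 i + del n a) :
    ‖Del a b i w‖ ≤ 13 * eps n a / del n a := by
  have h1 := Del_norm_le ha hb i w
  have hc := c_le ha hb i
  have hδ0 := del_pos ha
  have hδ1 := del_le_one (a := a) (n := n)
  have hr1 := r_lt_one ha i
  have hε0 := eps_pos ha
  have habs := norm_nonneg (w - b.1 i)
  have h2 : ‖sig a b i - 1‖ * ‖w - b.1 i‖ ≤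
      (6 * eps n a / del n a) * (a.2.1 i + del n a) := by
    apply mul_le_mul hc hw habs
    positivity
  have h3 : (6 * eps n a / del n a) * (a.2.1 i + del n a) ≤ 12 * eps n a / del n a := by
    rw [div_mul_eq_mul_div, div_le_div_iff₀ hδ0 hδ0]
    nlinarith [mul_nonneg (by linarith : (0:ℝ) ≤ 2 - (a.2.1 i + del n a))
      (by positivity : (0:ℝ) ≤ 6 * eps n a * del n a)]
  have h4 : eps n a ≤ eps n a / del n a := by
    rw [le_div_iff₀ hδ0]; nlinarith
  calc ‖Del a b i w‖ ≤ _ + eps n a := h1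
    _ ≤ 12 * eps n a / del n a + eps n a / del n a := by linarith
    _ = 13 * eps n a / del n a := by ring

lemma phi_lip' (ha : a ∈ fDo n) (hb : Near n a b) (i : Fin n) (w w' : ℂ) :
    |phi n a b i w - phi n a b i w'| ≤ 2 / del n a * ‖w - w'‖ := by
  refine le_trans (phi_lip ha hb i w w') ?_
  have hD := denom_ge ha hb i
  have hδ0 := del_pos ha
  have habs := norm_nonneg (w - w')
  rw [div_le_iff₀ (denom_pos ha hb i)]
  have hkey : 2 / del n a * ‖w - w'‖ * (del n a / 2) =
      ‖w - w'‖ := by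
    field_simp
  nlinarith [mul_le_mul_of_nonneg_left hD
    (by positivity : (0:ℝ) ≤ 2 / del n a * ‖w - w'‖)]

lemma two_six_combine (ha : a ∈ fDo n) (d : ℝ) (hd : 0 ≤ d) :
    (2 / del n a * d) * (13 * eps n a / del n a) ≤
      (26 * eps n a / del n a ^ 2) * d := by
  have hδ0 := del_pos ha
  have : (2 / del n a) * (13 * eps n a / del n a) = 26 * eps n a / del n a ^ 2 := by
    rw [pow_two]; field_simp; ring
  calc (2 / del n a * d) * (13 * eps n a / del n a)
      = ((2 / del n a) * (13 * eps n a / del n a)) * d := by ring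
    _ = (26 * eps n a / del n a ^ 2) * d := by rw [this]
    _ ≤ (26 * eps n a / del n a ^ 2) * d := le_refl _

lemma six_twelve (ha : a ∈ fDo n) : 6 * eps n a / del n a ≤ 12 * eps n a / del n a ^ 2 := by
  have hδ0 := del_pos ha
  have hδ1 := del_le_one (a := a) (n := n)
  have hε0 := eps_pos ha
  rw [pow_two, div_le_div_iff₀ hδ0 (by positivity)]
  nlinarith [mul_nonneg (by linarith : (0:ℝ) ≤ 1 - del n a)
    (by positivity : (0:ℝ) ≤ 6 * eps n a * del n a)]

lemma T_lip (ha : a ∈ fDo n) (hb : Near n a b) (i : Fin n) (w w' : ℂ) :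
    ‖(phi n a b i w : ℂ) * Del a b i w -
      (phi n a b i w' : ℂ) * Del a b i w'‖ ≤
      (38 * eps n a / del n a ^ 2) * ‖w - w'‖ := by
  have hδ0 := del_pos ha
  have hδ1 := del_le_one (a := a) (n := n)
  have hε0 := eps_pos ha
  have habs := norm_nonneg (w - w')
  have hlipφ := phi_lip' ha hb i w w'
  have hsum : (26 * eps n a / del n a ^ 2) * ‖w - w'‖ +
      (12 * eps n a / del n a ^ 2) * ‖w - w'‖ =
      (38 * eps n a / del n a ^ 2) * ‖w - w'‖ := by ring
  rcases le_or_gt (a.2.1 i + del n a) (‖w' - b.1 i‖) with hfar | hnear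
  · -- φ(w') = 0
    rw [phi_eq_zero ha hb hfar]
    simp only [Complex.ofReal_zero, zero_mul, sub_zero]
    rcases le_or_gt (a.2.1 i + del n a) (‖w - b.1 i‖) with hfar2 | hnear2
    · rw [phi_eq_zero ha hb hfar2]
      simp only [Complex.ofReal_zero, zero_mul, norm_zero]
      positivity
    · rw [norm_mul, Complex.norm_real, Real.norm_eq_abs]
      have hM := M_le ha hb (i := i) (w := w) hnear2.le
      have hφ : |phi n a b i w| ≤ 2 / del n a * ‖w - w'‖ := by
        have hz := phi_eq_zero ha hb hfar
        calc |phi n a b i w| = |phi n a b i w - phi n a b i w'| := by rw [hz, sub_zero]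
          _ ≤ _ := hlipφ
      calc |phi n a b i w| * ‖Del a b i w‖
          ≤ (2 / del n a * ‖w - w'‖) * (13 * eps n a / del n a) :=
            mul_le_mul hφ hM (norm_nonneg _) (by positivity)
        _ ≤ (26 * eps n a / del n a ^ 2) * ‖w - w'‖ :=
            two_six_combine ha _ habs
        _ ≤ (38 * eps n a / del n a ^ 2) * ‖w - w'‖ := by
            have : (0:ℝ) ≤ (12 * eps n a / del n a ^ 2) * ‖w - w'‖ := by
              positivity
            linarith
  · -- anchor at w'
    have hsplit : (phi n a b i w : ℂ) * Del a b i w -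
        (phi n a b i w' : ℂ) * Del a b i w' =
        ((phi n a b i w : ℂ) - (phi n a b i w' : ℂ)) * Del a b i w' +
          (phi n a b i w : ℂ) * (Del a b i w - Del a b i w') := by ring
    rw [hsplit]
    refine le_trans (norm_add_le _ _) ?_
    rw [norm_mul, norm_mul, Del_sub, norm_mul]
    have e1 : ‖(phi n a b i w : ℂ) - (phi n a b i w' : ℂ)‖ =
        |phi n a b i w - phi n a b i w'| := by
      rw [show ((phi n a b i w : ℂ) - (phi n a b i w' : ℂ)) =
        ((phi n a b i w - phi n a b i w' : ℝ) : ℂ) by push_cast; ring, Complex.norm_real, Real.norm_eq_abs]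
    have e2 : ‖(phi n a b i w : ℂ)‖ ≤ 1 := by
      rw [Complex.norm_real, Real.norm_eq_abs, _root_.abs_of_nonneg (phi_nonneg i w)]
      exact phi_le_one i w
    have hM := M_le ha hb (i := i) (w := w') hnear.le
    have hc := c_le ha hb i
    have habsc := norm_nonneg (sig a b i - 1)
    have hX : (0:ℝ) ≤ ‖sig a b i - 1‖ * ‖w - w'‖ :=
      mul_nonneg habsc habs
    have t1 : ‖(phi n a b i w : ℂ)‖ *
        (‖sig a b i - 1‖ * ‖w - w'‖) ≤
        (6 * eps n a / del n a) * ‖w - w'‖ := by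
      calc ‖(phi n a b i w : ℂ)‖ *
          (‖sig a b i - 1‖ * ‖w - w'‖)
          ≤ 1 * (‖sig a b i - 1‖ * ‖w - w'‖) :=
            mul_le_mul_of_nonneg_right e2 hX
        _ = ‖sig a b i - 1‖ * ‖w - w'‖ := one_mul _
        _ ≤ (6 * eps n a / del n a) * ‖w - w'‖ :=
            mul_le_mul_of_nonneg_right hc habs
    have t1' : (6 * eps n a / del n a) * ‖w - w'‖ ≤
        (12 * eps n a / del n a ^ 2) * ‖w - w'‖ :=
      mul_le_mul_of_nonneg_right (six_twelve ha) habs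
    have t2 : ‖(phi n a b i w : ℂ) - (phi n a b i w' : ℂ)‖ *
        ‖Del a b i w'‖ ≤
        (26 * eps n a / del n a ^ 2) * ‖w - w'‖ := by
      rw [e1]
      refine le_trans (mul_le_mul hlipφ hM (norm_nonneg _) (by positivity)) ?_
      exact two_six_combine ha _ habs
    linarith


lemma g_lip (ha : a ∈ fDo n) (hb : Near n a b) (w w' : ℂ) :
    ‖(Fm n a b w - w) - (Fm n a b w' - w')‖ ≤
      1 / 2 * ‖w - w'‖ := by
  have hδ0 := del_pos ha
  have hε0 := eps_pos ha
  have habs := norm_nonneg (w - w')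
  have h1 : (Fm n a b w - w) - (Fm n a b w' - w') =
      ∑ i, ((phi n a b i w : ℂ) * Del a b i w - (phi n a b i w' : ℂ) * Del a b i w') := by
    rw [Fm_def, Fm_def, Finset.sum_sub_distrib]
    ring
  rw [h1]
  have h2 : ‖∑ i, ((phi n a b i w : ℂ) * Del a b i w -
      (phi n a b i w' : ℂ) * Del a b i w')‖ ≤
      ∑ _i : Fin n, (38 * eps n a / del n a ^ 2) * ‖w - w'‖ := by
    refine le_trans (norm_sum_le _ _) ?_
    exact Finset.sum_le_sum fun i _ => T_lip ha hb i w w'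
  refine le_trans h2 ?_
  rw [Finset.sum_const, Finset.card_univ, Fintype.card_fin, nsmul_eq_mul]
  -- n * (38 ε/δ²) * |w - w'| ≤ 1/2 |w-w'|
  have hkey : (n : ℝ) * (38 * eps n a / del n a ^ 2) ≤ 1 / 2 := by
    have hd : del n a ^ 2 = 1000 * (n + 1) * eps n a := (eps_le_delsq ha).symm
    rw [hd, mul_div_assoc',
      div_le_iff₀ (by positivity : (0:ℝ) < 1000 * ((n:ℝ) + 1) * eps n a)]
    have : (0:ℝ) ≤ (n:ℝ) := Nat.cast_nonneg n
    push_cast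
    nlinarith
  calc (n : ℝ) * ((38 * eps n a / del n a ^ 2) * ‖w - w'‖)
      = ((n : ℝ) * (38 * eps n a / del n a ^ 2)) * ‖w - w'‖ := by ring
    _ ≤ 1 / 2 * ‖w - w'‖ := mul_le_mul_of_nonneg_right hkey habs

lemma Fm_expand (ha : a ∈ fDo n) (hb : Near n a b) (w w' : ℂ) :
    ‖w - w'‖ ≤ 2 * ‖Fm n a b w - Fm n a b w'‖ := by
  have h1 := g_lip ha hb w w'
  have h2 : ‖w - w'‖ ≤
      ‖Fm n a b w - Fm n a b w'‖ +
        ‖(Fm n a b w - w) - (Fm n a b w' - w')‖ := by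
    have : w - w' = (Fm n a b w - Fm n a b w') -
        ((Fm n a b w - w) - (Fm n a b w' - w')) := by ring
    rw [this]
    exact norm_sub_le _ _
  linarith

lemma Fm_inj (ha : a ∈ fDo n) (hb : Near n a b) :
    Function.Injective (Fm n a b) := by
  intro w w' h
  have := Fm_expand ha hb w w'
  rw [h, sub_self, norm_zero] at this
  have h2 : ‖w - w'‖ = 0 :=
    le_antisymm (by linarith) (norm_nonneg _)
  have := norm_eq_zero.1 h2
  exact sub_eq_zero.1 this

lemma Fm_surj (ha : a ∈ fDo n) (hb : Near n a b) (v : ℂ) :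
    ∃ w, Fm n a b w = v := by
  set T : ℂ → ℂ := fun w => v - (Fm n a b w - w) with hT
  have hlip : LipschitzWith (1/2 : NNReal) T := by
    apply LipschitzWith.of_dist_le_mul
    intro x y
    rw [Complex.dist_eq, Complex.dist_eq, hT]
    have h1 := g_lip ha hb x y
    have : (v - (Fm n a b x - x)) - (v - (Fm n a b y - y)) =
        -((Fm n a b x - x) - (Fm n a b y - y)) := by ring
    rw [this, norm_neg]
    refine le_trans h1 ?_
    norm_num
  have hC : ContractingWith (1/2 : NNReal) T :=
    ⟨by rw [← NNReal.coe_lt_coe]; norm_num, hlip⟩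
  refine ⟨hC.fixedPoint T, ?_⟩
  have hfix : T (hC.fixedPoint T) = hC.fixedPoint T := hC.fixedPoint_isFixedPt
  simp only [hT] at hfix
  linear_combination -hfix


lemma abs_ge_sub (x y : ℂ) : ‖x‖ - ‖y‖ ≤ ‖x + y‖ := by
  have h := norm_add_le (x + y) (-y)
  have h2 : ‖-y‖ = ‖y‖ := norm_neg y
  simp only [add_neg_cancel_right] at h
  linarith

lemma eps_le_delsq' (ha : a ∈ fDo n) : 1000 * eps n a ≤ del n a ^ 2 := by
  have h := eps_le_delsq ha
  have h2 := eps_pos ha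
  have h3 : (0:ℝ) ≤ (n:ℝ) := Nat.cast_nonneg n
  push_cast at h
  nlinarith

lemma R_le_two (ha : a ∈ fDo n) (i : Fin n) : a.2.1 i + del n a ≤ 2 := by
  have := r_lt_one ha i
  have := del_le_one (a := a) (n := n)
  linarith

lemma cR_le (ha : a ∈ fDo n) (hb : Near n a b) (i : Fin n) :
    ‖sig a b i - 1‖ * (a.2.1 i + del n a) ≤ 12 * eps n a / del n a := by
  have hc := c_le ha hb i
  have hδ0 := del_pos ha
  have hR2 := R_le_two ha i
  have hR0 : (0:ℝ) ≤ a.2.1 i + del n a := by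
    have := r_pos ha i; linarith [del_pos ha]
  calc ‖sig a b i - 1‖ * (a.2.1 i + del n a)
      ≤ (6 * eps n a / del n a) * 2 :=
        mul_le_mul hc hR2 hR0
          (by have := eps_pos ha; have := del_pos ha; positivity)
    _ = 12 * eps n a / del n a := by ring

lemma twelve_eps (ha : a ∈ fDo n) : 12 * eps n a / del n a ≤ 12 * del n a / 1000 := by
  have hδ0 := del_pos ha
  have h := eps_le_delsq' ha
  rw [div_le_div_iff₀ hδ0 (by norm_num)]
  nlinarith

lemma thirteen_eps (ha : a ∈ fDo n) : 13 * eps n a / del n a ≤ 13 * del n a / 1000 := by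
  have hδ0 := del_pos ha
  have h := eps_le_delsq' ha
  rw [div_le_div_iff₀ hδ0 (by norm_num)]
  nlinarith

lemma eps_le_del_small (ha : a ∈ fDo n) : eps n a ≤ del n a / 1000 := by
  have hδ0 := del_pos ha
  have h := eps_le_del ha
  linarith

lemma sig_abs_lb (ha : a ∈ fDo n) (hb : Near n a b) (i : Fin n) :
    (1:ℝ)/2 ≤ a.2.1 i / b.2.1 i := by
  have hδ0 := del_pos ha
  have hεδ := eps_le_del ha
  have hε0 := eps_pos ha
  have hδr := del_le_r (a := a) i
  have hrb0 := rb_pos hb i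
  have hup := rb_upper hb i
  rw [le_div_iff₀ hrb0]
  nlinarith

/-- Forward membership: the map sends `|b|` into `|a|`. -/
lemma Fm_mem (ha : a ∈ fDo n) (hb : Near n a b) {w : ℂ} (hw : w ∈ realiz b) :
    Fm n a b w ∈ realiz a := by
  obtain ⟨hw1, hw2⟩ := hw
  have hδ0 := del_pos ha
  have hδ1 := del_le_one (a := a) (n := n)
  have hε0 := eps_pos ha
  have hεδ := eps_le_del_small ha
  have hεδ2 := eps_le_delsq' ha
  have h12 := twelve_eps ha
  have h13 := thirteen_eps ha
  by_cases hex : ∃ j, ‖w - b.1 j‖ < a.2.1 j + del n a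
  · obtain ⟨j, hj⟩ := hex
    rw [Fm_eq_single ha hb hj]
    have hδr := del_le_r (a := a) j
    have hrb0 := rb_pos hb j
    have hc := c_le ha hb j
    have hc0 := norm_nonneg (sig a b j - 1)
    have hcR := cR_le ha hb j
    have hφ0 := phi_nonneg (a := a) (b := b) j w
    have hφ1 := phi_le_one (a := a) (b := b) j w
    have ht0 := norm_nonneg (w - b.1 j)
    have htrb : b.2.1 j ≤ ‖w - b.1 j‖ := hw2 j
    have hzd : ‖b.1 j - a.1 j‖ ≤ eps n a := (hb.2 j).1.le
    set t := ‖w - b.1 j‖ with htdef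
    set φ := phi n a b j w with hφdef
    set σ := sig a b j with hσdef
    have habs1φ : ‖(1:ℂ) - (φ:ℂ)‖ = 1 - φ := by
      rw [show (1:ℂ) - (φ:ℂ) = ((1 - φ : ℝ) : ℂ) by push_cast; ring, Complex.norm_real, Real.norm_eq_abs,
        _root_.abs_of_nonneg (by linarith)]
    constructor
    · -- outer boundary
      have hid : w + (φ:ℂ) * Del a b j w =
          ((1:ℂ) + (φ:ℂ) * (σ - 1)) * (w - b.1 j) + ((1:ℂ) - (φ:ℂ)) * (b.1 j - a.1 j)
            + a.1 j := by
        rw [Del]; ring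
      rw [hid]
      have e0 : ‖(1:ℂ) + (φ:ℂ) * (σ - 1)‖ ≤ 1 + ‖σ - 1‖ := by
        refine le_trans (norm_add_le _ _) ?_
        rw [norm_one, norm_mul, Complex.norm_real, Real.norm_eq_abs, _root_.abs_of_nonneg hφ0]
        nlinarith [mul_le_mul_of_nonneg_right hφ1 hc0]
      have e1 : ‖((1:ℂ) + (φ:ℂ) * (σ - 1)) * (w - b.1 j)‖ ≤
          (1 + ‖σ - 1‖) * (a.2.1 j + del n a) := by
        rw [norm_mul]
        exact mul_le_mul e0 hj.le ht0 (by linarith)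
      have e2 : ‖((1:ℂ) - (φ:ℂ)) * (b.1 j - a.1 j)‖ ≤ eps n a := by
        rw [norm_mul, habs1φ]
        nlinarith [norm_nonneg (b.1 j - a.1 j),
          mul_le_mul (by linarith : (1:ℝ) - φ ≤ 1) hzd (norm_nonneg _) zero_le_one]
      have hout := del_le_out (a := a) j
      have hz0 := norm_nonneg (a.1 j)
      have hsplit : (1 + ‖σ - 1‖) * (a.2.1 j + del n a) =
          (a.2.1 j + del n a) + ‖σ - 1‖ * (a.2.1 j + del n a) := by ring
      refine le_trans (norm_add_le _ _) (le_trans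
        (add_le_add (norm_add_le _ _) (le_refl (‖a.1 j‖))) ?_)
      linarith
    · -- small circles
      intro i
      by_cases hij : i = j
      · subst hij
        have hid2 : w + (φ:ℂ) * Del a b i w - a.1 i =
            (σ - ((1:ℂ) - (φ:ℂ)) * (σ - 1)) * (w - b.1 i) +
              ((1:ℂ) - (φ:ℂ)) * (b.1 i - a.1 i) := by
          rw [Del]; ring
        rw [hid2]
        have hneg : σ - ((1:ℂ) - (φ:ℂ)) * (σ - 1) =
            σ + (-(((1:ℂ) - (φ:ℂ)) * (σ - 1))) := by ring
        have hsl : ‖σ‖ - (1 - φ) * ‖σ - 1‖ ≤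
            ‖σ - ((1:ℂ) - (φ:ℂ)) * (σ - 1)‖ := by
          have h1 := abs_ge_sub σ (-(((1:ℂ) - (φ:ℂ)) * (σ - 1)))
          rw [← hneg] at h1
          have h2 : ‖-(((1:ℂ) - (φ:ℂ)) * (σ - 1))‖ =
              (1 - φ) * ‖σ - 1‖ := by
            rw [norm_neg, norm_mul, habs1φ]
          rw [h2] at h1
          exact h1
        have hsabs : ‖σ‖ = a.2.1 i / b.2.1 i := sig_abs ha hb i
        have hmain : (‖σ‖ - (1 - φ) * ‖σ - 1‖) * t ≤
            ‖(σ - ((1:ℂ) - (φ:ℂ)) * (σ - 1)) * (w - b.1 i)‖ := by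
          rw [norm_mul]
          exact mul_le_mul_of_nonneg_right hsl ht0
        have hsecond : ‖((1:ℂ) - (φ:ℂ)) * (b.1 i - a.1 i)‖ ≤
            (1 - φ) * eps n a := by
          rw [norm_mul, habs1φ]
          exact mul_le_mul_of_nonneg_left hzd (by linarith)
        have hJ := abs_ge_sub ((σ - ((1:ℂ) - (φ:ℂ)) * (σ - 1)) * (w - b.1 i))
          (((1:ℂ) - (φ:ℂ)) * (b.1 i - a.1 i))
        have h1φ := one_sub_phi_le ha hb (i := i) (w := w) htrb
        have hD0 := denom_pos ha hb i
        have hDl : del n a - eps n a ≤ a.2.1 i + del n a - b.2.1 i := denom_lb hb i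
        have hσl := sig_abs_lb ha hb i
        have hkey : (1 - φ) * (‖σ - 1‖ * t + eps n a) ≤
            (a.2.1 i / b.2.1 i) * (t - b.2.1 i) := by
          have hA : ‖σ - 1‖ * t + eps n a ≤
              (a.2.1 i / b.2.1 i) * (a.2.1 i + del n a - b.2.1 i) := by
            have hct : ‖σ - 1‖ * t ≤ 12 * eps n a / del n a :=
              le_trans (mul_le_mul_of_nonneg_left hj.le hc0) hcR
            have hrhs : (del n a)/4 ≤
                (a.2.1 i / b.2.1 i) * (a.2.1 i + del n a - b.2.1 i) := by
              have hh := mul_le_mul_of_nonneg_right hσl hD0.le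
              linarith
            linarith
          have hX0 : (0:ℝ) ≤ ‖σ - 1‖ * t + eps n a := by
            nlinarith [mul_nonneg hc0 ht0]
          calc (1 - φ) * (‖σ - 1‖ * t + eps n a)
              ≤ ((t - b.2.1 i) / (a.2.1 i + del n a - b.2.1 i)) *
                (‖σ - 1‖ * t + eps n a) :=
                mul_le_mul_of_nonneg_right h1φ hX0
            _ ≤ ((t - b.2.1 i) / (a.2.1 i + del n a - b.2.1 i)) *
                ((a.2.1 i / b.2.1 i) * (a.2.1 i + del n a - b.2.1 i)) :=
                mul_le_mul_of_nonneg_left hA (div_nonneg (by linarith) hD0.le)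
            _ = (a.2.1 i / b.2.1 i) * (t - b.2.1 i) := by
                field_simp
        have hcomb : a.2.1 i ≤
            (‖σ‖ - (1 - φ) * ‖σ - 1‖) * t - (1 - φ) * eps n a := by
          have e : (‖σ‖ - (1 - φ) * ‖σ - 1‖) * t - (1 - φ) * eps n a
              = ‖σ‖ * t - ((1 - φ) * (‖σ - 1‖ * t + eps n a)) := by
            ring
          rw [e, hsabs]
          have e2 : a.2.1 i / b.2.1 i * t - (a.2.1 i / b.2.1 i) * (t - b.2.1 i)
              = a.2.1 i := by
            field_simp
            ring
          linarith
        refine le_trans ?_ hJ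
        linarith
      · -- i ≠ j
        have hfar := support_far ha hb hij hj
        have hzdi : ‖b.1 i - a.1 i‖ ≤ eps n a := (hb.2 i).1.le
        have hM := M_le ha hb (i := j) (w := w) hj.le
        have hstep1 : (a.2.1 i + del n a) - eps n a ≤ ‖w - a.1 i‖ := by
          have h := abs_ge_sub (w - b.1 i) (b.1 i - a.1 i)
          have heq : (w - b.1 i) + (b.1 i - a.1 i) = w - a.1 i := by ring
          rw [heq] at h
          linarith
        have hstep2 : ‖(φ:ℂ) * Del a b j w‖ ≤ 13 * eps n a / del n a := by
          rw [norm_mul, Complex.norm_real, Real.norm_eq_abs, _root_.abs_of_nonneg hφ0]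
          have := mul_le_mul hφ1 hM (norm_nonneg _) zero_le_one
          linarith
        have hJ2 := abs_ge_sub (w - a.1 i) (-((φ:ℂ) * Del a b j w))
        have heq2 : (w - a.1 i) + (-((φ:ℂ) * Del a b j w)) =
            w + (φ:ℂ) * Del a b j w - a.1 i - 2 * ((φ:ℂ) * Del a b j w) := by ring
        -- simpler: direct triangle
        have hJ3 : ‖w - a.1 i‖ - ‖(φ:ℂ) * Del a b j w‖ ≤
            ‖w + (φ:ℂ) * Del a b j w - a.1 i‖ := by
          have h := abs_ge_sub (w - a.1 i) ((φ:ℂ) * Del a b j w)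
          have heq : (w - a.1 i) + (φ:ℂ) * Del a b j w =
              w + (φ:ℂ) * Del a b j w - a.1 i := by ring
          rw [heq] at h
          exact h
        have hδri := del_le_r (a := a) i
        linarith
  · push_neg at hex
    rw [Fm_eq_self ha hb hex]
    refine ⟨hw1, fun i => ?_⟩
    have hzdi : ‖b.1 i - a.1 i‖ ≤ eps n a := (hb.2 i).1.le
    have h := abs_ge_sub (w - b.1 i) (b.1 i - a.1 i)
    have heq : (w - b.1 i) + (b.1 i - a.1 i) = w - a.1 i := by ring
    rw [heq] at h
    have hδr := del_le_r (a := a) i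
    linarith [hex i]


lemma outer_far (ha : a ∈ fDo n) (hb : Near n a b) {w : ℂ} (hw : 1 ≤ ‖w‖)
    (k : Fin n) : a.2.1 k + del n a ≤ ‖w - b.1 k‖ := by
  have hδ0 := del_pos ha
  have hε0 := eps_pos ha
  have hεδ := eps_le_del_small ha
  have hout := del_le_out (a := a) k
  have hzb : ‖b.1 k‖ ≤ ‖a.1 k‖ + eps n a := by
    have h := norm_add_le (a.1 k) (b.1 k - a.1 k)
    have heq : a.1 k + (b.1 k - a.1 k) = b.1 k := by ring
    rw [heq] at h
    linarith [(hb.2 k).1.le]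
  have h := abs_ge_sub w (-(b.1 k))
  have heq : w + -(b.1 k) = w - b.1 k := by ring
  rw [heq, norm_neg] at h
  linarith

/-- Backward membership: if the image lies in `|a|` then the point lies in `|b|`. -/
lemma Fm_mem_rev (ha : a ∈ fDo n) (hb : Near n a b) {w : ℂ}
    (hv : Fm n a b w ∈ realiz a) : w ∈ realiz b := by
  have hδ0 := del_pos ha
  have hε0 := eps_pos ha
  have hεδ := eps_le_del_small ha
  have habs1 : ‖w‖ ≤ 1 := by
    by_contra hcon
    push_neg at hcon
    have heq : Fm n a b w = w := Fm_eq_self ha hb (fun k => outer_far ha hb hcon.le k)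
    rw [heq] at hv
    linarith [hv.1]
  refine ⟨habs1, fun i => ?_⟩
  by_contra hcon
  push_neg at hcon
  have hrb0 := rb_pos hb i
  have hδr := del_le_r (a := a) i
  have hup := rb_upper hb i
  have hj : ‖w - b.1 i‖ < a.2.1 i + del n a := by linarith
  have heq := Fm_eq_single ha hb hj
  have hφ1 : phi n a b i w = 1 := phi_eq_one ha hb hcon.le
  have heq2 : Fm n a b w = a.1 i + sig a b i * (w - b.1 i) := by
    rw [heq, hφ1, Del]
    push_cast
    ring
  have habs : ‖Fm n a b w - a.1 i‖ =
      (a.2.1 i / b.2.1 i) * ‖w - b.1 i‖ := by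
    rw [heq2]
    have : a.1 i + sig a b i * (w - b.1 i) - a.1 i = sig a b i * (w - b.1 i) := by ring
    rw [this, norm_mul, sig_abs ha hb i]
  have hr0 := r_pos ha i
  have hlt : (a.2.1 i / b.2.1 i) * ‖w - b.1 i‖ < a.2.1 i := by
    have hpos : 0 < a.2.1 i / b.2.1 i := by positivity
    have := mul_lt_mul_of_pos_left hcon hpos
    rw [div_mul_cancel₀ _ hrb0.ne'] at this
    exact this
  have := hv.2 i
  rw [habs] at this
  linarith

/-- Compatibility with the boundary parametrizations. -/
lemma Fm_bdry (ha : a ∈ fDo n) (hb : Near n a b) (i : Fin (n + 1)) {θ : ℂ}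
    (hθ : ‖θ‖ = 1) : Fm n a b (bdry b i θ) = bdry a i θ := by
  by_cases h0 : i = 0
  · subst h0
    rw [bdry, bdry]
    simp only [dif_pos rfl]
    exact Fm_eq_self ha hb (fun k => outer_far ha hb (le_of_eq hθ.symm) k)
  · set j := i.pred h0 with hj
    rw [bdry, bdry]
    simp only [dif_neg h0]
    set w := b.1 j + (b.2.1 j : ℂ) * b.2.2 j * θ with hw
    have hδ0 := del_pos ha
    have hε0 := eps_pos ha
    have hεδ := eps_le_del_small ha
    have hrb0 := rb_pos hb j
    have hδr := del_le_r (a := a) j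
    have hup := rb_upper hb j
    have ht : ‖w - b.1 j‖ = b.2.1 j := by
      rw [hw]
      have : b.1 j + (b.2.1 j : ℂ) * b.2.2 j * θ - b.1 j =
          (b.2.1 j : ℂ) * b.2.2 j * θ := by ring
      rw [this, norm_mul, norm_mul, Complex.norm_real, Real.norm_eq_abs, ab_norm hb j, hθ,
        _root_.abs_of_pos hrb0, mul_one, mul_one]
    have hjlt : ‖w - b.1 j‖ < a.2.1 j + del n a := by
      rw [ht]; linarith
    have hφ1 : phi n a b j w = 1 := phi_eq_one ha hb (le_of_eq ht)
    have heq := Fm_eq_single ha hb hjlt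
    rw [heq, hφ1, Del]
    have hsm := sig_mul hb j
    push_cast
    have hwsub : w - b.1 j = (b.2.1 j : ℂ) * b.2.2 j * θ := by rw [hw]; ring
    rw [hwsub]
    calc w + 1 * ((sig a b j - 1) * ((b.2.1 j : ℂ) * b.2.2 j * θ) + (a.1 j - b.1 j))
        = a.1 j + (sig a b j * ((b.2.1 j : ℂ) * b.2.2 j)) * θ := by rw [hw]; ring
      _ = a.1 j + (a.2.1 j : ℂ) * a.2.2 j * θ := by rw [hsm]

/-- The inverse map. -/
lemma Fm_Gm (ha : a ∈ fDo n) (hb : Near n a b) (v : ℂ) :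
    Fm n a b (Gm n a b v) = v :=
  Function.invFun_eq (Fm_surj ha hb v)

lemma Gm_Fm (ha : a ∈ fDo n) (hb : Near n a b) (w : ℂ) :
    Gm n a b (Fm n a b w) = w :=
  Function.leftInverse_invFun (Fm_inj ha hb) w

lemma Gm_mem (ha : a ∈ fDo n) (hb : Near n a b) {v : ℂ} (hv : v ∈ realiz a) :
    Gm n a b v ∈ realiz b := by
  apply Fm_mem_rev ha hb
  rw [Fm_Gm ha hb]
  exact hv

end NearFacts

section USet

variable {n : ℕ}

/-- The good neighbourhood of `a` inside `fD°(n)`. -/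
def Uset (n : ℕ) (a : Amb n) : Set ↥(fDo n) := {b | Near n a (b : Amb n)}

lemma near_self {a : Amb n} (ha : a ∈ fDo n) : Near n a a := by
  refine ⟨ha, fun i => ?_⟩
  have := eps_pos ha
  simp only [sub_self, norm_zero, abs_zero]
  exact ⟨this, this, this⟩

lemma mem_Uset_self (a : ↥(fDo n)) : a ∈ Uset n (a : Amb n) := near_self a.2

lemma Uset_open (a : Amb n) : IsOpen (Uset n a) := by
  have : Uset n a = ⋂ i : Fin n,
      ({b : ↥(fDo n) | ‖(b : Amb n).1 i - a.1 i‖ < eps n a} ∩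
       ({b : ↥(fDo n) | |(b : Amb n).2.1 i - a.2.1 i| < eps n a} ∩
        {b : ↥(fDo n) | ‖(b : Amb n).2.2 i - a.2.2 i‖ < eps n a})) := by
    ext b
    simp only [Set.mem_iInter, Set.mem_inter_iff, Set.mem_setOf_eq, Uset, Near]
    constructor
    · rintro ⟨-, h⟩ i
      exact ⟨(h i).1, (h i).2.1, (h i).2.2⟩
    · intro h
      exact ⟨b.2, fun i => ⟨(h i).1, (h i).2.1, (h i).2.2⟩⟩
  rw [this]
  refine isOpen_iInter_of_finite fun i => ?_
  have hval : Continuous fun b : ↥(fDo n) => (b : Amb n) := continuous_subtype_val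
  have h1 : Continuous fun b : ↥(fDo n) => ‖(b : Amb n).1 i - a.1 i‖ :=
    continuous_norm.comp
      (((continuous_apply i).comp (continuous_fst.comp hval)).sub continuous_const)
  have h2 : Continuous fun b : ↥(fDo n) => |(b : Amb n).2.1 i - a.2.1 i| :=
    continuous_abs.comp
      (((continuous_apply i).comp ((continuous_fst.comp continuous_snd).comp hval)).sub
        continuous_const)
  have h3 : Continuous fun b : ↥(fDo n) => ‖(b : Amb n).2.2 i - a.2.2 i‖ :=
    continuous_norm.comp
      (((continuous_apply i).comp ((continuous_snd.comp continuous_snd).comp hval)).sub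
        continuous_const)
  exact (isOpen_lt h1 continuous_const).inter
    ((isOpen_lt h2 continuous_const).inter (isOpen_lt h3 continuous_const))

lemma mem_Uset_near {a : Amb n} {u : ↥(fDo n)} (hu : u ∈ Uset n a) :
    Near n a (u : Amb n) := hu

lemma Fm_cont {a : Amb n} (ha : a ∈ fDo n) :
    Continuous fun q : ↥(Uset n a) × ℂ =>
      Fm n a (((q.1 : ↥(fDo n)) : Amb n)) q.2 := by
  have hval : Continuous fun q : ↥(Uset n a) × ℂ => ((q.1 : ↥(fDo n)) : Amb n) :=
    continuous_subtype_val.comp (continuous_subtype_val.comp continuous_fst)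
  have hz : ∀ i : Fin n, Continuous fun q : ↥(Uset n a) × ℂ =>
      ((q.1 : ↥(fDo n)) : Amb n).1 i :=
    fun i => (continuous_apply i).comp (continuous_fst.comp hval)
  have hr : ∀ i : Fin n, Continuous fun q : ↥(Uset n a) × ℂ =>
      ((q.1 : ↥(fDo n)) : Amb n).2.1 i :=
    fun i => (continuous_apply i).comp ((continuous_fst.comp continuous_snd).comp hval)
  have hα : ∀ i : Fin n, Continuous fun q : ↥(Uset n a) × ℂ =>
      ((q.1 : ↥(fDo n)) : Amb n).2.2 i :=
    fun i => (continuous_apply i).comp ((continuous_snd.comp continuous_snd).comp hval)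
  have hw : Continuous fun q : ↥(Uset n a) × ℂ => q.2 := continuous_snd
  have hphi : ∀ i : Fin n, Continuous fun q : ↥(Uset n a) × ℂ =>
      phi n a (((q.1 : ↥(fDo n)) : Amb n)) i q.2 := by
    intro i
    unfold phi
    refine continuous_const.max (continuous_const.min (Continuous.div ?_ ?_ ?_))
    · exact continuous_const.sub (continuous_norm.comp (hw.sub (hz i)))
    · exact continuous_const.sub (hr i)
    · exact fun q => (denom_pos ha (mem_Uset_near q.1.2) i).ne'
  have hsig : ∀ i : Fin n, Continuous fun q : ↥(Uset n a) × ℂ =>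
      sig a (((q.1 : ↥(fDo n)) : Amb n)) i := by
    intro i
    unfold sig
    refine Continuous.div continuous_const
      ((Complex.continuous_ofReal.comp (hr i)).mul (hα i)) ?_
    exact fun q => rbab_ne (mem_Uset_near q.1.2) i
  have hDel : ∀ i : Fin n, Continuous fun q : ↥(Uset n a) × ℂ =>
      Del a (((q.1 : ↥(fDo n)) : Amb n)) i q.2 := by
    intro i
    unfold Del
    exact (((hsig i).sub continuous_const).mul (hw.sub (hz i))).add
      (continuous_const.sub (hz i))
  unfold Fm
  refine hw.add (continuous_finset_sum _ fun i _ => ?_)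
  exact (Complex.continuous_ofReal.comp (hphi i)).mul (hDel i)

lemma Gm_cont {a : Amb n} (ha : a ∈ fDo n) :
    Continuous fun q : ↥(Uset n a) × ℂ =>
      Gm n a (((q.1 : ↥(fDo n)) : Amb n)) q.2 := by
  rw [continuous_iff_continuousAt]
  intro q₀
  set b₀ : Amb n := ((q₀.1 : ↥(fDo n)) : Amb n) with hb₀
  have hnear₀ : Near n a b₀ := mem_Uset_near q₀.1.2
  set v₀ : ℂ := q₀.2 with hv₀
  set w₀ : ℂ := Gm n a b₀ v₀ with hw₀
  have hFw₀ : Fm n a b₀ w₀ = v₀ := Fm_Gm ha hnear₀ v₀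
  rw [ContinuousAt, tendsto_iff_dist_tendsto_zero]
  have hbound : ∀ q : ↥(Uset n a) × ℂ,
      dist (Gm n a (((q.1 : ↥(fDo n)) : Amb n)) q.2) w₀ ≤
        2 * dist q.2 v₀ +
          2 * dist (Fm n a (((q.1 : ↥(fDo n)) : Amb n)) w₀) (Fm n a b₀ w₀) := by
    intro q
    set b : Amb n := ((q.1 : ↥(fDo n)) : Amb n) with hbq
    have hnear : Near n a b := mem_Uset_near q.1.2
    set v : ℂ := q.2 with hv
    have h1 := Fm_expand ha hnear (Gm n a b v) w₀
    rw [Fm_Gm ha hnear v] at h1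
    have h2 : ‖v - Fm n a b w₀‖ ≤
        ‖v - v₀‖ + ‖v₀ - Fm n a b w₀‖ := by
      have h := norm_add_le (v - v₀) (v₀ - Fm n a b w₀)
      have heq : (v - v₀) + (v₀ - Fm n a b w₀) = v - Fm n a b w₀ := by ring
      rw [heq] at h
      exact h
    rw [Complex.dist_eq, Complex.dist_eq, Complex.dist_eq]
    rw [hFw₀]
    have h3 : ‖v₀ - Fm n a b w₀‖ = ‖Fm n a b w₀ - v₀‖ := by
      rw [← norm_neg]; ring_nf
    linarith [h1, h2, h3.le, h3.ge]
  refine squeeze_zero (fun q => dist_nonneg) hbound ?_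
  have hcont : Continuous fun q : ↥(Uset n a) × ℂ =>
      2 * dist q.2 v₀ +
        2 * dist (Fm n a (((q.1 : ↥(fDo n)) : Amb n)) w₀) (Fm n a b₀ w₀) := by
    refine (continuous_const.mul (continuous_snd.dist continuous_const)).add
      (continuous_const.mul (Continuous.dist ?_ continuous_const))
    exact (Fm_cont ha).comp (continuous_fst.prodMk continuous_const)
  have h0 : (2 * dist v₀ v₀ + 2 * dist (Fm n a b₀ w₀) (Fm n a b₀ w₀)) = 0 := by
    simp
  have := hcont.tendsto q₀
  rw [show (2 * dist q₀.2 v₀ + 2 * dist (Fm n a ((q₀.1 : ↥(fDo n)) : Amb n) w₀)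
      (Fm n a b₀ w₀)) = 0 by rw [← hb₀, ← hv₀]; simp] at this
  exact this

end USet
end FDAux2


namespace FDAux2
open FDAux

section Main

variable {n : ℕ}

/-- source of the trivialization -/
def PSrc (n : ℕ) (a : ↥(fDo n)) : Type :=
  {p : ↥(RfDo n) // (p : ↥(fDo n) × ℂ).1 ∈ Uset n (a : Amb n)}

noncomputable instance (a : ↥(fDo n)) : TopologicalSpace (PSrc n a) := by
  unfold PSrc; infer_instance

noncomputable def PhiFwd (a : ↥(fDo n)) (p : PSrc n a) :
    ↥(Uset n (a : Amb n)) × ↥(realiz (a : Amb n)) :=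
  (⟨p.1.1.1, p.2⟩,
    ⟨Fm n (a : Amb n) ((p.1.1.1 : ↥(fDo n)) : Amb n) p.1.1.2, Fm_mem a.2 p.2 p.1.2⟩)

noncomputable def PhiBwd (a : ↥(fDo n)) (q : ↥(Uset n (a : Amb n)) × ↥(realiz (a : Amb n))) :
    PSrc n a :=
  ⟨⟨(q.1.1, Gm n (a : Amb n) ((q.1.1 : ↥(fDo n)) : Amb n) q.2.1),
    Gm_mem a.2 (mem_Uset_near q.1.2) q.2.2⟩, q.1.2⟩

lemma PhiFwd_Bwd (a : ↥(fDo n)) (p : PSrc n a) : PhiBwd a (PhiFwd a p) = p := by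
  apply Subtype.ext
  apply Subtype.ext
  exact Prod.ext rfl (Gm_Fm a.2 p.2 p.1.1.2)

lemma PhiBwd_Fwd (a : ↥(fDo n)) (q : ↥(Uset n (a : Amb n)) × ↥(realiz (a : Amb n))) :
    PhiFwd a (PhiBwd a q) = q := by
  exact Prod.ext (Subtype.ext rfl)
    (Subtype.ext (Fm_Gm a.2 (mem_Uset_near q.1.2) q.2.1))

lemma PhiFwd_cont (a : ↥(fDo n)) : Continuous (PhiFwd a) := by
  have hbase : Continuous fun p : PSrc n a => ((p.1 : ↥(fDo n) × ℂ)) :=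
    continuous_subtype_val.comp continuous_subtype_val
  have h1 : Continuous fun p : PSrc n a => (⟨p.1.1.1, p.2⟩ : ↥(Uset n (a : Amb n))) :=
    Continuous.subtype_mk (continuous_fst.comp hbase) _
  have h2 : Continuous fun p : PSrc n a => p.1.1.2 := continuous_snd.comp hbase
  refine Continuous.prodMk h1 (Continuous.subtype_mk ?_ _)
  exact (Fm_cont a.2).comp (h1.prodMk h2)

attribute [local irreducible] FDAux.Gm in
lemma PhiBwd_cont (a : ↥(fDo n)) : Continuous (PhiBwd a) := by
  have h3 : Continuous fun q : ↥(Uset n (a : Amb n)) × ↥(realiz (a : Amb n)) =>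
      (q.1.1 : ↥(fDo n)) := continuous_subtype_val.comp continuous_fst
  have h4 : Continuous fun q : ↥(Uset n (a : Amb n)) × ↥(realiz (a : Amb n)) =>
      Gm n (a : Amb n) ((q.1.1 : ↥(fDo n)) : Amb n) q.2.1 :=
    (Gm_cont a.2).comp (continuous_fst.prodMk (continuous_subtype_val.comp continuous_snd))
  exact Continuous.subtype_mk (Continuous.subtype_mk (h3.prodMk h4) _) _

/-- The local trivialization as a homeomorphism. -/
noncomputable def PhiHomeo (a : ↥(fDo n)) : PSrc n a ≃ₜ ↥(Uset n (a : Amb n)) × ↥(realiz (a : Amb n)) :=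
  ⟨⟨PhiFwd a, PhiBwd a, PhiFwd_Bwd a, PhiBwd_Fwd a⟩, PhiFwd_cont a, PhiBwd_cont a⟩

end Main
end FDAux2


open FDAux FDAux2 in
/-- `ℝfD°(n) → fD°(n)` is a fibre bundle, with local trivializations compatible with the
boundary maps: every `a` has an open neighbourhood `U` and a homeomorphism
`ρ⁻¹(U) ≅ U × |a|` over `U` sending each boundary point `∂ᵢᵇ(θ)` to `(b, ∂ᵢᵃ(θ))`. -/
theorem RfDo_isFibreBundle_boundary_compatible (n : ℕ) (a : ↥(fDo n)) :
    ∃ U : Set ↥(fDo n), IsOpen U ∧ a ∈ U ∧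
      ∃ Φ : {p : ↥(RfDo n) // (p : ↥(fDo n) × ℂ).1 ∈ U} ≃ₜ ↥U × ↥(realiz (a : Amb n)),
        (∀ p, ((Φ p).1 : ↥(fDo n)) = (p.1 : ↥(fDo n) × ℂ).1) ∧
        ∀ (p : {p : ↥(RfDo n) // (p : ↥(fDo n) × ℂ).1 ∈ U}) (i : Fin (n + 1)) (θ : ℂ),
          ‖θ‖ = 1 →
          (p.1 : ↥(fDo n) × ℂ).2 = bdry ((p.1 : ↥(fDo n) × ℂ).1 : Amb n) i θ →
          ((Φ p).2 : ℂ) = bdry (a : Amb n) i θ := by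
  refine ⟨Uset n (a : Amb n), Uset_open _, mem_Uset_self a, PhiHomeo a, fun p => rfl, ?_⟩
  intro p i θ hθ hbd
  show Fm n (a : Amb n) ((p.1.1.1 : ↥(fDo n)) : Amb n) p.1.1.2 = bdry (a : Amb n) i θ
  rw [hbd]
  exact Fm_bdry a.2 (mem_Uset_near p.2) i hθ
end

section
/- (i) The operation ⋄ on (F_n)ⁿ defined by (v ⋄ w)_i = α(v)(w_i)·v_i is associative, and α(v ⋄ w) = α(v)∘α(w) for all v, w ∈ (F_n)ⁿ. (ii) The set W_n is a group under ⋄: the constant tuple (1,…,1) lies in W_n and is a two-sided identity, W_n is closed under ⋄, and every element of W_n has a two-sided ⋄-inverse lying in W_n. -/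
/-- For a tuple `w ∈ (F_n)ⁿ`, the endomorphism `α(w)` of the free group `F_n` determined
by `α(w)(xᵢ) = wᵢ xᵢ wᵢ⁻¹`. -/
def alphaHom (n : ℕ) (w : Fin n → FreeGroup (Fin n)) :
    FreeGroup (Fin n) →* FreeGroup (Fin n) :=
  FreeGroup.lift fun i => w i * FreeGroup.of i * (w i)⁻¹

/-- The operation `⋄` on `(F_n)ⁿ`: `(v ⋄ w)ᵢ = α(v)(wᵢ)·vᵢ`. -/
def diamond {n : ℕ} (v w : Fin n → FreeGroup (Fin n)) : Fin n → FreeGroup (Fin n) :=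
  fun i => alphaHom n v (w i) * v i

/-- The word `x₁ x₂ ⋯ xₙ` in `F_n`. -/
def fullWord (n : ℕ) : FreeGroup (Fin n) :=
  (List.ofFn (FreeGroup.of : Fin n → FreeGroup (Fin n))).prod

/-- `W_n`: tuples `w` with `α(w)` bijective and fixing `x₁ x₂ ⋯ xₙ`. -/
def Wset (n : ℕ) : Set (Fin n → FreeGroup (Fin n)) :=
  {w | Function.Bijective (alphaHom n w) ∧ alphaHom n w (fullWord n) = fullWord n}

lemma alphaHom_of (n : ℕ) (w : Fin n → FreeGroup (Fin n)) (i : Fin n) :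
    alphaHom n w (FreeGroup.of i) = w i * FreeGroup.of i * (w i)⁻¹ :=
  FreeGroup.lift_apply_of

lemma alphaHom_one (n : ℕ) : alphaHom n (fun _ => 1) = MonoidHom.id _ := by
  ext i
  simp [alphaHom]

lemma alphaHom_diamond (n : ℕ) (v w : Fin n → FreeGroup (Fin n)) :
    alphaHom n (diamond v w) = (alphaHom n v).comp (alphaHom n w) := by
  ext i
  simp only [MonoidHom.comp_apply, alphaHom_of, diamond, map_mul, map_inv, mul_inv_rev]
  group

lemma diamond_assoc (n : ℕ) (u v w : Fin n → FreeGroup (Fin n)) :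
    diamond (diamond u v) w = diamond u (diamond v w) := by
  funext i
  simp only [diamond, alphaHom_diamond, MonoidHom.comp_apply, map_mul, mul_assoc]

/-- (i) `⋄` is associative and `α(v ⋄ w) = α(v) ∘ α(w)`; (ii) `W_n` is a group under `⋄`:
the constant tuple `1` lies in `W_n` and is a two-sided identity, `W_n` is closed under
`⋄`, and every element of `W_n` has a two-sided `⋄`-inverse in `W_n`. -/
theorem Wset_group (n : ℕ) :
    (∀ u v w : Fin n → FreeGroup (Fin n),
      diamond (diamond u v) w = diamond u (diamond v w)) ∧
    (∀ v w : Fin n → FreeGroup (Fin n),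
      ∀ g : FreeGroup (Fin n), alphaHom n (diamond v w) g = alphaHom n v (alphaHom n w g)) ∧
    ((fun _ => (1 : FreeGroup (Fin n))) ∈ Wset n) ∧
    (∀ w ∈ Wset n, diamond (fun _ => 1) w = w ∧ diamond w (fun _ => 1) = w) ∧
    (∀ v ∈ Wset n, ∀ w ∈ Wset n, diamond v w ∈ Wset n) ∧
    (∀ w ∈ Wset n, ∃ v ∈ Wset n,
      diamond v w = (fun _ => 1) ∧ diamond w v = (fun _ => 1)) := by
  refine ⟨diamond_assoc n, ?_, ?_, ?_, ?_, ?_⟩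
  · intro v w g
    rw [alphaHom_diamond]; rfl
  · constructor
    · rw [alphaHom_one]; exact Function.bijective_id
    · rw [alphaHom_one]; rfl
  · intro w hw
    constructor
    · funext i
      simp [diamond, alphaHom_one]
    · funext i
      simp [diamond, alphaHom_of]
  · intro v hv w hw
    refine ⟨?_, ?_⟩
    · rw [alphaHom_diamond]
      exact hv.1.comp hw.1
    · rw [alphaHom_diamond, MonoidHom.comp_apply, hw.2, hv.2]
  · intro w hw
    -- β : inverse automorphism of α(w)
    let e : FreeGroup (Fin n) ≃* FreeGroup (Fin n) := MulEquiv.ofBijective _ hw.1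
    set v : Fin n → FreeGroup (Fin n) := fun i => (e.symm (w i))⁻¹ with hv
    have hβ : ∀ g, e g = alphaHom n w g := fun g => rfl
    have hav : alphaHom n v = e.symm.toMonoidHom := by
      ext i
      have h1 : e (e.symm (FreeGroup.of i)) = FreeGroup.of i := e.apply_symm_apply _
      have h2 : e ((e.symm (w i))⁻¹ * FreeGroup.of i * (e.symm (w i))) = FreeGroup.of i := by
        rw [hβ, map_mul, map_mul, map_inv]
        have : e (e.symm (w i)) = w i := e.apply_symm_apply _
        rw [hβ] at this
        rw [this, alphaHom_of]
        group
      have := e.injective (h1.trans h2.symm)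
      rw [alphaHom_of, MulEquiv.coe_toMonoidHom, this, hv]
      group
    have hvw : diamond v w = fun _ => 1 := by
      funext i
      simp only [diamond, hav, MulEquiv.coe_toMonoidHom]
      simp only [hv]
      group
    have hwv : diamond w v = fun _ => 1 := by
      funext i
      simp only [diamond, hv, map_inv]
      have : alphaHom n w (e.symm (w i)) = w i := e.apply_symm_apply (w i)
      rw [this]
      group
    refine ⟨v, ⟨?_, ?_⟩, hvw, hwv⟩
    · rw [hav]; exact e.symm.bijective
    · rw [hav]
      have he : e (fullWord n) = fullWord n := hw.2
      exact (MulEquiv.symm_apply_eq e).mpr he.symm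
end
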